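/- arXiv:math/0611416 — 8 statements merged into one kernel-verified Lean document; each statement's English description precedes it below -/
import Mathlib

section
/- Let (G_n) be a sequence of finite connected graphs with |G_n| → ∞, and for each n let v_n be a vertex of G_n such that Hom_{v_n}(G_n, ℤ) is nonempty. Let r = r(n) ∈ ℕ and let V_n(r) denote the maximal number of vertices in a ball of radius r in G_n. Suppose there exists a constant c < 1 such that for all sufficiently large n, V_n(r(n)) ≤ c·log₂|G_n|. Then, for f_n chosen uniformly at random from Hom_{v_n}(G_n, ℤ), the probability Pr[R(f_n) ≤ r(n)] tends to 0 as n → ∞. -/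
set_option linter.unusedSectionVars false
set_option linter.unusedTactic false
set_option linter.unreachableTactic false
set_option maxHeartbeats 1000000


open Filter

/-- The set of graph homomorphisms from `G` to `ℤ` sending `v0` to `0`:
maps changing by exactly `1` along every edge. -/
def ZHomSet {V : Type} (G : SimpleGraph V) (v0 : V) : Set (V → ℤ) :=
  {f | (∀ a b, G.Adj a b → |f a - f b| = 1) ∧ f v0 = 0}

/-- The maximal number of vertices in a ball of radius `r` in `G`. -/
noncomputable def maxBall {V : Type} [Fintype V] (G : SimpleGraph V) (r : ℕ) : ℕ :=
  Finset.univ.sup fun x : V => {u | G.dist x u ≤ r}.ncard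

namespace RangeProof

variable {V : Type} [Fintype V] [DecidableEq V] {G : SimpleGraph V}

/-- parity along a walk -/
lemma walk_even {f : V → ℤ} (Hf : ∀ a b, G.Adj a b → |f a - f b| = 1)
    {a b : V} (p : G.Walk a b) : Even (f a - f b + p.length) := by
  induction p with
  | nil => simp
  | @cons a c b h q ih =>
    have h1 : f a - f c = 1 ∨ f a - f c = -1 := by
      have := Hf a c h
      rwa [abs_eq (by norm_num : (0:ℤ) ≤ 1)] at this
    rw [Int.even_iff] at ih ⊢
    simp only [SimpleGraph.Walk.length_cons]
    push_cast
    push_cast at ih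
    omega

lemma walk_abs {f : V → ℤ} (Hf : ∀ a b, G.Adj a b → |f a - f b| = 1)
    {a b : V} (p : G.Walk a b) : |f a - f b| ≤ p.length := by
  induction p with
  | nil => simp
  | @cons a c b h q ih =>
    have h1 : |f a - f c| = 1 := Hf a c h
    simp only [SimpleGraph.Walk.length_cons]
    calc |f a - f b| = |(f a - f c) + (f c - f b)| := by ring_nf
    _ ≤ |f a - f c| + |f c - f b| := abs_add_le _ _
    _ ≤ 1 + q.length := by rw [h1]; exact add_le_add le_rfl ih
    _ = ((q.length + 1 : ℕ) : ℤ) := by push_cast; ring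

lemma dist_even (hc : G.Connected) {f : V → ℤ} (Hf : ∀ a b, G.Adj a b → |f a - f b| = 1)
    (a b : V) : Even (f a - f b + G.dist a b) := by
  obtain ⟨p, hp⟩ := hc.exists_walk_length_eq_dist a b
  simpa [hp] using walk_even Hf p

lemma dist_abs (hc : G.Connected) {f : V → ℤ} (Hf : ∀ a b, G.Adj a b → |f a - f b| = 1)
    (a b : V) : |f a - f b| ≤ G.dist a b := by
  obtain ⟨p, hp⟩ := hc.exists_walk_length_eq_dist a b
  simpa [hp] using walk_abs Hf p

lemma walk_ivt {f : V → ℤ} (Hf : ∀ a b, G.Adj a b → |f a - f b| = 1)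
    {a b : V} (p : G.Walk a b) (t : ℤ) (h1 : f a ≤ t) (h2 : t ≤ f b) :
    ∃ u, f u = t := by
  induction p with
  | nil => exact ⟨_, le_antisymm h1 h2⟩
  | @cons a c b h q ih =>
    by_cases hat : f a = t
    · exact ⟨a, hat⟩
    · have h1' : f a + 1 ≤ t := by omega
      have : f a - f c = 1 ∨ f a - f c = -1 := by
        have := Hf a c h
        rwa [abs_eq (by norm_num : (0:ℤ) ≤ 1)] at this
      exact ih (by omega) h2

/-- two values of a homomorphism with small range are close -/
lemma pair_bound (hc : G.Connected) {f : V → ℤ} (Hf : ∀ a b, G.Adj a b → |f a - f b| = 1)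
    {r : ℕ} (hran : (Set.range f).ncard ≤ r) (a b : V) : |f a - f b| + 1 ≤ (r : ℤ) := by
  have main : ∀ x y : V, f x ≤ f y → f y - f x + 1 ≤ (r : ℤ) := by
    intro x y hxy
    have hsub : Set.Icc (f x) (f y) ⊆ Set.range f := by
      intro t ht
      obtain ⟨p, -⟩ := hc.exists_walk_length_eq_dist x y
      exact walk_ivt Hf p t ht.1 ht.2
    have hcard : (Set.Icc (f x) (f y)).ncard ≤ (Set.range f).ncard :=
      Set.ncard_le_ncard hsub (Set.finite_range f)
    rw [← Finset.coe_Icc, Set.ncard_coe_finset, Int.card_Icc] at hcard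
    have := hcard.trans hran
    omega
  rcases le_total (f a) (f b) with h | h
  · have := main a b h
    rw [abs_sub_comm, abs_of_nonneg (by omega)]
    omega
  · have := main b a h
    rw [abs_of_nonneg (by omega)]
    omega

/-- connected closure principle -/
lemma closure_all (hc : G.Connected) {S : Set V} {x : V} (hx : x ∈ S)
    (hcl : ∀ u ∈ S, ∀ w, G.Adj u w → w ∈ S) (u : V) : u ∈ S := by
  have : ∀ {a b : V} (_ : G.Walk a b), a ∈ S → b ∈ S := by
    intro a b p
    induction p with
    | nil => exact id
    | @cons a c b h q ih => exact fun ha => ih (hcl a ha c h)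
  exact this ((hc x u).some) hx

lemma exists_sphere (hc : G.Connected) {r : ℕ} (hr : 1 ≤ r) {x y : V}
    (hxy : r ≤ G.dist x y) : ∃ b, G.dist x b = r := by
  by_contra hno
  push_neg at hno
  have : y ∈ {u : V | G.dist x u < r} := by
    refine closure_all hc (x := x) ?_ ?_ y
    · simp [SimpleGraph.dist_self]; omega
    · intro u hu w hw
      have h1 : G.dist x w ≤ G.dist x u + G.dist u w := hc.dist_triangle
      have h2 : G.dist u w = 1 := SimpleGraph.dist_eq_one_iff_adj.mpr hw
      have := hno w
      simp only [Set.mem_setOf_eq] at hu ⊢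
      omega
  simp only [Set.mem_setOf_eq] at this
  omega

lemma exists_parent (hc : G.Connected) {x u : V} (h : G.dist x u ≠ 0) :
    ∃ w, G.Adj w u ∧ G.dist x w + 1 = G.dist x u := by
  have h' : G.dist u x ≠ 0 := by rwa [SimpleGraph.dist_comm]
  obtain ⟨p, hp⟩ := SimpleGraph.exists_walk_of_dist_ne_zero h'
  cases p with
  | nil => exact absurd SimpleGraph.dist_self h'
  | @cons u w x hadj q =>
    refine ⟨w, hadj.symm, ?_⟩
    have h1 : G.dist w x ≤ q.length := SimpleGraph.dist_le q
    have h2 : G.dist x w = G.dist w x := SimpleGraph.dist_comm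
    have h3 : G.dist x u ≤ G.dist x w + G.dist w u := hc.dist_triangle
    have h4 : G.dist w u = 1 := SimpleGraph.dist_eq_one_iff_adj.mpr hadj.symm
    have h5 : G.dist u x = G.dist x u := SimpleGraph.dist_comm
    simp only [SimpleGraph.Walk.length_cons] at hp
    omega



open scoped Classical in
/-- sphere of radius r around x -/
noncomputable def sph (G : SimpleGraph V) (r : ℕ) (x : V) : Finset V :=
  Finset.univ.filter (fun b => G.dist x b = r)

lemma mem_sph {G : SimpleGraph V} {r : ℕ} {x b : V} : b ∈ sph G r x ↔ G.dist x b = r := by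
  simp [sph]

/-- the maximal rewriting of f inside the ball of radius r-1 around x -/
noncomputable def theta (G : SimpleGraph V) (r : ℕ) (f : V → ℤ) (x : V) : V → ℤ :=
  fun u =>
    if hS : (sph G r x).Nonempty then
      if G.dist x u < r then (sph G r x).inf' hS (fun b => f b + (G.dist u b : ℤ))
      else f u
    else f u

lemma theta_out {G : SimpleGraph V} {r : ℕ} {f : V → ℤ} {x u : V}
    (h : r ≤ G.dist x u) : theta G r f x u = f u := by
  unfold theta
  split_ifs with h1 h2
  · exact absurd h2 (by omega)
  · rfl
  · rfl

lemma theta_in {G : SimpleGraph V} {r : ℕ} {f : V → ℤ} {x u : V}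
    (hS : (sph G r x).Nonempty) (h : G.dist x u < r) :
    theta G r f x u = (sph G r x).inf' hS (fun b => f b + (G.dist u b : ℤ)) := by
  rw [theta, dif_pos hS, if_pos h]

lemma abs_one_of (t : ℤ) (h1 : t = 1 ∨ t = -1) : |t| = 1 := by
  rcases h1 with h | h <;> simp [h]

section Theta

variable (hc : G.Connected) {r : ℕ} (hr : 1 ≤ r) {f : V → ℤ} {v0 x : V}
  (hf : f ∈ ZHomSet G v0) (hx : r ≤ G.dist x v0)

include hc hr hx hf

lemma sph_nonempty : (sph G r x).Nonempty := by
  obtain ⟨b, hb⟩ := exists_sphere hc hr hx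
  exact ⟨b, mem_sph.mpr hb⟩

/-- the edge case where a is inside the ball and b is not -/
lemma theta_edge_out {a b : V} (hab : G.Adj a b) (ha : G.dist x a < r)
    (hb : ¬ G.dist x b < r) : |theta G r f x a - theta G r f x b| = 1 := by
  have Hf := hf.1
  have hS : (sph G r x).Nonempty := sph_nonempty hc hr hf hx
  have hdab : G.dist a b = 1 := SimpleGraph.dist_eq_one_iff_adj.mpr hab
  have hdb : G.dist x b = r := by
    have h1 : G.dist x b ≤ G.dist x a + G.dist a b := hc.dist_triangle
    omega
  have hbmem : b ∈ sph G r x := mem_sph.mpr hdb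
  rw [theta_in hS ha, theta_out (le_of_eq hdb.symm)]
  obtain ⟨b1, hb1m, e1⟩ := Finset.exists_mem_eq_inf' hS (fun b' => f b' + (G.dist a b' : ℤ))
  have u1 : (sph G r x).inf' hS (fun b' => f b' + (G.dist a b' : ℤ)) ≤ f b + G.dist a b :=
    Finset.inf'_le _ hbmem
  have tri : (G.dist b b1 : ℤ) ≤ (G.dist b a : ℤ) + (G.dist a b1 : ℤ) := by
    exact_mod_cast hc.dist_triangle
  have hdba : G.dist b a = 1 := SimpleGraph.dist_eq_one_iff_adj.mpr hab.symm
  have labs : |f b - f b1| ≤ (G.dist b b1 : ℤ) := dist_abs hc Hf b b1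
  have E1 := dist_even hc Hf b1 a
  have hcomm : (G.dist b1 a : ℤ) = (G.dist a b1 : ℤ) := by
    exact_mod_cast congrArg Nat.cast (SimpleGraph.dist_comm (u := b1) (v := a))
  have hadj : f a - f b = 1 ∨ f a - f b = -1 := by
    have := Hf a b hab
    rwa [abs_eq (by norm_num : (0:ℤ) ≤ 1)] at this
  apply abs_one_of
  rw [e1]
  rw [e1] at u1
  rcases E1 with ⟨k, hk⟩
  rw [abs_le] at labs
  have hdab' : (G.dist a b : ℤ) = 1 := by exact_mod_cast hdab
  have hdba' : (G.dist b a : ℤ) = 1 := by exact_mod_cast hdba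
  omega

/-- theta is a homomorphism fixing v0 -/
lemma theta_mem : theta G r f x ∈ ZHomSet G v0 := by
  have Hf := hf.1
  have hv0 := hf.2
  have hS : (sph G r x).Nonempty := sph_nonempty hc hr hf hx
  constructor
  · intro a b hab
    by_cases ha : G.dist x a < r <;> by_cases hb : G.dist x b < r
    · -- both inside
      rw [theta_in hS ha, theta_in hS hb]
      obtain ⟨b1, hb1m, e1⟩ := Finset.exists_mem_eq_inf' hS (fun b' => f b' + (G.dist a b' : ℤ))
      obtain ⟨b2, hb2m, e2⟩ := Finset.exists_mem_eq_inf' hS (fun b' => f b' + (G.dist b b' : ℤ))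
      have u1 : (sph G r x).inf' hS (fun b' => f b' + (G.dist a b' : ℤ)) ≤ f b2 + G.dist a b2 :=
        Finset.inf'_le _ hb2m
      have u2 : (sph G r x).inf' hS (fun b' => f b' + (G.dist b b' : ℤ)) ≤ f b1 + G.dist b b1 :=
        Finset.inf'_le _ hb1m
      have hdab : G.dist a b = 1 := SimpleGraph.dist_eq_one_iff_adj.mpr hab
      have hdba : G.dist b a = 1 := SimpleGraph.dist_eq_one_iff_adj.mpr hab.symm
      have tri1 : (G.dist a b2 : ℤ) ≤ (G.dist a b : ℤ) + (G.dist b b2 : ℤ) := by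
        exact_mod_cast hc.dist_triangle
      have tri2 : (G.dist b b1 : ℤ) ≤ (G.dist b a : ℤ) + (G.dist a b1 : ℤ) := by
        exact_mod_cast hc.dist_triangle
      have E1 := dist_even hc Hf b1 a
      have E2 := dist_even hc Hf b2 b
      have hc1 : (G.dist b1 a : ℤ) = (G.dist a b1 : ℤ) := by
        exact_mod_cast congrArg Nat.cast (SimpleGraph.dist_comm (u := b1) (v := a))
      have hc2 : (G.dist b2 b : ℤ) = (G.dist b b2 : ℤ) := by
        exact_mod_cast congrArg Nat.cast (SimpleGraph.dist_comm (u := b2) (v := b))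
      have hadj : f a - f b = 1 ∨ f a - f b = -1 := by
        have := Hf a b hab
        rwa [abs_eq (by norm_num : (0:ℤ) ≤ 1)] at this
      apply abs_one_of
      rw [e1, e2]
      rw [e1] at u1
      rw [e2] at u2
      rcases E1 with ⟨k1, hk1⟩
      rcases E2 with ⟨k2, hk2⟩
      have hdab' : (G.dist a b : ℤ) = 1 := by exact_mod_cast hdab
      have hdba' : (G.dist b a : ℤ) = 1 := by exact_mod_cast hdba
      omega
    · exact theta_edge_out hc hr hf hx hab ha hb
    · rw [abs_sub_comm]
      exact theta_edge_out hc hr hf hx hab.symm hb ha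
    · rw [theta_out (by omega), theta_out (by omega)]
      exact Hf a b hab
  · rw [theta_out hx, hv0]

lemma theta_at_center :
    ∃ b, G.dist x b = r ∧ theta G r f x x = f b + r := by
  have hS : (sph G r x).Nonempty := sph_nonempty hc hr hf hx
  have h0 : G.dist x x < r := by
    rw [SimpleGraph.dist_self]; omega
  rw [theta_in hS h0]
  obtain ⟨b1, hb1m, e1⟩ := Finset.exists_mem_eq_inf' hS (fun b' => f b' + (G.dist x b' : ℤ))
  refine ⟨b1, mem_sph.mp hb1m, ?_⟩
  rw [e1, mem_sph.mp hb1m]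

end Theta

open scoped Classical in
noncomputable def ballF (G : SimpleGraph V) (x : V) (r : ℕ) : Finset V :=
  Finset.univ.filter (fun u => G.dist x u ≤ r)

lemma mem_ballF {x u : V} {r : ℕ} : u ∈ ballF G x r ↔ G.dist x u ≤ r := by simp [ballF]

lemma card_ballF (x : V) (r : ℕ) : (ballF G x r).card = {u | G.dist x u ≤ r}.ncard := by
  rw [← Set.ncard_coe_finset]
  congr 1
  ext u
  simp [ballF]

lemma ballF_card_le (x : V) (r : ℕ) : (ballF G x r).card ≤ maxBall G r := by
  rw [card_ballF]
  unfold maxBall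
  exact Finset.le_sup (f := fun x : V => {u | G.dist x u ≤ r}.ncard) (Finset.mem_univ x)

lemma maxBall_pos [Nonempty V] (r : ℕ) : 1 ≤ maxBall G r := by
  have x : V := Classical.arbitrary V
  have h1 : 1 ≤ (ballF G x r).card := by
    rw [Finset.one_le_card]
    exact ⟨x, mem_ballF.mpr (by simp [SimpleGraph.dist_self])⟩
  exact h1.trans (ballF_card_le x r)

lemma ball_lb (hc : G.Connected) [Nonempty V] {r : ℕ}
    (hlt : maxBall G r < Fintype.card V) : r + 1 ≤ maxBall G r := by
  have x0 : V := Classical.arbitrary V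
  have hball : (ballF G x0 r).card < Fintype.card V :=
    lt_of_le_of_lt (ballF_card_le x0 r) hlt
  have : ∃ y : V, y ∉ ballF G x0 r := by
    by_contra hcon
    push_neg at hcon
    have : (Finset.univ : Finset V) ⊆ ballF G x0 r := fun y _ => hcon y
    have := Finset.card_le_card this
    simp only [Finset.card_univ] at this
    omega
  obtain ⟨y, hy⟩ := this
  have hdy : r + 1 ≤ G.dist x0 y := by
    have := mem_ballF.not.mp hy
    omega
  have hbk : ∀ k : ℕ, k ≤ r → ∃ b, G.dist x0 b = k := by
    intro k hk
    rcases Nat.eq_zero_or_pos k with h0 | h0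
    · exact ⟨x0, by simp [h0, SimpleGraph.dist_self]⟩
    · exact exists_sphere hc h0 (le_trans (by omega) hdy)
  choose bk hbkspec using hbk
  have hinj : r + 1 ≤ (ballF G x0 r).card := by
    have := Finset.card_le_card_of_injOn
      (f := fun k => bk (min k r) (min_le_right k r))
      (s := Finset.range (r+1)) (t := ballF G x0 r) ?_ ?_
    · simpa using this
    · intro k hk
      beta_reduce
      have := hbkspec (min k r) (min_le_right k r)
      exact mem_ballF.mpr (by omega)
    · intro k hk l hl he
      beta_reduce at he
      simp only [Finset.coe_range, Set.mem_Iio] at hk hl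
      have h1 := hbkspec (min k r) (min_le_right k r)
      have h2 := hbkspec (min l r) (min_le_right l r)
      rw [he] at h1
      omega
  exact hinj.trans (ballF_card_le x0 r)

lemma zhs_finite (hc : G.Connected) (v0 : V) : (ZHomSet G v0).Finite := by
  apply Set.Finite.subset
    (Set.Finite.pi' (fun _ : V => Set.finite_Icc (-(Fintype.card V : ℤ)) (Fintype.card V)))
  intro f hf
  simp only [Set.mem_setOf_eq]
  intro u
  obtain ⟨p, hp, hl⟩ := hc.exists_path_of_dist v0 u
  have hd : G.dist v0 u < Fintype.card V := by
    rw [← hl]; exact hp.length_lt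
  have habs : |f v0 - f u| ≤ (G.dist v0 u : ℤ) := dist_abs hc hf.1 v0 u
  rw [hf.2, zero_sub, abs_neg] at habs
  rw [Set.mem_Icc, ← abs_le]
  have : (G.dist v0 u : ℤ) ≤ (Fintype.card V : ℤ) := by exact_mod_cast hd.le
  omega

/-- The key counting estimate. -/
lemma key (hc : G.Connected) (v0 : V) (r : ℕ) :
    (({f ∈ ZHomSet G v0 | (Set.range f).ncard ≤ r}).ncard : ℝ) *
      ((Fintype.card V : ℝ) - (maxBall G r : ℝ)) ≤
    ((ZHomSet G v0).ncard : ℝ) *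
      ((((2*r+1) * 2^(maxBall G r)) * (maxBall G r) : ℕ) : ℝ) := by
  classical
  have hNE : Nonempty V := ⟨v0⟩
  set U := maxBall G r with hU
  set H := ZHomSet G v0 with hH
  set A := {f ∈ H | (Set.range f).ncard ≤ r} with hA
  have hHfin : H.Finite := zhs_finite hc v0
  have hAfin : A.Finite := hHfin.subset (Set.sep_subset _ _)
  rcases Set.eq_empty_or_nonempty A with hAe | hAne
  · rw [hAe]
    simp only [Set.ncard_empty, Nat.cast_zero, zero_mul]
    positivity
  by_cases hUN : Fintype.card V ≤ U
  · apply le_trans (mul_nonpos_of_nonneg_of_nonpos (by positivity) ?_) (by positivity)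
    have : (Fintype.card V : ℝ) ≤ (U : ℝ) := by exact_mod_cast hUN
    linarith
  push_neg at hUN
  -- r ≥ 1
  have hcard2 : 2 ≤ Fintype.card V := by
    have := maxBall_pos (G := G) r
    omega
  obtain ⟨f0, hf0⟩ := hAne
  have hf0H : f0 ∈ ZHomSet G v0 := hf0.1
  have hr : 1 ≤ r := by
    obtain ⟨u, hu⟩ := Fintype.exists_ne_of_one_lt_card (by omega) v0
    have hd0 : G.dist v0 u ≠ 0 := fun h => hu (hc.dist_eq_zero_iff.mp h).symm
    obtain ⟨w, hw, -⟩ := exists_parent hc hd0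
    have h1 : |f0 w - f0 u| = 1 := hf0H.1 w u hw
    have hne : f0 w ≠ f0 u := by
      intro h
      rw [h] at h1
      simp at h1
    have hsub : {f0 w, f0 u} ⊆ Set.range f0 :=
      Set.insert_subset ⟨w, rfl⟩ (Set.singleton_subset_iff.mpr ⟨u, rfl⟩)
    have h2 : ({f0 w, f0 u} : Set ℤ).ncard = 2 := Set.ncard_pair hne
    have h3 := Set.ncard_le_ncard hsub (Set.finite_range f0)
    have h4 := hf0.2
    omega
  -- Finsets
  set HF := hHfin.toFinset with hHF
  set AF := hAfin.toFinset with hAF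
  set XF := Finset.univ.filter (fun x : V => r ≤ G.dist v0 x) with hXF
  set P := AF ×ˢ XF with hP
  set π : (V → ℤ) × V → (V → ℤ) := fun p => theta G r p.1 p.2 with hπ
  have hmemP : ∀ p ∈ P, p.1 ∈ A ∧ r ≤ G.dist p.2 v0 := by
    intro p hp
    rw [hP, Finset.mem_product] at hp
    refine ⟨hAfin.mem_toFinset.mp hp.1, ?_⟩
    have := (Finset.mem_filter.mp hp.2).2
    rwa [SimpleGraph.dist_comm] at this
  have hmapsto : ∀ p ∈ P, π p ∈ HF := by
    intro p hp
    obtain ⟨hpA, hpx⟩ := hmemP p hp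
    exact hHfin.mem_toFinset.mpr (theta_mem hc hr hpA.1 hpx)
  have hfiber : ∀ g ∈ HF, (P.filter (fun p => π p = g)).card ≤ ((2*r+1) * 2^U) * U := by
    intro g hg
    obtain ⟨xm, -, hxm⟩ := Finset.exists_max_image (Finset.univ : Finset V) g
      ⟨v0, Finset.mem_univ v0⟩
    have inner : ∀ x ∈ Finset.univ.filter (fun u => G.dist xm u < r),
        ((P.filter (fun p => π p = g)).filter (fun p => p.2 = x)).card ≤ (2*r+1) * 2^U := by
      intro x hxBm
      set F2 := (P.filter (fun p => π p = g)).filter (fun p => p.2 = x) with hF2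
      have hF2mem : ∀ p ∈ F2, p.1 ∈ A ∧ p.2 = x ∧ theta G r p.1 x = g ∧ r ≤ G.dist x v0 := by
        intro p hp
        rw [hF2, Finset.mem_filter, Finset.mem_filter] at hp
        obtain ⟨⟨hpP, hpg⟩, hpx⟩ := hp
        obtain ⟨h1, h2⟩ := hmemP p hpP
        subst hpx
        exact ⟨h1, rfl, hpg, h2⟩
      have hpar : ∀ u, G.dist x u ≠ 0 → ∃ w, G.Adj w u ∧ G.dist x w + 1 = G.dist x u :=
        fun u h => exists_parent hc h
      set px : V → V := fun u => if h : G.dist x u ≠ 0 then (hpar u h).choose else x with hpx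
      have pxspec : ∀ u (h : G.dist x u ≠ 0),
          G.Adj (px u) u ∧ G.dist x (px u) + 1 = G.dist x u := by
        intro u h
        simp only [hpx, dif_pos h]
        exact (hpar u h).choose_spec
      set B' := Finset.univ.filter (fun u => G.dist x u < r ∧ u ≠ x) with hB'
      set κ : (V → ℤ) × V → ℤ × Finset V :=
        fun p => (p.1 x, B'.filter (fun u => p.1 u = p.1 (px u) + 1)) with hκ
      have hcardt : (Finset.Icc (-(r:ℤ)) (r:ℤ) ×ˢ B'.powerset).card ≤ (2*r+1) * 2^U := by
        rw [Finset.card_product, Int.card_Icc, Finset.card_powerset]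
        have h1 : ((r:ℤ) + 1 - -(r:ℤ)).toNat = 2*r+1 := by omega
        rw [h1]
        have h2 : B'.card ≤ U := by
          refine le_trans (Finset.card_le_card ?_) (ballF_card_le x r)
          intro u hu
          rw [hB', Finset.mem_filter] at hu
          exact mem_ballF.mpr (by omega)
        exact Nat.mul_le_mul_left _ (Nat.pow_le_pow_right (by omega) h2)
      refine le_trans (Finset.card_le_card_of_injOn κ ?_ ?_) hcardt
      · -- maps to
        intro p hp
        obtain ⟨hpA, hpx2, hptheta, hpxv0⟩ := hF2mem p hp
        rw [Finset.mem_coe, Finset.mem_product]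
        constructor
        · have hpb := pair_bound hc hpA.1.1 hpA.2 x v0
          rw [hpA.1.2, sub_zero] at hpb
          simp only [hκ]
          rw [Finset.mem_Icc, ← abs_le]
          omega
        · exact Finset.mem_powerset.mpr (Finset.filter_subset _ _)
      · -- injective
        intro p hp q hq hpq
        simp only [Finset.mem_coe] at hp hq
        obtain ⟨hpA, hpx2, hptheta, -⟩ := hF2mem p hp
        obtain ⟨hqA, hqx2, hqtheta, -⟩ := hF2mem q hq
        rw [hκ] at hpq
        have hfst : p.1 x = q.1 x := congrArg Prod.fst hpq
        have hsnd : B'.filter (fun u => p.1 u = p.1 (px u) + 1) =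
            B'.filter (fun u => q.1 u = q.1 (px u) + 1) := congrArg Prod.snd hpq
        have hrec : ∀ k u, G.dist x u = k → p.1 u = q.1 u := by
          intro k
          induction k using Nat.strong_induction_on with
          | _ k ih =>
            intro u hu
            by_cases hk : r ≤ k
            · have e1 : theta G r p.1 x u = p.1 u := theta_out (hu ▸ hk)
              have e2 : theta G r q.1 x u = q.1 u := theta_out (hu ▸ hk)
              rw [← e1, ← e2, hptheta, hqtheta]
            by_cases hk0 : k = 0
            · have : x = u := hc.dist_eq_zero_iff.mp (by omega)
              rw [← this]
              exact hfst
            · have hd0 : G.dist x u ≠ 0 := by omega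
              obtain ⟨hadjw, hdw⟩ := pxspec u hd0
              have hihw : p.1 (px u) = q.1 (px u) := by
                apply ih (k-1) (by omega)
                omega
              have habsp : |p.1 (px u) - p.1 u| = 1 := hpA.1.1 (px u) u hadjw
              have habsq : |q.1 (px u) - q.1 u| = 1 := hqA.1.1 (px u) u hadjw
              have hup : p.1 (px u) - p.1 u = 1 ∨ p.1 (px u) - p.1 u = -1 := by
                rwa [abs_eq (by norm_num : (0:ℤ) ≤ 1)] at habsp
              have huq : q.1 (px u) - q.1 u = 1 ∨ q.1 (px u) - q.1 u = -1 := by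
                rwa [abs_eq (by norm_num : (0:ℤ) ≤ 1)] at habsq
              have huB' : u ∈ B' := by
                rw [hB', Finset.mem_filter]
                refine ⟨Finset.mem_univ u, by omega, ?_⟩
                intro h
                rw [← h] at hu
                rw [SimpleGraph.dist_self] at hu
                omega
              have hiff : (p.1 u = p.1 (px u) + 1) ↔ (q.1 u = q.1 (px u) + 1) := by
                constructor
                · intro h
                  have h1 : u ∈ B'.filter (fun u => p.1 u = p.1 (px u) + 1) :=
                    Finset.mem_filter.mpr ⟨huB', h⟩
                  rw [hsnd] at h1
                  exact (Finset.mem_filter.mp h1).2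
                · intro h
                  have h1 : u ∈ B'.filter (fun u => q.1 u = q.1 (px u) + 1) :=
                    Finset.mem_filter.mpr ⟨huB', h⟩
                  rw [← hsnd] at h1
                  exact (Finset.mem_filter.mp h1).2
              rcases hup with h | h <;> rcases huq with h' | h' <;> omega
        have : p.1 = q.1 := funext (fun u => hrec (G.dist x u) u rfl)
        exact Prod.ext this (hpx2.trans hqx2.symm)
    have houter := Finset.card_le_mul_card_image_of_maps_to
      (f := Prod.snd) (s := P.filter (fun p => π p = g))
      (t := Finset.univ.filter (fun u => G.dist xm u < r)) ?_ _ inner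
    · refine le_trans houter ?_
      have hBm : (Finset.univ.filter (fun u => G.dist xm u < r)).card ≤ U := by
        refine le_trans (Finset.card_le_card ?_) (ballF_card_le xm r)
        intro u hu
        rw [Finset.mem_filter] at hu
        exact mem_ballF.mpr (by omega)
      exact Nat.mul_le_mul_left _ hBm
    · -- maps to: x-coordinate close to the maximizer
      intro p hp
      rw [Finset.mem_filter] at hp
      obtain ⟨hpP, hpg⟩ := hp
      obtain ⟨hpA, hpxv0⟩ := hmemP p hpP
      rw [Finset.mem_filter]
      refine ⟨Finset.mem_univ _, ?_⟩
      by_contra hfar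
      push_neg at hfar
      have hfar' : r ≤ G.dist p.2 xm := by
        rw [SimpleGraph.dist_comm]; omega
      have e1 : theta G r p.1 p.2 xm = p.1 xm := theta_out hfar'
      obtain ⟨b, hbd, hbe⟩ := theta_at_center hc hr hpA.1 hpxv0
      have hgx : g p.2 = p.1 b + r := by rw [← hpg]; exact hbe
      have hgxm : g xm = p.1 xm := by rw [← hpg]; exact e1
      have hle := hxm p.2 (Finset.mem_univ _)
      have hpair := pair_bound hc hpA.1.1 hpA.2 xm b
      have := le_abs_self (p.1 xm - p.1 b)
      omega
  have htotal := Finset.card_le_mul_card_image_of_maps_to hmapsto _ hfiber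
  have hPcard : P.card = AF.card * XF.card := Finset.card_product _ _
  have hcardX : Fintype.card V ≤ XF.card + U := by
    have hsplit : XF.card +
        (Finset.univ.filter (fun x : V => ¬ r ≤ G.dist v0 x)).card = Fintype.card V := by
      rw [hXF, ← Finset.card_univ]
      exact Finset.card_filter_add_card_filter_not (p := fun x : V => r ≤ G.dist v0 x)
    have hcompl : (Finset.univ.filter (fun x : V => ¬ r ≤ G.dist v0 x)).card ≤ U := by
      refine le_trans (Finset.card_le_card ?_) (ballF_card_le v0 r)
      intro u hu
      rw [Finset.mem_filter] at hu
      exact mem_ballF.mpr (by omega)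
    omega
  -- put it together over ℝ
  have hAcard : (A.ncard : ℝ) = (AF.card : ℝ) := by
    rw [Set.ncard_eq_toFinset_card A hAfin]
  have hHcard : (H.ncard : ℝ) = (HF.card : ℝ) := by
    rw [Set.ncard_eq_toFinset_card H hHfin]
  rw [hAcard, hHcard]
  have step1 : (AF.card : ℝ) * ((Fintype.card V : ℝ) - (U : ℝ)) ≤
      (AF.card : ℝ) * (XF.card : ℝ) := by
    apply mul_le_mul_of_nonneg_left _ (by positivity)
    have : (Fintype.card V : ℝ) ≤ (XF.card : ℝ) + (U : ℝ) := by exact_mod_cast hcardX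
    linarith
  refine le_trans step1 ?_
  have hnat : AF.card * XF.card ≤ (((2*r+1) * 2^U) * U) * HF.card := by
    rw [← hPcard]; exact htotal
  have step2 : (AF.card : ℝ) * (XF.card : ℝ) ≤
      ((((2*r+1) * 2^U) * U : ℕ) : ℝ) * (HF.card : ℝ) := by
    exact_mod_cast hnat
  refine le_trans step2 (le_of_eq ?_)
  push_cast
  ring

end RangeProof

open RangeProof

theorem stmt0 (N : ℕ → ℕ) (hN : Tendsto N atTop atTop)
    (G : ∀ n, SimpleGraph (Fin (N n))) (hconn : ∀ n, (G n).Connected)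
    (v : ∀ n, Fin (N n))
    (hne : ∀ n, (ZHomSet (G n) (v n)).Nonempty)
    (r : ℕ → ℕ) (c : ℝ) (hc : c < 1)
    (hV : ∀ᶠ n in atTop, (maxBall (G n) (r n) : ℝ) ≤ c * Real.logb 2 (N n)) :
    Tendsto (fun n =>
      (({f ∈ ZHomSet (G n) (v n) | (Set.range f).ncard ≤ r n}).ncard : ℝ)
        / ((ZHomSet (G n) (v n)).ncard : ℝ))
      atTop (nhds 0) := by
  classical
  have hNc : Tendsto (fun n => (N n : ℝ)) atTop atTop :=
    tendsto_natCast_atTop_atTop.comp hN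
  have hl2 : Real.log 2 ≠ 0 := ne_of_gt (Real.log_pos (by norm_num))
  -- the explicit bound tends to zero
  have h1 : Tendsto (fun y : ℝ => Real.log y / y ^ ((1-c)/2)) atTop (nhds 0) :=
    (isLittleO_log_rpow_atTop (by linarith)).tendsto_div_nhds_zero
  have h2 : Tendsto (fun y : ℝ => (Real.log y / y ^ ((1-c)/2))^2) atTop (nhds 0) := by
    have := h1.pow 2
    simpa using this
  have h3 : Tendsto (fun y : ℝ => (Real.log y)^2 * y ^ (c-1)) atTop (nhds 0) := by
    apply h2.congr'
    filter_upwards [eventually_gt_atTop (0:ℝ)] with y hy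
    have e1 : (y ^ ((1-c)/2))^(2:ℕ) = y ^ (1-c) := by
      rw [← Real.rpow_natCast (y ^ ((1-c)/2)) 2, ← Real.rpow_mul hy.le]
      norm_num
    calc (Real.log y / y ^ ((1-c)/2))^2
        = (Real.log y)^2 / y^(1-c) := by rw [div_pow, e1]
      _ = (Real.log y)^2 * y^(c-1) := by
          rw [div_eq_mul_inv, ← Real.rpow_neg hy.le, (by ring : -(1-c) = c-1)]
  have hT : Tendsto (fun n => (6*c^2/(Real.log 2)^2) *
      ((Real.log (N n))^2 * (N n:ℝ)^(c-1))) atTop (nhds 0) := by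
    have := (h3.comp hNc).const_mul (6*c^2/(Real.log 2)^2)
    simpa using this
  -- eventual smallness of log
  have hE3 : ∀ᶠ y : ℝ in atTop, (c/Real.log 2) * (Real.log y / y) < 1/2 := by
    have h4 : Tendsto (fun y : ℝ => Real.log y / y) atTop (nhds 0) := by
      have := (isLittleO_log_rpow_atTop (by norm_num : (0:ℝ) < 1)).tendsto_div_nhds_zero
      apply this.congr'
      filter_upwards [eventually_gt_atTop (0:ℝ)] with y hy
      rw [Real.rpow_one]
    have h5 := h4.const_mul (c/Real.log 2)
    rw [mul_zero] at h5
    exact h5.eventually (gt_mem_nhds (by norm_num : (0:ℝ) < 1/2))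
  have hEmain := hNc.eventually hE3
  have hN2 : ∀ᶠ n in atTop, 2 ≤ N n := hN.eventually_ge_atTop 2
  refine squeeze_zero' (Filter.Eventually.of_forall (fun n => by positivity)) ?_ hT
  filter_upwards [hV, hN2, hEmain] with n hV1 h2N hhalfpre
  have hNE : Nonempty (Fin (N n)) := ⟨v n⟩
  set U := maxBall (G n) (r n) with hUdef
  set L := Real.logb 2 (N n) with hLdef
  have hHfin : (ZHomSet (G n) (v n)).Finite := zhs_finite (hconn n) (v n)
  have hxR : (2:ℝ) ≤ (N n : ℝ) := by exact_mod_cast h2N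
  have hx0 : (0:ℝ) < (N n : ℝ) := by linarith
  have hL1 : 1 ≤ L := by
    rw [hLdef, Real.le_logb_iff_rpow_le (by norm_num) hx0]
    simpa using hxR
  have hU1 : (1:ℕ) ≤ U := maxBall_pos _
  have hU1R : (1:ℝ) ≤ (U:ℝ) := by exact_mod_cast hU1
  have hcL1 : (1:ℝ) ≤ c * L := le_trans hU1R hV1
  have hhalf : c * L ≤ (N n : ℝ)/2 := by
    have hlogb : c * L = ((c/Real.log 2) * (Real.log (N n) / (N n))) * (N n : ℝ) := by
      rw [hLdef, Real.logb]
      field_simp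
    rw [hlogb]
    calc ((c/Real.log 2) * (Real.log (N n)/(N n))) * (N n:ℝ)
        ≤ (1/2) * (N n:ℝ) := mul_le_mul_of_nonneg_right (le_of_lt hhalfpre) (le_of_lt hx0)
      _ = (N n:ℝ)/2 := by ring
  have hUhalf : (U:ℝ) ≤ (N n:ℝ)/2 := hV1.trans hhalf
  have hUlt : U < N n := by
    have h : (U:ℝ) < (N n:ℝ) := lt_of_le_of_lt hUhalf (by linarith)
    exact_mod_cast h
  have hkey := key (hconn n) (v n) (r n)
  rw [Fintype.card_fin] at hkey
  have hrU : r n + 1 ≤ U := by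
    have := ball_lb (G := G n) (hconn n) (r := r n) (by rwa [Fintype.card_fin])
    exact this
  have hH0 : (0:ℝ) < ((ZHomSet (G n) (v n)).ncard : ℝ) := by
    have := (Set.ncard_pos hHfin).mpr (hne n)
    exact_mod_cast this
  have hden : (0:ℝ) < (N n:ℝ) - (U:ℝ) := by linarith
  have hstep : (({f ∈ ZHomSet (G n) (v n) | (Set.range f).ncard ≤ r n}).ncard : ℝ)
      / ((ZHomSet (G n) (v n)).ncard : ℝ) ≤
      (((2*(r n)+1) * 2^U * U : ℕ) : ℝ) / ((N n:ℝ) - (U:ℝ)) := by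
    rw [div_le_div_iff₀ hH0 hden]
    exact hkey.trans_eq (mul_comm _ _)
  refine le_trans hstep ?_
  have h2pow : (2:ℝ)^(U:ℕ) ≤ (N n:ℝ)^c := by
    rw [← Real.rpow_natCast 2 U]
    have e2 : (2:ℝ) ^ ((U:ℕ):ℝ) ≤ (2:ℝ) ^ (c*L) :=
      Real.rpow_le_rpow_of_exponent_le (by norm_num) hV1
    refine e2.trans (le_of_eq ?_)
    rw [show c*L = L*c by ring, Real.rpow_mul (by norm_num : (0:ℝ) ≤ 2),
      hLdef, Real.rpow_logb (by norm_num) (by norm_num) hx0]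
  have hra : ((r n):ℝ) + 1 ≤ (U:ℝ) := by exact_mod_cast hrU
  have f1 : (2*((r n):ℝ)+1) ≤ 3*(c*L) := by linarith
  have nn1 : (0:ℝ) ≤ 3*(c*L) := by linarith
  have nn2 : (0:ℝ) ≤ (N n:ℝ)^c := by positivity
  have hnum : (((2*(r n)+1) * 2^U * U : ℕ) : ℝ) ≤ (3*(c*L)) * ((N n:ℝ)^c) * (c*L) := by
    push_cast
    apply mul_le_mul (mul_le_mul f1 h2pow (by positivity) nn1) hV1 (by positivity)
      (mul_nonneg nn1 nn2)
  have hfrac : (((2*(r n)+1) * 2^U * U : ℕ) : ℝ) / ((N n:ℝ) - (U:ℝ)) ≤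
      ((3*(c*L)) * ((N n:ℝ)^c) * (c*L)) / ((N n:ℝ)/2) := by
    apply div_le_div₀ (mul_nonneg (mul_nonneg nn1 nn2) (by linarith)) hnum (by linarith)
      (by linarith)
  refine le_trans hfrac (le_of_eq ?_)
  have hxc1 : (N n:ℝ)^(c-1) = (N n:ℝ)^c / (N n:ℝ) := by
    rw [Real.rpow_sub hx0, Real.rpow_one]
  have hLlog : L = Real.log (N n) / Real.log 2 := by rw [hLdef, Real.logb]
  rw [hLlog, hxc1]
  field_simp
  ring
end

section
/- Let G be a connected graph, let v be a vertex of G, and let r ∈ ℕ. For s ∈ [0,r] let B_s = B_s(v) be the ball of radius s centered at v, set B = B_r(v), and let Γ = {u ∈ B : u ∉ B_{r−1}} be the boundary of B. Assume B is of exact radius r, i.e. there exists u ∈ B whose distance from v in G is at least r. Then for every homomorphism f from B to ℤ there exists a homomorphism g from B to ℤ such that g agrees with f on Γ and R(g) ≥ r + 1. -/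
open SimpleGraph

namespace Stmt3Aux

variable {V : Type} {G : SimpleGraph V} {v : V} {r : ℕ}

/-- The set of lengths of walks between `a` and `b` staying in the ball `B_r(v)`. -/
def ballSet (G : SimpleGraph V) (v : V) (r : ℕ) (a b : V) : Set ℕ :=
  {n | ∃ p : G.Walk a b, p.length = n ∧ ∀ x ∈ p.support, G.dist v x ≤ r}

/-- Distance within the ball `B_r(v)`. -/
noncomputable def ballDist (G : SimpleGraph V) (v : V) (r : ℕ) (a b : V) : ℕ :=
  sInf (ballSet G v r a b)

lemma exists_geodesic (hG : G.Connected) (a : V) :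
    ∃ p : G.Walk v a, p.length = G.dist v a ∧ ∀ x ∈ p.support, G.dist v x ≤ G.dist v a := by
  classical
  obtain ⟨p, hp⟩ := (hG v a).exists_walk_length_eq_dist
  refine ⟨p, hp, fun x hx => ?_⟩
  calc G.dist v x ≤ (p.takeUntil x hx).length := dist_le _
    _ ≤ p.length := Walk.length_takeUntil_le p hx
    _ = G.dist v a := hp

lemma ballSet_nonempty (hG : G.Connected) {a b : V}
    (ha : G.dist v a ≤ r) (hb : G.dist v b ≤ r) : (ballSet G v r a b).Nonempty := by
  obtain ⟨p, hp, hps⟩ := exists_geodesic hG a (v := v)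
  obtain ⟨q, hq, hqs⟩ := exists_geodesic hG b (v := v)
  refine ⟨_, p.reverse.append q, rfl, fun x hx => ?_⟩
  rw [Walk.mem_support_append_iff, Walk.support_reverse, List.mem_reverse] at hx
  rcases hx with hx | hx
  · exact (hps x hx).trans ha
  · exact (hqs x hx).trans hb

lemma exists_ballDist_walk (hG : G.Connected) {a b : V}
    (ha : G.dist v a ≤ r) (hb : G.dist v b ≤ r) :
    ∃ p : G.Walk a b, p.length = ballDist G v r a b ∧ ∀ x ∈ p.support, G.dist v x ≤ r :=
  Nat.sInf_mem (ballSet_nonempty hG ha hb)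

lemma ballDist_le {a b : V} (p : G.Walk a b) (hp : ∀ x ∈ p.support, G.dist v x ≤ r) :
    ballDist G v r a b ≤ p.length :=
  Nat.sInf_le ⟨p, rfl, hp⟩

lemma dist_le_ballDist (hG : G.Connected) {a b : V}
    (ha : G.dist v a ≤ r) (hb : G.dist v b ≤ r) :
    G.dist a b ≤ ballDist G v r a b := by
  obtain ⟨p, hp, -⟩ := exists_ballDist_walk hG ha hb
  exact hp ▸ dist_le p

lemma ballDist_self {a : V} (ha : G.dist v a ≤ r) : ballDist G v r a a = 0 :=
  Nat.le_zero.mp (ballDist_le Walk.nil (fun x hx => by rw [Walk.support_nil, List.mem_singleton] at hx; exact hx ▸ ha))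

lemma ballDist_v (hG : G.Connected) {b : V} (hb : G.dist v b ≤ r) :
    ballDist G v r v b = G.dist v b := by
  refine le_antisymm ?_ (dist_le_ballDist hG (by rw [dist_self]; exact Nat.zero_le r) hb)
  obtain ⟨p, hp, hps⟩ := exists_geodesic hG b (v := v)
  exact hp ▸ ballDist_le p (fun x hx => (hps x hx).trans hb)

lemma ballDist_le_cons (hG : G.Connected) {a a' b : V} (ha : G.dist v a ≤ r)
    (ha' : G.dist v a' ≤ r) (hb : G.dist v b ≤ r) (hadj : G.Adj a a') :
    ballDist G v r a b ≤ ballDist G v r a' b + 1 := by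
  obtain ⟨p, hp, hps⟩ := exists_ballDist_walk hG ha' hb
  have := ballDist_le (Walk.cons hadj p) (fun x hx => by
    rcases List.mem_cons.mp (by simpa using hx) with h | h
    · exact h ▸ ha
    · exact hps x h)
  simpa [hp] using this

lemma walk_bound (f : V → ℤ)
    (hf : ∀ u w, G.dist v u ≤ r → G.dist v w ≤ r → G.Adj u w → |f u - f w| = 1)
    {a b : V} (p : G.Walk a b) (hp : ∀ x ∈ p.support, G.dist v x ≤ r) :
    |f a - f b| ≤ (p.length : ℤ) ∧ Even (f a - f b - p.length) := by
  induction p with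
  | nil => simp
  | cons hadj q ih =>
    rename_i x y z
    have hx : G.dist v x ≤ r := hp x (by simp)
    have hy : G.dist v y ≤ r := hp y (by simp)
    have hq : ∀ u ∈ q.support, G.dist v u ≤ r := fun u hu => hp u (by simp [hu])
    obtain ⟨ih1, ih2⟩ := ih hq
    have h1 : |f x - f y| = 1 := hf x y hx hy hadj
    have hxy : f x - f y = 1 ∨ f x - f y = -1 := abs_eq (by norm_num : (0:ℤ) ≤ 1) |>.mp h1
    have habs1 := abs_le.mp ih1
    have hlen : ((Walk.cons hadj q).length : ℤ) = q.length + 1 := by simp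
    constructor
    · rw [abs_le]; omega
    · obtain ⟨k, hk⟩ := ih2
      rcases hxy with h | h
      · exact ⟨k, by omega⟩
      · exact ⟨k - 1, by omega⟩

lemma ivt (g : V → ℤ)
    (hg : ∀ u w, G.dist v u ≤ r → G.dist v w ≤ r → G.Adj u w → |g u - g w| = 1)
    {a b : V} (p : G.Walk a b) (hp : ∀ x ∈ p.support, G.dist v x ≤ r)
    (m : ℤ) (h1 : g a ≤ m) (h2 : m ≤ g b) : ∃ x ∈ p.support, g x = m := by
  induction p with
  | nil => exact ⟨_, by simp, le_antisymm h1 h2⟩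
  | cons hadj q ih =>
    rename_i x y z
    by_cases hm : g x = m
    · exact ⟨x, by simp, hm⟩
    · have hx : G.dist v x ≤ r := hp x (by simp)
      have hy : G.dist v y ≤ r := hp y (by simp)
      have hq : ∀ u ∈ q.support, G.dist v u ≤ r := fun u hu => hp u (by simp [hu])
      have h3 := abs_le.mp (hg x y hx hy hadj).le
      obtain ⟨x', hx', hgx'⟩ := ih hq (by omega) h2
      exact ⟨x', by simp [hx'], hgx'⟩

end Stmt3Aux

open Stmt3Aux

theorem stmt3 {V : Type} [Fintype V] (G : SimpleGraph V) (hG : G.Connected)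
    (v : V) (r : ℕ)
    -- the ball `B = B_r(v)` is of exact radius `r`:
    -- some vertex of the ball is at distance at least `r` from `v`
    (hexact : ∃ u, G.dist v u ≤ r ∧ r ≤ G.dist v u)
    -- `f` is a homomorphism from (the subgraph induced by) `B` to `ℤ`
    (f : V → ℤ)
    (hf : ∀ u w, G.dist v u ≤ r → G.dist v w ≤ r → G.Adj u w → |f u - f w| = 1) :
    -- there is a homomorphism `g` from `B` to `ℤ` agreeing with `f` on the
    -- boundary `Γ = B \ B_{r-1}`, whose range on `B` has size at least `r+1`
    ∃ g : V → ℤ,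
      (∀ u w, G.dist v u ≤ r → G.dist v w ≤ r → G.Adj u w → |g u - g w| = 1) ∧
      (∀ u, G.dist v u ≤ r → ¬ G.dist v u ≤ r - 1 → g u = f u) ∧
      r + 1 ≤ (g '' {u | G.dist v u ≤ r}).ncard := by
  classical
  obtain ⟨u0, hu0le, hu0ge⟩ := hexact
  have hu0 : G.dist v u0 = r := le_antisymm hu0le hu0ge
  set Γ : Finset V := Finset.univ.filter (fun w => G.dist v w = r) with hΓdef
  have hΓne : Γ.Nonempty := ⟨u0, by simp [hΓdef, hu0]⟩
  have hΓmem : ∀ w ∈ Γ, G.dist v w = r := fun w hw => by simpa [hΓdef] using hw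
  set g : V → ℤ := fun u => Γ.sup' hΓne (fun w => f w - (ballDist G v r u w : ℤ)) with hgdef
  -- parity: `g u ≡ f u (mod 2)` on the ball
  have hparity : ∀ u, G.dist v u ≤ r → Even (g u - f u) := by
    intro u hu
    obtain ⟨w, hw, hgw⟩ := Finset.exists_mem_eq_sup' hΓne
      (fun w => f w - (ballDist G v r u w : ℤ))
    obtain ⟨p, hp, hps⟩ := exists_ballDist_walk hG hu ((hΓmem w hw).le)
    obtain ⟨k, hk⟩ := (walk_bound f hf p hps).2
    rw [hp] at hk
    simp only [hgdef]
    rw [hgw]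
    exact ⟨-k - (ballDist G v r u w : ℤ), by omega⟩
  -- `g` is a homomorphism on the ball
  have hghom : ∀ u w, G.dist v u ≤ r → G.dist v w ≤ r → G.Adj u w → |g u - g w| = 1 := by
    intro a b ha hb hadj
    have hle : g a ≤ g b + 1 := by
      simp only [hgdef]
      apply Finset.sup'_le
      intro w hw
      have h1 : ballDist G v r b w ≤ ballDist G v r a w + 1 :=
        ballDist_le_cons hG hb ha ((hΓmem w hw).le) hadj.symm
      have h2 := Finset.le_sup' (fun w => f w - (ballDist G v r b w : ℤ)) hw
      push_cast at h1 ⊢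
      omega
    have hge : g b ≤ g a + 1 := by
      simp only [hgdef]
      apply Finset.sup'_le
      intro w hw
      have h1 : ballDist G v r a w ≤ ballDist G v r b w + 1 :=
        ballDist_le_cons hG ha hb ((hΓmem w hw).le) hadj
      have h2 := Finset.le_sup' (fun w => f w - (ballDist G v r a w : ℤ)) hw
      push_cast at h1 ⊢
      omega
    obtain ⟨k, hk⟩ := hparity a ha
    obtain ⟨l, hl⟩ := hparity b hb
    have hfab : f a - f b = 1 ∨ f a - f b = -1 :=
      abs_eq (by norm_num : (0:ℤ) ≤ 1) |>.mp (hf a b ha hb hadj)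
    rw [abs_eq (by norm_num : (0:ℤ) ≤ 1)]
    omega
  -- `g` agrees with `f` on `Γ`
  have hgΓ : ∀ w ∈ Γ, g w = f w := by
    intro u hu
    have hur : G.dist v u ≤ r := (hΓmem u hu).le
    simp only [hgdef]
    apply le_antisymm
    · apply Finset.sup'_le
      intro w hw
      obtain ⟨p, hp, hps⟩ := exists_ballDist_walk hG hur ((hΓmem w hw).le)
      have := abs_le.mp ((walk_bound f hf p hps).1)
      rw [hp] at this
      omega
    · have h2 := Finset.le_sup' (fun w => f w - (ballDist G v r u w : ℤ)) hu
      simp only [ballDist_self hur] at h2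
      simpa [-Finset.le_sup'_iff] using h2
  refine ⟨g, hghom, ?_, ?_⟩
  · -- boundary agreement
    intro u hu1 hu2
    have : G.dist v u = r := by omega
    exact hgΓ u (by simp [hΓdef, this])
  · -- range bound
    obtain ⟨w0, hw0Γ, hw0max⟩ := Γ.exists_max_image f hΓne
    have hw0r : G.dist v w0 = r := hΓmem w0 hw0Γ
    have hgv : g v = f w0 - r := by
      apply le_antisymm
      · simp only [hgdef]
        apply Finset.sup'_le
        intro w hw
        rw [ballDist_v hG ((hΓmem w hw).le), hΓmem w hw]
        have := hw0max w hw
        omega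
      · have h2 := Finset.le_sup' (fun w => f w - (ballDist G v r v w : ℤ)) hw0Γ
        simp only [ballDist_v hG hw0r.le, hw0r] at h2
        simpa [hgdef, -Finset.le_sup'_iff] using h2
    have hgw0 : g w0 = f w0 := hgΓ w0 hw0Γ
    obtain ⟨p, hp, hps⟩ := exists_geodesic hG w0 (v := v)
    rw [hw0r] at hp hps
    have hsub : (Finset.Icc (f w0 - r) (f w0) : Set ℤ) ⊆ g '' {u | G.dist v u ≤ r} := by
      intro m hm
      simp only [Finset.coe_Icc, Set.mem_Icc] at hm
      obtain ⟨x, hx, hgx⟩ := ivt g hghom p hps m (by omega) (by rw [hgw0]; exact hm.2)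
      exact ⟨x, hps x hx, hgx⟩
    calc (r : ℕ) + 1 = (Finset.Icc (f w0 - r) (f w0)).card := by
          rw [Int.card_Icc]; omega
      _ = ((Finset.Icc (f w0 - r) (f w0) : Set ℤ)).ncard := (Set.ncard_coe_finset _).symm
      _ ≤ (g '' {u | G.dist v u ≤ r}).ncard := Set.ncard_le_ncard hsub (Set.toFinite _)
end

section
/- Let n ≥ 4 be even, k ∈ ℕ, and let f ∈ H_{n,k}. If i ∈ ℤ_n is such that the i-layer is non-constant in f, then there exists z ∈ ℤ such that f({i+1} × [k]) = f({i−1} × [k]) = {z}; in particular, both the (i+1)-layer and the (i−1)-layer are constant in f. -/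
open Filter

/-- The graph `C_{n,k}`: vertex set `ℤ_n × [k]`, with edges
`(i,s) ∼ (i+1,t)` for all `i ∈ ℤ_n` and `s,t ∈ [k]` (addition modulo `n`). -/
def Cnk (n k : ℕ) : SimpleGraph (ZMod n × Fin k) :=
  SimpleGraph.fromRel fun a b => a.1 + 1 = b.1

/-- `f` is a graph homomorphism to `ℤ`: it changes by exactly `1` along edges. -/
def IsHomZ {V : Type} (G : SimpleGraph V) (f : V → ℤ) : Prop :=
  ∀ a b, G.Adj a b → |f a - f b| = 1

/-- `H_{n,k}`: homomorphisms from `C_{n,k}` to `ℤ` with `f(0,1) = 0`. -/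
def Hnk (n k : ℕ) (hk : 0 < k) : Set (ZMod n × Fin k → ℤ) :=
  {f | IsHomZ (Cnk n k) f ∧ f (0, ⟨0, hk⟩) = 0}

/-- The `i`-layer is constant in `f`. -/
def LayerConst {n k : ℕ} (f : ZMod n × Fin k → ℤ) (i : ZMod n) : Prop :=
  ∀ s t, f (i, s) = f (i, t)

/-- `NC(f)`: the set of non-constant layers of `f`. -/
def NCset {n k : ℕ} (f : ZMod n × Fin k → ℤ) : Set (ZMod n) :=
  {i | ¬ LayerConst f i}

/-- `H⁰_{n,k}`: homomorphisms in `H_{n,k}` mapping the whole `0`-layer to `0`. -/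
def H0nk (n k : ℕ) (hk : 0 < k) : Set (ZMod n × Fin k → ℤ) :=
  {f | f ∈ Hnk n k hk ∧ ∀ s, f (0, s) = 0}

/-- The range size `R(f)`: the number of distinct values taken by `f`. -/
noncomputable def rngZ {V : Type} (f : V → ℤ) : ℕ := (Set.range f).ncard

theorem stmt7 (n k : ℕ) (hn : 4 ≤ n) (hne : Even n) (hk : 0 < k)
    (f : ZMod n × Fin k → ℤ) (hf : f ∈ Hnk n k hk)
    (i : ZMod n) (hi : ¬ LayerConst f i) :
    ∃ z : ℤ, (∀ s, f (i + 1, s) = z) ∧ (∀ s, f (i - 1, s) = z) := by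
  obtain ⟨hhom, -⟩ := hf
  haveI : Fact (1 < n) := ⟨by omega⟩
  have hadj : ∀ (j : ZMod n) s t, |f (j, s) - f (j + 1, t)| = 1 := by
    intro j s t
    apply hhom
    simp only [Cnk, SimpleGraph.fromRel_adj]
    refine ⟨?_, Or.inl trivial⟩
    intro h
    have hj : j = j + 1 := congrArg Prod.fst h
    exact one_ne_zero (left_eq_add.mp hj)
  simp only [LayerConst, not_forall] at hi
  obtain ⟨s, t, hab⟩ := hi
  set a := f (i, s) with ha
  set b := f (i, t) with hb
  have key : ∀ v w : ℤ, |a - v| = 1 → |b - v| = 1 → |a - w| = 1 → |b - w| = 1 →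
      v = w := by
    intro v w h1 h2 h3 h4
    rw [abs_eq (by norm_num : (0:ℤ) ≤ 1)] at h1 h2 h3 h4
    omega
  have hsub : i - 1 + 1 = i := by ring
  set z := f (i + 1, ⟨0, hk⟩) with hz
  have hz1 : |a - z| = 1 := hadj i s ⟨0, hk⟩
  have hz2 : |b - z| = 1 := hadj i t ⟨0, hk⟩
  have hprev : ∀ u : Fin k, |a - f (i - 1, u)| = 1 ∧ |b - f (i - 1, u)| = 1 := by
    intro u
    have h1 := hadj (i - 1) u s
    have h2 := hadj (i - 1) u t
    rw [hsub] at h1 h2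
    rw [abs_sub_comm] at h1 h2
    exact ⟨h1, h2⟩
  refine ⟨z, ?_, ?_⟩
  · intro u
    exact (key (f (i + 1, u)) z (hadj i s u) (hadj i t u) hz1 hz2)
  · intro u
    exact (key (f (i - 1, u)) z (hprev u).1 (hprev u).2 hz1 hz2)
end

section
/- Let n ≥ 4 be even, k ∈ ℕ, and let f ∈ H_{n,k} \ H⁰_{n,k} (i.e. the 0-layer is non-constant in f). Define f_↓ by f_↓(i,s) = f(i+1,s) − f(1,1) for all i ∈ ℤ_{n−2} and s ∈ [k]. Then f_↓ ∈ H⁰_{n−2,k}. -/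
open Filter

/-- The map `f ↦ f_↓`, `f_↓(i,s) = f(i+1,s) − f(1,1)`, defined for
`i ∈ ℤ_{n−2}`, `s ∈ [k]` (reading `i+1` in `ℤ_n`). -/
def fdown (n k : ℕ) (hk : 0 < k) (f : ZMod n × Fin k → ℤ) :
    ZMod (n - 2) × Fin k → ℤ :=
  fun p => f (((p.1.val + 1 : ℕ) : ZMod n), p.2) - f ((1 : ZMod n), ⟨0, hk⟩)

theorem stmt8 (n k : ℕ) (hn : 4 ≤ n) (hne : Even n) (hk : 0 < k)
    (f : ZMod n × Fin k → ℤ) (hf : f ∈ Hnk n k hk \ H0nk n k hk) :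
    fdown n k hk f ∈ H0nk (n - 2) k hk := by
  obtain ⟨⟨hhom, h0⟩, hnot⟩ := hf
  have hs0 : ∃ s, f (0, s) ≠ 0 := by
    by_contra h; push_neg at h; exact hnot ⟨⟨hhom, h0⟩, h⟩
  obtain ⟨s0, hs0⟩ := hs0
  haveI : NeZero n := ⟨by omega⟩
  haveI : NeZero (n - 2) := ⟨by omega⟩
  haveI : Fact (1 < n - 2) := ⟨by omega⟩
  have habs : ∀ x y : ℤ, |x - y| = 1 → x - y = 1 ∨ x - y = -1 :=
    fun x y h => (abs_eq (by norm_num)).mp h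
  -- adjacency for consecutive natural indices
  have hadjN : ∀ (a : ℕ), a + 1 < n → ∀ (s t : Fin k),
      (Cnk n k).Adj (((a : ℕ) : ZMod n), s) (((a + 1 : ℕ) : ZMod n), t) := by
    intro a ha s t
    rw [Cnk, SimpleGraph.fromRel_adj]
    constructor
    · intro h
      have h1 : ((a : ℕ) : ZMod n) = ((a + 1 : ℕ) : ZMod n) := congrArg Prod.fst h
      have := congrArg ZMod.val h1
      rw [ZMod.val_cast_of_lt (by omega), ZMod.val_cast_of_lt ha] at this
      omega
    · left; push_cast; ring
  -- adjacency (n-1) ~ 0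
  have hadjW : ∀ (s t : Fin k),
      (Cnk n k).Adj (((n - 1 : ℕ) : ZMod n), s) ((0 : ZMod n), t) := by
    intro s t
    rw [Cnk, SimpleGraph.fromRel_adj]
    constructor
    · intro h
      have h1 : ((n - 1 : ℕ) : ZMod n) = (0 : ZMod n) := congrArg Prod.fst h
      have := congrArg ZMod.val h1
      rw [ZMod.val_cast_of_lt (by omega), ZMod.val_zero] at this
      omega
    · left
      show ((n - 1 : ℕ) : ZMod n) + 1 = 0
      have : (((n - 1) + 1 : ℕ) : ZMod n) = 0 := by
        have : (n - 1) + 1 = n := by omega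
        rw [this, ZMod.natCast_self]
      push_cast at this
      linear_combination this
  -- cast facts
  have hc0 : ((0 : ℕ) : ZMod n) = 0 := by norm_cast
  have hc1 : ((1 : ℕ) : ZMod n) = 1 := by norm_cast
  set m : ℤ := f ((1 : ZMod n), ⟨0, hk⟩) with hm
  -- layer 1 is constant = m, and |m| stuff via omega
  have key1 : ∀ t : Fin k, f (((1 : ℕ) : ZMod n), t) = m := by
    intro t
    have a1 := habs _ _ (hhom _ _ (hadjN 0 (by omega) ⟨0, hk⟩ t))
    have a2 := habs _ _ (hhom _ _ (hadjN 0 (by omega) s0 t))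
    have a3 := habs _ _ (hhom _ _ (hadjN 0 (by omega) ⟨0, hk⟩ ⟨0, hk⟩))
    have a4 := habs _ _ (hhom _ _ (hadjN 0 (by omega) s0 ⟨0, hk⟩))
    rw [hc0] at a1 a2 a3 a4
    rw [hc1] at a1 a2 a3 a4 ⊢
    rw [h0] at a1 a3
    omega
  -- layer n-1 is constant = m
  have keyN : ∀ t : Fin k, f (((n - 1 : ℕ) : ZMod n), t) = m := by
    intro t
    have a1 := habs _ _ (hhom _ _ (hadjW t ⟨0, hk⟩))
    have a2 := habs _ _ (hhom _ _ (hadjW t s0))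
    have a3 := habs _ _ (hhom _ _ (hadjN 0 (by omega) ⟨0, hk⟩ ⟨0, hk⟩))
    have a4 := habs _ _ (hhom _ _ (hadjN 0 (by omega) s0 ⟨0, hk⟩))
    rw [hc0] at a3 a4
    rw [hc1] at a3 a4
    rw [h0] at a1 a3
    rw [hm]
    omega
  -- f(n-2, s) is within 1 of m
  have keyN2 : ∀ s : Fin k, |f (((n - 1 : ℕ) : ZMod n), s) - m| = 1 → True := fun _ _ => trivial
  -- key one-directional homomorphism step
  have key : ∀ (i j : ZMod (n - 2)) (s t : Fin k), i + 1 = j →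
      |fdown n k hk f (i, s) - fdown n k hk f (j, t)| = 1 := by
    intro i j s t hij
    have hjval : j.val = (i.val + 1) % (n - 2) := by
      rw [← hij, ZMod.val_add, ZMod.val_one]
    have hival : i.val < n - 2 := i.val_lt
    simp only [fdown]
    rw [← hm]
    by_cases hcase : i.val + 1 < n - 2
    · -- non-wrap
      have hjv : j.val = i.val + 1 := by rw [hjval, Nat.mod_eq_of_lt hcase]
      rw [hjv]
      have := hhom _ _ (hadjN (i.val + 1) (by omega) s t)
      rw [show i.val + 1 + 1 = i.val + 2 from rfl] at this
      calc |(f (((i.val + 1 : ℕ) : ZMod n), s) - m) - (f (((i.val + 2 : ℕ) : ZMod n), t) - m)|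
          = |f (((i.val + 1 : ℕ) : ZMod n), s) - f (((i.val + 2 : ℕ) : ZMod n), t)| := by ring_nf
        _ = 1 := this
    · -- wrap: i.val = n - 3
      have hiv : i.val = n - 3 := by omega
      have hjv : j.val = 0 := by
        rw [hjval, hiv, show n - 3 + 1 = n - 2 from by omega, Nat.mod_self]
      rw [hiv, hjv]
      have h1 : f (((0 + 1 : ℕ) : ZMod n), t) = m := key1 t
      rw [h1]
      have h2 := habs _ _ (hhom _ _ (hadjN (n - 3 + 1) (by omega) s ⟨0, hk⟩))
      have h3 : f (((n - 3 + 1 + 1 : ℕ) : ZMod n), ⟨0, hk⟩) = m := by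
        have : n - 3 + 1 + 1 = n - 1 := by omega
        rw [this]; exact keyN ⟨0, hk⟩
      rw [h3] at h2
      simp only [sub_self, sub_zero]
      rcases h2 with h | h <;> rw [h] <;> norm_num
  -- fdown 0-layer is 0
  have hzero : ∀ s : Fin k, fdown n k hk f (0, s) = 0 := by
    intro s
    simp only [fdown]
    rw [← hm, ZMod.val_zero]
    rw [key1 s]
    ring
  refine ⟨⟨?_, hzero ⟨0, hk⟩⟩, hzero⟩
  intro a b hab
  rw [Cnk, SimpleGraph.fromRel_adj] at hab
  obtain ⟨hne', h | h⟩ := hab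
  · exact key a.1 b.1 a.2 b.2 h
  · rw [abs_sub_comm]
    exact key b.1 a.1 b.2 a.2 h
end

section
/- Let n ≥ 4 be even, k ∈ ℕ, and let I = {i₁ < i₂ < ⋯ < i_ℓ} ⊆ [n−1] be a set of size ℓ containing no two consecutive integers (for all i ∈ [n−2], either i ∉ I or i+1 ∉ I). Then there exists a bijection φ = (φ¹, φ²) between H(I,n) and P(n−2ℓ) × (V_k)^ℓ such that for every f ∈ H(I,n), RC(f) = Rng(φ¹(f)). -/
open Filter

/-- `P(m)`: paths of length `m` on `ℤ` starting and ending at `0`. -/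
def pathSet (m : ℕ) : Set (Fin (m + 1) → ℤ) :=
  {S | S 0 = 0 ∧ S (Fin.last m) = 0 ∧ ∀ i : Fin m, |S i.succ - S i.castSucc| = 1}

/-- `V_k = {1,-1}^k \ {(1,…,1), (-1,…,-1)}`. -/
def Vset (k : ℕ) : Set (Fin k → ℤ) :=
  {v | (∀ s, v s = 1 ∨ v s = -1) ∧ v ≠ (fun _ => 1) ∧ v ≠ (fun _ => -1)}

/-- `H(I,n)`: the homomorphisms in `H⁰_{n,k}` whose set of non-constant layers
is exactly `I ⊆ [n-1]` (viewed inside `ℤ_n`). -/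
def HIset (n k : ℕ) (hk : 0 < k) (I : Finset ℕ) : Set (ZMod n × Fin k → ℤ) :=
  {f | f ∈ H0nk n k hk ∧ NCset f = (fun j : ℕ => (j : ZMod n)) '' (I : Set ℕ)}

/-- `RC(f)`: the set of values taken by `f` on its constant layers. -/
def RCset {n k : ℕ} (hk : 0 < k) (f : ZMod n × Fin k → ℤ) : Set ℤ :=
  {z | ∃ i : ZMod n, LayerConst f i ∧ f (i, ⟨0, hk⟩) = z}


namespace Stmt10Aux

/-- number of "skipped" positions `≤ i` (each `a ∈ I` skips positions `a` and `a+1`). -/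
def cnt (I : Finset ℕ) (i : ℕ) : ℕ := (I.filter (· ≤ i)).card + (I.filter (· < i)).card

/-- the rank function: position `i` minus the number of skipped positions `≤ i`. -/
def rr (I : Finset ℕ) (i : ℕ) : ℕ := i - cnt I i

/-- the least position of rank `j`. -/
noncomputable def eI (I : Finset ℕ) (j : ℕ) : ℕ := sInf {i | rr I i = j}

variable {I : Finset ℕ}

lemma card_filter_le_eq (i : ℕ) :
    (I.filter (· ≤ i)).card = (I.filter (· < i)).card + (if i ∈ I then 1 else 0) := by
  by_cases h : i ∈ I
  · rw [if_pos h]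
    have : I.filter (· ≤ i) = insert i (I.filter (· < i)) := by
      ext x
      simp only [Finset.mem_filter, Finset.mem_insert]
      constructor
      · rintro ⟨hx, hle⟩
        rcases eq_or_lt_of_le hle with rfl | h'
        · exact Or.inl rfl
        · exact Or.inr ⟨hx, h'⟩
      · rintro (rfl | ⟨hx, hlt⟩)
        · exact ⟨h, le_refl _⟩
        · exact ⟨hx, le_of_lt hlt⟩
    rw [this, Finset.card_insert_of_notMem (by simp)]
  · rw [if_neg h, add_zero]
    congr 1
    ext x
    simp only [Finset.mem_filter, and_congr_right_iff]
    intro hx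
    constructor
    · intro hle
      rcases eq_or_lt_of_le hle with rfl | h'
      · exact absurd hx h
      · exact h'
    · exact le_of_lt

lemma filter_lt_succ (i : ℕ) : I.filter (· < i + 1) = I.filter (· ≤ i) := by
  ext x
  simp only [Finset.mem_filter]
  exact and_congr_right fun _ => by omega

lemma cnt_zero (hpos : ∀ i ∈ I, 1 ≤ i) : cnt I 0 = 0 := by
  unfold cnt
  rw [Finset.filter_eq_empty_iff.2 (fun x hx => by have := hpos x hx; omega),
      Finset.filter_eq_empty_iff.2 (fun x hx => by omega)]
  simp

lemma cnt_succ (i : ℕ) :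
    cnt I (i + 1) = cnt I i + (if i + 1 ∈ I then 1 else 0) + (if i ∈ I then 1 else 0) := by
  unfold cnt
  rw [filter_lt_succ, card_filter_le_eq (i+1), filter_lt_succ, card_filter_le_eq i]
  ring

lemma cnt_le (hpos : ∀ i ∈ I, 1 ≤ i) (hcons : ∀ i ∈ I, i + 1 ∉ I) (i : ℕ) : cnt I i ≤ i := by
  induction i with
  | zero => simp [cnt_zero hpos]
  | succ i ih =>
      rw [cnt_succ]
      by_cases h : i ∈ I
      · have := hcons i h
        simp [h, this]; omega
      · simp [h]; split_ifs <;> omega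

variable (hpos : ∀ i ∈ I, 1 ≤ i) (hcons : ∀ i ∈ I, i + 1 ∉ I)
include hpos hcons

lemma rr_succ (i : ℕ) :
    rr I (i + 1) = rr I i + (if i + 1 ∈ I ∨ i ∈ I then 0 else 1) := by
  have h1 := cnt_le hpos hcons i
  have h2 := cnt_le hpos hcons (i+1)
  have h3 := cnt_succ (I := I) i
  unfold rr
  by_cases ha : i + 1 ∈ I <;> by_cases hb : i ∈ I
  · exact absurd ha (hcons i hb)
  · simp [ha, hb] at h3 ⊢; omega
  · simp [ha, hb] at h3 ⊢; omega
  · simp [ha, hb] at h3 ⊢; omega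

lemma rr_mono : Monotone (rr I) := by
  apply monotone_nat_of_le_succ
  intro i
  rw [rr_succ hpos hcons]
  split_ifs <;> omega

lemma rr_succ_le (i : ℕ) : rr I (i + 1) ≤ rr I i + 1 := by
  rw [rr_succ hpos hcons]; split_ifs <;> omega

lemma rr_surjOn (N j : ℕ) (h : j ≤ rr I N) : ∃ i ≤ N, rr I i = j := by
  induction N with
  | zero =>
      have : rr I 0 = 0 := by simp [rr]
      exact ⟨0, le_refl _, by omega⟩
  | succ N ih =>
      by_cases h' : j ≤ rr I N
      · obtain ⟨i, hi, hri⟩ := ih h'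
        exact ⟨i, by omega, hri⟩
      · have := rr_succ_le hpos hcons N
        exact ⟨N+1, le_refl _, by omega⟩

lemma rr_exists (j : ℕ) : ∃ i, rr I i = j := by
  have hcnt : cnt I (j + 2 * I.card) ≤ 2 * I.card := by
    unfold cnt
    have a1 := Finset.card_filter_le I (· ≤ j + 2 * I.card)
    have a2 := Finset.card_filter_le I (· < j + 2 * I.card)
    omega
  have : j ≤ rr I (j + 2 * I.card) := by unfold rr; omega
  obtain ⟨i, _, hi⟩ := rr_surjOn hpos hcons _ j this
  exact ⟨i, hi⟩

lemma rr_eI (j : ℕ) : rr I (eI I j) = j :=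
  Nat.sInf_mem (rr_exists hpos hcons j)

omit hpos hcons in
lemma eI_le {i j : ℕ} (h : rr I i = j) : eI I j ≤ i := Nat.sInf_le h

omit hpos hcons in
lemma eI_zero : eI I 0 = 0 := by
  have : rr I 0 = 0 := by simp [rr]
  exact Nat.le_zero.1 (Nat.sInf_le this)

lemma eI_not_mem (j : ℕ) : eI I j ∉ I := by
  intro h
  have h1 : 1 ≤ eI I j := hpos _ h
  have h2 : rr I (eI I j - 1 + 1) = rr I (eI I j - 1) := by
    rw [rr_succ hpos hcons]
    have : eI I j - 1 + 1 = eI I j := by omega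
    rw [this]; simp [h]
  rw [show eI I j - 1 + 1 = eI I j by omega] at h2
  have h3 : rr I (eI I j - 1) = j := by rw [← h2]; exact rr_eI hpos hcons j
  have := eI_le (I := I) h3
  omega

lemma eI_pred_not_mem (j : ℕ) (h1 : 1 ≤ eI I j) : eI I j - 1 ∉ I := by
  intro h
  have h2 : rr I (eI I j - 1 + 1) = rr I (eI I j - 1) := by
    rw [rr_succ hpos hcons]; simp [h]
  rw [show eI I j - 1 + 1 = eI I j by omega] at h2
  have h3 : rr I (eI I j - 1) = j := by rw [← h2]; exact rr_eI hpos hcons j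
  have := eI_le (I := I) h3
  omega

/-- kept positions are in the image of `eI`. -/
lemma eI_eq_of_kept {i : ℕ} (hiI : i ∉ I) (hip : i = 0 ∨ i - 1 ∉ I) : eI I (rr I i) = i := by
  have hle : eI I (rr I i) ≤ i := eI_le (I := I) rfl
  rcases Nat.lt_or_ge (eI I (rr I i)) i with hlt | hge
  · exfalso
    have h1 : 1 ≤ i := by omega
    have h2 : rr I (i - 1 + 1) = rr I (i - 1) + 1 := by
      rw [rr_succ hpos hcons]
      rw [show i - 1 + 1 = i by omega]
      rcases hip with rfl | hip
      · omega
      · simp [hiI, hip]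
    rw [show i - 1 + 1 = i by omega] at h2
    have h3 : rr I (eI I (rr I i)) = rr I i := rr_eI hpos hcons _
    have h4 : rr I (eI I (rr I i)) ≤ rr I (i - 1) :=
      rr_mono hpos hcons (by omega)
    omega
  · omega

end Stmt10Aux

open Stmt10Aux

set_option maxHeartbeats 2000000 in
theorem stmt10 (n k : ℕ) (hn : 4 ≤ n) (hne : Even n) (hk : 0 < k)
    (I : Finset ℕ) (ℓ : ℕ) (hℓ : I.card = ℓ)
    (hI : I ⊆ Finset.Icc 1 (n - 1)) (hcons : ∀ i ∈ I, i + 1 ∉ I) :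
    ∃ φ : (ZMod n × Fin k → ℤ) → (Fin (n - 2 * ℓ + 1) → ℤ) × (Fin ℓ → Fin k → ℤ),
      Set.BijOn φ (HIset n k hk I)
        ((pathSet (n - 2 * ℓ)) ×ˢ {w : Fin ℓ → Fin k → ℤ | ∀ j, w j ∈ Vset k}) ∧
      ∀ f ∈ HIset n k hk I, RCset hk f = Set.range (φ f).1 := by
  classical
  haveI : NeZero n := ⟨by omega⟩
  set s0 : Fin k := ⟨0, hk⟩ with hs0def
  have hpos : ∀ i ∈ I, 1 ≤ i := fun i hi => (Finset.mem_Icc.1 (hI hi)).1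
  have hub : ∀ i ∈ I, i ≤ n - 1 := fun i hi => (Finset.mem_Icc.1 (hI hi)).2
  have hnI : ∀ i ∈ I, i < n := fun i hi => by have := hub i hi; omega
  have hnmem : n ∉ I := fun h => by have := hub n h; omega
  have h0mem : (0 : ℕ) ∉ I := fun h => by have := hpos 0 h; omega
  -- rank function facts
  have R0 : rr I 0 = 0 := by simp [rr]
  have Rsucc := rr_succ hpos hcons
  have Rmono := rr_mono hpos hcons
  have REI := rr_eI hpos hcons
  have hcard2 : cnt I n = 2 * ℓ := by
    unfold cnt
    rw [Finset.filter_true_of_mem (fun x hx => le_of_lt (hnI x hx)),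
        Finset.filter_true_of_mem (fun x hx => hnI x hx), hℓ]
    ring
  have h2l : 2 * ℓ ≤ n := by have := cnt_le hpos hcons n; omega
  set m := n - 2 * ℓ with hmdef
  have hRn : rr I n = m := by rw [hmdef]; unfold rr; rw [hcard2]
  have hble : ∀ x, x ≤ n → rr I x < m + 1 := by
    intro x hx
    have := Rmono hx
    omega
  -- cast helpers
  have hvcast : ∀ a : ℕ, a < n → ((a : ZMod n)).val = a := fun a ha => ZMod.val_natCast_of_lt ha
  have hcastv : ∀ i : ZMod n, ((i.val : ℕ) : ZMod n) = i := fun i => ZMod.natCast_rightInverse i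
  have hvlt : ∀ i : ZMod n, i.val < n := fun i => ZMod.val_lt i
  have hcast_pred : ∀ a : ℕ, 1 ≤ a → (((a - 1 : ℕ)) : ZMod n) = (a : ZMod n) - 1 := by
    intro a ha
    rw [Nat.cast_sub ha, Nat.cast_one]
  have hcast_succ : ∀ a : ℕ, (((a + 1 : ℕ)) : ZMod n) = (a : ZMod n) + 1 := by
    intro a; push_cast; ring
  have hone : (1 : ZMod n) ≠ 0 := by
    intro h
    have h1 : ((1 : ℕ) : ZMod n).val = 0 := by rw [Nat.cast_one, h, ZMod.val_zero]
    rw [hvcast 1 (by omega)] at h1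
    omega
  have hadj : ∀ (i : ZMod n) (s t : Fin k), (Cnk n k).Adj (i, s) (i + 1, t) := by
    intro i s t
    rw [Cnk, SimpleGraph.fromRel_adj]
    refine ⟨?_, Or.inl rfl⟩
    intro h
    have h1 : i = i + 1 := congrArg Prod.fst h
    exact hone (left_eq_add.mp h1)
  have hstep : ∀ f : ZMod n × Fin k → ℤ, IsHomZ (Cnk n k) f → ∀ (i : ZMod n) (s t : Fin k),
      |f (i + 1, t) - f (i, s)| = 1 := by
    intro f hf i s t
    have := hf _ _ (hadj i s t)
    rwa [abs_sub_comm] at this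
  have himg : ∀ i : ZMod n, i ∈ ((fun j : ℕ => (j : ZMod n)) '' (I : Set ℕ)) ↔ i.val ∈ I := by
    intro i
    constructor
    · rintro ⟨j, hj, rfl⟩
      rwa [hvcast j (hnI j hj)]
    · intro h
      exact ⟨i.val, h, hcastv i⟩
  have hNC : ∀ f : ZMod n × Fin k → ℤ, NCset f = (fun j : ℕ => (j : ZMod n)) '' (I : Set ℕ) →
      ∀ i : ZMod n, ¬ LayerConst f i ↔ i.val ∈ I := by
    intro f hf i
    rw [show (¬ LayerConst f i) = (i ∈ NCset f) from rfl, hf]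
    exact himg i
  have hCL : ∀ f : ZMod n × Fin k → ℤ, NCset f = (fun j : ℕ => (j : ZMod n)) '' (I : Set ℕ) →
      ∀ i : ZMod n, i.val ∉ I → ∀ s t, f (i, s) = f (i, t) := by
    intro f hf i hi s t
    have hc : LayerConst f i := by
      by_contra h
      exact hi ((hNC f hf i).1 h)
    exact hc s t
  have hvalnotI : ∀ i : ℕ, i ≤ n → i ∉ I → ((i : ZMod n)).val ∉ I := by
    intro i hin hiI
    rcases Nat.lt_or_ge i n with h | h
    · rwa [hvcast i h]
    · have hieq : i = n := by omega
      subst hieq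
      rw [ZMod.natCast_self, ZMod.val_zero]
      exact h0mem
  -- flank equality around a non-constant layer
  have hflank : ∀ f, f ∈ HIset n k hk I → ∀ a : ℕ, a ∈ I → ∀ (s t : Fin k),
      f (((a - 1 : ℕ) : ZMod n), s) = f (((a + 1 : ℕ) : ZMod n), t) := by
    intro f hf a ha s t
    have hhom : IsHomZ (Cnk n k) f := hf.1.1.1
    have hanc : ¬ LayerConst f (a : ZMod n) := by
      rw [hNC f hf.2, hvcast a (hnI a ha)]
      exact ha
    rw [LayerConst] at hanc
    push_neg at hanc
    obtain ⟨s₁, s₂, hne⟩ := hanc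
    have ha1 : ((a : ℕ) : ZMod n) = ((a - 1 : ℕ) : ZMod n) + 1 := by
      rw [hcast_pred a (hpos a ha)]; ring
    have e1 := hstep f hhom ((a - 1 : ℕ) : ZMod n) s s₁
    have e2 := hstep f hhom ((a - 1 : ℕ) : ZMod n) s s₂
    rw [← ha1] at e1 e2
    have e3 := hstep f hhom ((a : ℕ) : ZMod n) s₁ t
    have e4 := hstep f hhom ((a : ℕ) : ZMod n) s₂ t
    rw [← hcast_succ a] at e3 e4
    rw [abs_eq (by norm_num : (0:ℤ) ≤ 1)] at e1 e2 e3 e4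
    omega
  -- the forward normalization lemma
  have FL : ∀ f, f ∈ HIset n k hk I → ∀ i, i ≤ n → i ∉ I → ∀ s : Fin k,
      f ((i : ZMod n), s) = f (((eI I (rr I i) : ℕ) : ZMod n), s0) := by
    intro f hf i
    induction i using Nat.strong_induction_on with
    | _ i IH =>
      intro hin hiI s
      have hvali : ((i : ZMod n)).val ∉ I := hvalnotI i hin hiI
      have hconsti := hCL f hf.2 (i : ZMod n) hvali
      by_cases hkept : i = 0 ∨ (1 ≤ i ∧ i - 1 ∉ I)
      · have hkeq : eI I (rr I i) = i := by
          apply eI_eq_of_kept hpos hcons hiI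
          rcases hkept with h | h
          · exact Or.inl h
          · exact Or.inr h.2
        rw [hkeq]
        exact hconsti s s0
      · push_neg at hkept
        have h1 : 1 ≤ i := by
          rcases Nat.eq_zero_or_pos i with rfl | h
          · exact absurd rfl hkept.1
          · exact h
        have h2 : i - 1 ∈ I := hkept.2 h1
        have h3 : 1 ≤ i - 1 := hpos _ h2
        have hfl := hflank f hf (i-1) h2 s0 s
        rw [show i - 1 - 1 = i - 2 by omega, show i - 1 + 1 = i by omega] at hfl
        have hr1 : rr I i = rr I (i-1) := by
          have := Rsucc (i-1)
          rw [show i - 1 + 1 = i by omega, if_pos (Or.inr h2)] at this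
          omega
        have hr2 : rr I (i-1) = rr I (i-2) := by
          have := Rsucc (i-2)
          rw [show i - 2 + 1 = i - 1 by omega, if_pos (Or.inl h2)] at this
          omega
        have h4 : i - 2 ∉ I := by
          intro hc
          have := hcons _ hc
          rw [show i - 2 + 1 = i - 1 by omega] at this
          exact this h2
        have hIH := IH (i-2) (by omega) (by omega) h4 s0
        rw [hr1, hr2, ← hIH, ← hfl]
  -- index congruence helpers
  have P1c : ∀ (S : Fin (m+1) → ℤ) (x y : ℕ) (hx : x < m+1) (hy : y < m+1), x = y →
      S ⟨x, hx⟩ = S ⟨y, hy⟩ := by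
    intro S x y hx hy h
    subst h
    rfl
  have P2c : ∀ (w : Fin ℓ → Fin k → ℤ) (x y : ℕ) (hx : x ∈ I) (hy : y ∈ I), x = y →
      w ((I.orderIsoOfFin hℓ).symm ⟨x, hx⟩) = w ((I.orderIsoOfFin hℓ).symm ⟨y, hy⟩) := by
    intro w x y hx hy h
    subst h
    rfl
  -- canonical Fin-index map
  set idx : ℕ → Fin (m + 1) := fun x => ⟨x % (m + 1), Nat.mod_lt _ (Nat.succ_pos m)⟩ with hidx
  have idx_eq : ∀ (x : ℕ) (h : x < m + 1), idx x = ⟨x, h⟩ := by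
    intro x h
    simp only [hidx]
    exact Fin.ext (by simp [Nat.mod_eq_of_lt h])
  have idx_val : ∀ (x : ℕ), x < m + 1 → (idx x).val = x := by
    intro x h
    rw [idx_eq x h]
  have idx_fin : ∀ j : Fin (m + 1), idx j.val = j := by
    intro j
    rw [idx_eq j.val j.isLt]
  -- the maps
  set Φ : (ZMod n × Fin k → ℤ) → (Fin (m + 1) → ℤ) × (Fin ℓ → Fin k → ℤ) := fun f =>
    (fun j => f (((eI I j.val : ℕ) : ZMod n), s0),
     fun j s => f ((((I.orderIsoOfFin hℓ j : ℕ)) : ZMod n), s)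
              - f ((((I.orderIsoOfFin hℓ j : ℕ) - 1 : ℕ) : ZMod n), s0)) with hΦ
  set Ψ : (Fin (m + 1) → ℤ) × (Fin ℓ → Fin k → ℤ) → (ZMod n × Fin k → ℤ) := fun P x =>
    if h : x.1.val ∈ I then
      P.1 (idx (rr I (x.1.val - 1)))
        + P.2 ((I.orderIsoOfFin hℓ).symm ⟨x.1.val, h⟩) x.2
    else P.1 (idx (rr I x.1.val)) with hΨ
  -- Ψ evaluation formulas
  have Ψpos : ∀ (P : (Fin (m + 1) → ℤ) × (Fin ℓ → Fin k → ℤ)) (a : ℕ), a < n →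
      ∀ (haI : a ∈ I) (s : Fin k),
      Ψ P ((a : ZMod n), s)
        = P.1 (idx (rr I (a - 1)))
          + P.2 ((I.orderIsoOfFin hℓ).symm ⟨a, haI⟩) s := by
    intro P a ha haI s
    simp only [hΨ]
    rw [dif_pos (show (((a : ℕ) : ZMod n)).val ∈ I by rwa [hvcast a ha])]
    exact congrArg₂ (· + ·)
      (congrArg (fun z => P.1 (idx (rr I (z - 1)))) (hvcast a ha))
      (congrFun (P2c _ _ _ _ haI (hvcast a ha)) s)
  have Ψneg : ∀ (P : (Fin (m + 1) → ℤ) × (Fin ℓ → Fin k → ℤ)) (a : ℕ), a < n →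
      a ∉ I → ∀ (s : Fin k),
      Ψ P ((a : ZMod n), s) = P.1 (idx (rr I a)) := by
    intro P a ha haI s
    simp only [hΨ]
    rw [dif_neg (show ¬ (((a : ℕ) : ZMod n)).val ∈ I by rwa [hvcast a ha])]
    exact congrArg (fun z => P.1 (idx (rr I z))) (hvcast a ha)
  -- the forward map is well defined
  have hMapsΦ : ∀ f ∈ HIset n k hk I,
      Φ f ∈ (pathSet m) ×ˢ {w : Fin ℓ → Fin k → ℤ | ∀ j, w j ∈ Vset k} := by
    intro f hf
    have hhom : IsHomZ (Cnk n k) f := hf.1.1.1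
    have h0s : ∀ s, f (0, s) = 0 := hf.1.2
    rw [Set.mem_prod]
    constructor
    · simp only [pathSet, Set.mem_setOf_eq, hΦ]
      refine ⟨?_, ?_, ?_⟩
      · rw [Fin.val_zero, eI_zero, Nat.cast_zero]
        exact h0s s0
      · rw [Fin.val_last]
        have hFL := FL f hf n le_rfl hnmem s0
        rw [hRn, ZMod.natCast_self] at hFL
        rw [← hFL]
        exact h0s s0
      · intro q
        have hq := q.isLt
        rw [Fin.val_succ, Fin.coe_castSucc]
        set p := eI I (q.val + 1) with hp
        have hprr : rr I p = q.val + 1 := REI _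
        have hppos : 1 ≤ p := by
          by_contra hc
          have hp0 : p = 0 := by omega
          rw [hp0, R0] at hprr
          omega
        have hpI : p ∉ I := eI_not_mem hpos hcons _
        have hp1I : p - 1 ∉ I := eI_pred_not_mem hpos hcons _ hppos
        have hple : p ≤ n := by
          obtain ⟨i0, hi0n, hi0⟩ := rr_surjOn hpos hcons n (q.val + 1) (by rw [hRn]; omega)
          exact le_trans (eI_le hi0) hi0n
        have hrpred : rr I (p - 1) = q.val := by
          have h5 := Rsucc (p - 1)
          rw [show p - 1 + 1 = p by omega, if_neg (by push_neg; exact ⟨hpI, hp1I⟩)] at h5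
          omega
        have hFL := FL f hf (p - 1) (by omega) hp1I s0
        rw [hrpred] at hFL
        rw [← hFL]
        have hcp : ((p : ℕ) : ZMod n) = (((p - 1 : ℕ)) : ZMod n) + 1 := by
          rw [hcast_pred p hppos]; ring
        rw [hcp]
        exact hstep f hhom _ s0 s0
    · intro j
      have haI : ((I.orderIsoOfFin hℓ j : ℕ)) ∈ I := (I.orderIsoOfFin hℓ j).2
      set a : ℕ := (I.orderIsoOfFin hℓ j : ℕ) with hadef
      have ha1 : 1 ≤ a := hpos _ haI
      have han : a < n := hnI _ haI
      have hca : ((a : ℕ) : ZMod n) = (((a - 1 : ℕ)) : ZMod n) + 1 := by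
        rw [hcast_pred a ha1]; ring
      have hval : ∀ s, (Φ f).2 j s = f ((a : ZMod n), s) - f (((a - 1 : ℕ) : ZMod n), s0) := by
        intro s
        simp only [hΦ]
        rfl
      have habs : ∀ s, (Φ f).2 j s = 1 ∨ (Φ f).2 j s = -1 := by
        intro s
        rw [← abs_eq (by norm_num : (0:ℤ) ≤ 1), hval s, hca]
        exact hstep f hhom _ s0 s
      have hanc : ¬ LayerConst f (a : ZMod n) := by
        rw [hNC f hf.2, hvcast a han]
        exact haI
      rw [LayerConst] at hanc
      push_neg at hanc
      obtain ⟨s₁, s₂, hne⟩ := hanc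
      have hdiff : (Φ f).2 j s₁ ≠ (Φ f).2 j s₂ := by
        rw [hval s₁, hval s₂]
        intro hc
        exact hne (by omega)
      exact ⟨habs, fun hc => hdiff (by rw [hc]), fun hc => hdiff (by rw [hc])⟩
  -- left inverse
  have hLI : ∀ f ∈ HIset n k hk I, Ψ (Φ f) = f := by
    intro f hf
    funext x
    obtain ⟨i, s⟩ := x
    have hiv := hvlt i
    have hix : i = ((i.val : ℕ) : ZMod n) := (hcastv i).symm
    by_cases h : i.val ∈ I
    · rw [hix, Ψpos (Φ f) i.val hiv h s]
      have ha1 : 1 ≤ i.val := hpos _ h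
      have hpred : i.val - 1 ∉ I := by
        intro hc
        have h5 := hcons _ hc
        rw [show i.val - 1 + 1 = i.val by omega] at h5
        exact h5 h
      have hsymm : (I.orderIsoOfFin hℓ) ((I.orderIsoOfFin hℓ).symm ⟨i.val, h⟩) = ⟨i.val, h⟩ :=
        OrderIso.apply_symm_apply _ _
      have hc1 : (Φ f).1 (idx (rr I (i.val - 1)))
          = f (((eI I ((idx (rr I (i.val - 1))).val) : ℕ) : ZMod n), s0) := by
        simp only [hΦ]
      have hidxv : (idx (rr I (i.val - 1))).val = rr I (i.val - 1) :=
        idx_val _ (hble _ (by omega))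
      have hc2 : (Φ f).2 ((I.orderIsoOfFin hℓ).symm ⟨i.val, h⟩) s
          = f (((i.val : ℕ) : ZMod n), s) - f (((i.val - 1 : ℕ) : ZMod n), s0) := by
        simp only [hΦ]
        rw [hsymm]
      rw [hc1, hc2, hidxv]
      have hFL := FL f hf (i.val - 1) (by omega) hpred s0
      rw [← hFL]
      ring
    · rw [hix, Ψneg (Φ f) i.val hiv h s]
      have hc1 : (Φ f).1 (idx (rr I i.val))
          = f (((eI I ((idx (rr I i.val)).val) : ℕ) : ZMod n), s0) := by
        simp only [hΦ]
      have hidxv : (idx (rr I i.val)).val = rr I i.val :=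
        idx_val _ (hble _ (le_of_lt hiv))
      rw [hc1, hidxv]
      have hFL := FL f hf i.val (le_of_lt hiv) h s0
      rw [← hFL]
      exact hCL f hf.2 _ (by rwa [hvcast i.val hiv]) s0 s
  -- Vset extraction
  have hVget : ∀ v : Fin k → ℤ, v ∈ Vset k →
      (∀ s, v s = 1 ∨ v s = -1) ∧ (∃ s, v s = 1) ∧ (∃ s, v s = -1) := by
    intro v hv
    obtain ⟨h1, h2, h3⟩ := hv
    refine ⟨h1, ?_, ?_⟩
    · by_contra hc
      push_neg at hc
      apply h3
      funext s
      rcases h1 s with h | h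
      · exact absurd h (hc s)
      · exact h
    · by_contra hc
      push_neg at hc
      apply h2
      funext s
      rcases h1 s with h | h
      · exact h
      · exact absurd h (hc s)
  -- the inverse map is well defined
  have hMapsΨ : ∀ P ∈ (pathSet m) ×ˢ {w : Fin ℓ → Fin k → ℤ | ∀ j, w j ∈ Vset k},
      Ψ P ∈ HIset n k hk I := by
    intro P hP
    rw [Set.mem_prod] at hP
    obtain ⟨hP1, hP2⟩ := hP
    simp only [pathSet, Set.mem_setOf_eq] at hP1
    simp only [Set.mem_setOf_eq] at hP2
    obtain ⟨hS0, hSl, hSstep⟩ := hP1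
    have i0 : idx 0 = 0 := (idx_eq 0 (by omega)).trans (Fin.ext (by simp))
    have ilast : idx m = Fin.last m := (idx_eq m (by omega)).trans (Fin.ext (by simp))
    have P0 : P.1 (idx 0) = 0 := (congrArg P.1 i0).trans hS0
    have Plast : P.1 (idx m) = 0 := (congrArg P.1 ilast).trans hSl
    have step' : ∀ x : ℕ, x < m → |P.1 (idx (x+1)) - P.1 (idx x)| = 1 := by
      intro x hx
      have hq := hSstep ⟨x, hx⟩
      have h1 : (⟨x, hx⟩ : Fin m).succ = idx (x+1) :=
        (Fin.ext (by simp) :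
            (⟨x, hx⟩ : Fin m).succ = (⟨x+1, by omega⟩ : Fin (m+1))).trans
          (idx_eq (x+1) (by omega)).symm
      have h2 : (⟨x, hx⟩ : Fin m).castSucc = idx x :=
        (Fin.ext (by simp) :
            (⟨x, hx⟩ : Fin m).castSucc = (⟨x, by omega⟩ : Fin (m+1))).trans
          (idx_eq x (by omega)).symm
      rw [h1, h2] at hq
      exact hq
    have h0val : ∀ s, Ψ P ((0 : ZMod n), s) = 0 := by
      intro s
      have h00 : ((0 : ℕ) : ZMod n) = 0 := Nat.cast_zero
      rw [← h00, Ψneg P 0 (by omega) h0mem s, R0]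
      exact P0
    have key : ∀ (i : ZMod n) (s t : Fin k), |Ψ P (i + 1, t) - Ψ P (i, s)| = 1 := by
      intro i s t
      have hiv := hvlt i
      have hix : i = ((i.val : ℕ) : ZMod n) := (hcastv i).symm
      have hi1 : i + 1 = (((i.val + 1 : ℕ)) : ZMod n) := by
        rw [hcast_succ, hcastv]
      by_cases hlast : i.val + 1 = n
      · have hi10 : i + 1 = 0 := by rw [hi1, hlast, ZMod.natCast_self]
        rw [hi10, h0val t]
        by_cases h : i.val ∈ I
        · rw [hix, Ψpos P i.val hiv h s]
          have ha1 : 1 ≤ i.val := hpos _ h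
          have hr1 : rr I (i.val) = rr I (i.val - 1) := by
            have h5 := Rsucc (i.val - 1)
            rw [show i.val - 1 + 1 = i.val by omega, if_pos (Or.inl h)] at h5
            omega
          have hr2 : rr I n = rr I i.val := by
            have h5 := Rsucc i.val
            rw [hlast] at h5
            rw [if_pos (Or.inr h)] at h5
            omega
          have hrm : rr I (i.val - 1) = m := by omega
          rw [hrm, Plast]
          rcases (hVget _ (hP2 ((I.orderIsoOfFin hℓ).symm ⟨i.val, h⟩))).1 s with hw | hw <;>
            rw [hw] <;> norm_num
        · rw [hix, Ψneg P i.val hiv h s]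
          have hr : rr I n = rr I i.val + 1 := by
            have h5 := Rsucc i.val
            rw [hlast] at h5
            rw [if_neg (by push_neg; exact ⟨hnmem, h⟩)] at h5
            omega
          have hm1 : 1 ≤ m := by omega
          have hrv : rr I i.val = m - 1 := by omega
          have hq := step' (m - 1) (by omega)
          rw [show m - 1 + 1 = m by omega, Plast] at hq
          rw [hrv]
          exact hq
      · have hlt : i.val + 1 < n := by omega
        by_cases h : i.val ∈ I
        · have hnext : i.val + 1 ∉ I := hcons _ h
          have ha1 : 1 ≤ i.val := hpos _ h
          rw [hix, ← hcast_succ i.val, Ψneg P (i.val + 1) hlt hnext t,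
            Ψpos P i.val hiv h s]
          have hr1 : rr I (i.val + 1) = rr I i.val := by
            have h5 := Rsucc i.val
            rw [if_pos (Or.inr h)] at h5
            omega
          have hr2 : rr I i.val = rr I (i.val - 1) := by
            have h5 := Rsucc (i.val - 1)
            rw [show i.val - 1 + 1 = i.val by omega, if_pos (Or.inl h)] at h5
            omega
          rw [show rr I (i.val + 1) = rr I (i.val - 1) by omega]
          rcases (hVget _ (hP2 ((I.orderIsoOfFin hℓ).symm ⟨i.val, h⟩))).1 s with hw | hw <;>
            rw [hw] <;> rw [abs_eq (by norm_num : (0:ℤ) ≤ 1)] <;> omega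
        · by_cases h' : i.val + 1 ∈ I
          · rw [hix, ← hcast_succ i.val, Ψpos P (i.val + 1) hlt h' t,
              Ψneg P i.val hiv h s]
            rw [show i.val + 1 - 1 = i.val by omega]
            rcases (hVget _ (hP2 ((I.orderIsoOfFin hℓ).symm ⟨i.val + 1, h'⟩))).1 t with hw | hw <;>
              rw [hw] <;> rw [abs_eq (by norm_num : (0:ℤ) ≤ 1)] <;> omega
          · rw [hix, ← hcast_succ i.val, Ψneg P (i.val + 1) hlt h' t,
              Ψneg P i.val hiv h s]
            have hr : rr I (i.val + 1) = rr I i.val + 1 := by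
              have h5 := Rsucc i.val
              rw [if_neg (by push_neg; exact ⟨h', h⟩)] at h5
              omega
            have hlt' : rr I i.val < m := by
              have := hble (i.val + 1) (by omega)
              omega
            have hq := step' (rr I i.val) hlt'
            rw [← hr] at hq
            exact hq
    refine ⟨⟨⟨?_, ?_⟩, ?_⟩, ?_⟩
    · intro a b hab
      rw [Cnk, SimpleGraph.fromRel_adj] at hab
      obtain ⟨hne, hor | hor⟩ := hab
      · obtain ⟨i, s⟩ := a
        obtain ⟨i', t⟩ := b
        have hor' : i + 1 = i' := hor
        subst hor'
        have h5 := key i s t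
        rwa [abs_sub_comm] at h5
      · obtain ⟨i, s⟩ := a
        obtain ⟨i', t⟩ := b
        have hor' : i' + 1 = i := hor
        subst hor'
        exact key i' t s
    · exact h0val _
    · intro s
      exact h0val s
    · ext i
      simp only [NCset, Set.mem_setOf_eq, himg i]
      constructor
      · intro hnc
        by_contra hcI
        apply hnc
        intro s t
        rw [← hcastv i, Ψneg P i.val (hvlt i) hcI s, Ψneg P i.val (hvlt i) hcI t]
      · intro hcI hLC
        obtain ⟨⟨s1, hw1⟩, ⟨s2, hw2⟩⟩ :=
          (hVget _ (hP2 ((I.orderIsoOfFin hℓ).symm ⟨i.val, hcI⟩))).2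
        have e1 := hLC s1 s2
        rw [← hcastv i, Ψpos P i.val (hvlt i) hcI s1, Ψpos P i.val (hvlt i) hcI s2,
          hw1, hw2] at e1
        omega
  -- right inverse
  have hRI : ∀ P ∈ (pathSet m) ×ˢ {w : Fin ℓ → Fin k → ℤ | ∀ j, w j ∈ Vset k}, Φ (Ψ P) = P := by
    intro P hP
    rw [Set.mem_prod] at hP
    obtain ⟨hP1, hP2⟩ := hP
    simp only [pathSet, Set.mem_setOf_eq] at hP1
    obtain ⟨hS0, hSl, hSstep⟩ := hP1
    have i0 : idx 0 = 0 := (idx_eq 0 (by omega)).trans (Fin.ext (by simp))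
    have P0 : P.1 (idx 0) = 0 := (congrArg P.1 i0).trans hS0
    refine Prod.ext ?_ ?_
    · funext j
      simp only [hΦ]
      set p := eI I j.val with hpdef
      have hprr : rr I p = j.val := REI _
      have hpI : p ∉ I := eI_not_mem hpos hcons _
      have hjle : j.val ≤ m := by have := j.isLt; omega
      have hple : p ≤ n := by
        obtain ⟨i0, hi0n, hi0⟩ := rr_surjOn hpos hcons n j.val (by rw [hRn]; omega)
        exact le_trans (eI_le hi0) hi0n
      rcases Nat.lt_or_ge p n with hpn | hpn
      · rw [Ψneg P p hpn hpI s0, hprr, idx_fin]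
      · have hpn' : p = n := by omega
        have hcast0 : ((p : ℕ) : ZMod n) = (((0:ℕ)) : ZMod n) := by
          rw [hpn', ZMod.natCast_self, Nat.cast_zero]
        rw [hcast0, Ψneg P 0 (by omega) h0mem s0, R0, P0]
        have hjm : j.val = m := by rw [← hprr, hpn', hRn]
        have hjl : j = Fin.last m := Fin.ext (by simp [hjm])
        rw [hjl, hSl]
    · funext j s
      simp only [hΦ]
      have haI : ((I.orderIsoOfFin hℓ j : ℕ)) ∈ I := (I.orderIsoOfFin hℓ j).2
      set a : ℕ := (I.orderIsoOfFin hℓ j : ℕ) with hadef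
      have ha1 : 1 ≤ a := hpos _ haI
      have han : a < n := hnI _ haI
      have hpredI : a - 1 ∉ I := by
        intro hc
        have h5 := hcons _ hc
        rw [show a - 1 + 1 = a by omega] at h5
        exact h5 haI
      rw [Ψpos P a han haI s, Ψneg P (a-1) (by omega) hpredI s0]
      have hsymm : ((I.orderIsoOfFin hℓ).symm ⟨a, haI⟩) = j := by
        have h2 : (⟨a, haI⟩ : {x // x ∈ I}) = I.orderIsoOfFin hℓ j := Subtype.ext rfl
        rw [h2, OrderIso.symm_apply_apply]
      rw [hsymm]
      ring
  refine ⟨Φ, ?_, ?_⟩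
  · exact Set.InvOn.bijOn ⟨fun f hf => hLI f hf, fun P hP => hRI P hP⟩
      (fun f hf => hMapsΦ f hf) (fun P hP => hMapsΨ P hP)
  · intro f hf
    ext z
    simp only [RCset, Set.mem_setOf_eq, Set.mem_range]
    constructor
    · rintro ⟨i, hLC, rfl⟩
      have hvi : i.val ∉ I := by
        intro hc
        exact ((hNC f hf.2 i).2 hc) hLC
      have hFL := FL f hf i.val (le_of_lt (hvlt i)) hvi s0
      rw [hcastv i] at hFL
      refine ⟨idx (rr I i.val), ?_⟩
      simp only [hΦ]
      rw [idx_val _ (hble _ (le_of_lt (hvlt i)))]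
      exact hFL.symm
    · rintro ⟨j, rfl⟩
      set p := eI I j.val with hpdef
      have hpI : p ∉ I := eI_not_mem hpos hcons _
      have hjle : j.val ≤ m := by have := j.isLt; omega
      have hple : p ≤ n := by
        obtain ⟨i0, hi0n, hi0⟩ := rr_surjOn hpos hcons n j.val (by rw [hRn]; omega)
        exact le_trans (eI_le hi0) hi0n
      have hvp : ((p : ℕ) : ZMod n).val ∉ I := hvalnotI p hple hpI
      exact ⟨(p : ZMod n), hCL f hf.2 _ hvp, rfl⟩
end

section
/- Let n ≥ 4 be even, k ∈ ℕ, and let I = {i₁ < ⋯ < i_ℓ} ⊆ [n−1] be a set of size ℓ ≥ 1 containing no two consecutive integers. For f ∈ H(I,n) define f′ on ℤ_{n−2} × [k] by f′(i,s) = f(i,s) for i < i_ℓ and f′(i,s) = f(i+2,s) for i ≥ i_ℓ (indices of f read modulo n), and define v_f ∈ {1,−1}^k by v_f(s) = f(i_ℓ,s) − f(i_ℓ−1,s). Then f′ ∈ H(I \ {i_ℓ}, n−2), v_f ∈ V_k, and the map Φ(f) = (f′, v_f) is a bijection from H(I,n) to H(I \ {i_ℓ}, n−2) × V_k. -/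
open Filter

/-- The map `f ↦ f′` deleting the (top non-constant) layer `m` and the layer
after it: `f′(i,s) = f(i,s)` for `i < m` and `f′(i,s) = f(i+2,s)` for `i ≥ m`
(indices read modulo `n`). -/
def fprime (n k : ℕ) (m : ℕ) (f : ZMod n × Fin k → ℤ) :
    ZMod (n - 2) × Fin k → ℤ :=
  fun p =>
    if p.1.val < m then f (((p.1.val : ℕ) : ZMod n), p.2)
    else f (((p.1.val + 2 : ℕ) : ZMod n), p.2)

/-- The vector `v_f ∈ {1,-1}^k`, `v_f(s) = f(i_ℓ,s) − f(i_ℓ−1,s)`. -/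
def vf (n k : ℕ) (m : ℕ) (f : ZMod n × Fin k → ℤ) : Fin k → ℤ :=
  fun s => f ((m : ZMod n), s) - f (((m - 1 : ℕ) : ZMod n), s)

lemma abs_one_cases {x y : ℤ} (h : |x - y| = 1) : x = y + 1 ∨ x = y - 1 := by
  rcases abs_eq (by norm_num : (0:ℤ) ≤ 1) |>.mp h with h' | h' <;> omega

lemma cast_inj_of_lt {n a b : ℕ} (ha : a < n) (hb : b < n) :
    (a : ZMod n) = (b : ZMod n) ↔ a = b := by
  constructor
  · intro h
    have := congrArg ZMod.val h
    rwa [ZMod.val_cast_of_lt ha, ZMod.val_cast_of_lt hb] at this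
  · rintro rfl; rfl

lemma isHomZ_iff {n k : ℕ} (hn : 2 ≤ n) (f : ZMod n × Fin k → ℤ) :
    IsHomZ (Cnk n k) f ↔ ∀ (i : ZMod n) (s t : Fin k), |f (i + 1, t) - f (i, s)| = 1 := by
  haveI : NeZero n := ⟨by omega⟩
  have hne : ∀ i : ZMod n, i + 1 ≠ i := by
    intro i h
    have h1 : (1 : ZMod n) = 0 := by
      have := congrArg (· - i) h
      simpa [add_sub_cancel_left] using this
    have := congrArg ZMod.val h1
    rw [ZMod.val_one_eq_one_mod] at this
    simp [Nat.mod_eq_of_lt (show 1 < n by omega)] at this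
  constructor
  · intro H i s t
    have hadj : (Cnk n k).Adj (i, s) (i + 1, t) := by
      rw [Cnk, SimpleGraph.fromRel_adj]
      refine ⟨?_, Or.inl rfl⟩
      intro h
      exact hne i (congrArg Prod.fst h).symm
    have := H _ _ hadj
    rwa [abs_sub_comm] at this
  · intro H a b hadj
    rw [Cnk, SimpleGraph.fromRel_adj] at hadj
    rcases hadj with ⟨hab, h | h⟩
    · have : b = (a.1 + 1, b.2) := by rw [Prod.ext_iff]; exact ⟨h.symm, rfl⟩
      rw [this, show a = (a.1, a.2) from rfl, abs_sub_comm]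
      exact H a.1 a.2 b.2
    · have : a = (b.1 + 1, a.2) := by rw [Prod.ext_iff]; exact ⟨h.symm, rfl⟩
      rw [this, show b = (b.1, b.2) from rfl]
      exact H b.1 b.2 a.2

lemma stepNat {n k : ℕ} (f : ZMod n × Fin k → ℤ)
    (H : ∀ (i : ZMod n) (s t : Fin k), |f (i + 1, t) - f (i, s)| = 1)
    (j : ℕ) (s t : Fin k) : |f (((j + 1 : ℕ) : ZMod n), t) - f ((j : ZMod n), s)| = 1 := by
  have := H (j : ZMod n) s t
  rwa [show ((j : ZMod n) + 1) = ((j + 1 : ℕ) : ZMod n) by push_cast; ring] at this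

section HIfacts

variable {n k : ℕ} {hk : 0 < k} {I : Finset ℕ} {f : ZMod n × Fin k → ℤ}

lemma HI_step (hn : 2 ≤ n) (hf : f ∈ HIset n k hk I) :
    ∀ (i : ZMod n) (s t : Fin k), |f (i + 1, t) - f (i, s)| = 1 :=
  (isHomZ_iff (by omega) f).mp hf.1.1.1

lemma HI_zero (hf : f ∈ HIset n k hk I) : ∀ s, f (0, s) = 0 := hf.1.2

lemma HI_mem_iff (hn : 1 ≤ n) (hI : I ⊆ Finset.Icc 1 (n - 1))
    (hf : f ∈ HIset n k hk I) {j : ℕ} (hj : j < n) :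
    ¬ LayerConst f (j : ZMod n) ↔ j ∈ I := by
  have : ((j : ZMod n) ∈ NCset f) ↔ j ∈ I := by
    rw [hf.2]
    constructor
    · rintro ⟨i, hiI, hcast⟩
      have hi : i < n := by
        have := Finset.mem_Icc.mp (hI hiI); omega
      rwa [(cast_inj_of_lt hi hj).mp hcast] at hiI
    · intro hjI
      exact ⟨j, hjI, rfl⟩
  exact this

lemma HI_const (hn : 1 ≤ n) (hI : I ⊆ Finset.Icc 1 (n - 1))
    (hf : f ∈ HIset n k hk I) {j : ℕ} (hj : j < n) (hjI : j ∉ I) :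
    LayerConst f (j : ZMod n) := by
  by_contra h
  exact hjI ((HI_mem_iff (by omega) hI hf hj).mp h)

variable {m : ℕ}

lemma HI_key1 (hn : 4 ≤ n) (hI : I ⊆ Finset.Icc 1 (n - 1))
    (hcons : ∀ i ∈ I, i + 1 ∉ I) (hmI : m ∈ I)
    (hf : f ∈ HIset n k hk I) :
    LayerConst f (((m - 1 : ℕ) : ZMod n)) := by
  have hm := Finset.mem_Icc.mp (hI hmI)
  refine HI_const (by omega) hI hf (by omega) ?_
  intro h
  have := hcons _ h
  rw [show m - 1 + 1 = m by omega] at this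
  exact this hmI

lemma HI_key2 (hn : 4 ≤ n) (hI : I ⊆ Finset.Icc 1 (n - 1))
    (hcons : ∀ i ∈ I, i + 1 ∉ I) (hmI : m ∈ I) (hmax : ∀ i ∈ I, i ≤ m)
    (hf : f ∈ HIset n k hk I) :
    ∀ s t, f (((m + 1 : ℕ) : ZMod n), s) = f (((m - 1 : ℕ) : ZMod n), t) := by
  have hm := Finset.mem_Icc.mp (hI hmI)
  have hstep := HI_step (by omega) hf
  -- layer m+1 is constant
  have hconst1 : LayerConst f (((m + 1 : ℕ) : ZMod n)) := by
    rcases Nat.lt_or_ge (m + 1) n with h | h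
    · refine HI_const (by omega) hI hf h ?_
      intro hmem
      have := hmax _ hmem; omega
    · have hm1 : m + 1 = n := by omega
      rw [hm1, ZMod.natCast_self]
      intro s t
      rw [HI_zero hf s, HI_zero hf t]
  have hconst0 : LayerConst f (((m - 1 : ℕ) : ZMod n)) := HI_key1 hn hI hcons hmI hf
  -- layer m is non-constant
  have hnc : ¬ LayerConst f ((m : ZMod n)) := by
    rw [HI_mem_iff (by omega) hI hf (show m < n by omega)]
    exact hmI
  rw [LayerConst] at hnc
  push_neg at hnc
  obtain ⟨s1, t1, hne⟩ := hnc
  intro s t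
  have e1 : |f ((m : ZMod n), s1) - f (((m - 1 : ℕ) : ZMod n), t)| = 1 := by
    have := stepNat f hstep (m - 1) t s1
    rwa [show m - 1 + 1 = m by omega] at this
  have e2 : |f ((m : ZMod n), t1) - f (((m - 1 : ℕ) : ZMod n), t)| = 1 := by
    have := stepNat f hstep (m - 1) t t1
    rwa [show m - 1 + 1 = m by omega] at this
  have e3 : |f (((m + 1 : ℕ) : ZMod n), s) - f ((m : ZMod n), s1)| = 1 := by
    have := stepNat f hstep m s1 s
    rwa [hconst1 _ s] at this
  have e4 : |f (((m + 1 : ℕ) : ZMod n), s) - f ((m : ZMod n), t1)| = 1 := by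
    have := stepNat f hstep m t1 s
    rwa [hconst1 _ s] at this
  rcases abs_one_cases e1 with h1 | h1 <;> rcases abs_one_cases e2 with h2 | h2 <;>
    rcases abs_one_cases e3 with h3 | h3 <;> rcases abs_one_cases e4 with h4 | h4 <;> omega

lemma HI_vmem (hn : 4 ≤ n) (hI : I ⊆ Finset.Icc 1 (n - 1))
    (hcons : ∀ i ∈ I, i + 1 ∉ I) (hmI : m ∈ I) (hmax : ∀ i ∈ I, i ≤ m)
    (hf : f ∈ HIset n k hk I) :
    vf n k m f ∈ Vset k := by
  have hm := Finset.mem_Icc.mp (hI hmI)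
  have hstep := HI_step (by omega) hf
  have hconst0 : LayerConst f (((m - 1 : ℕ) : ZMod n)) := HI_key1 hn hI hcons hmI hf
  have hnc : ¬ LayerConst f ((m : ZMod n)) := by
    rw [HI_mem_iff (by omega) hI hf (show m < n by omega)]
    exact hmI
  rw [LayerConst] at hnc
  push_neg at hnc
  obtain ⟨s1, t1, hne⟩ := hnc
  have hv : ∀ s, vf n k m f s = 1 ∨ vf n k m f s = -1 := by
    intro s
    have := stepNat f hstep (m - 1) s s
    rw [show m - 1 + 1 = m by omega] at this
    rcases abs_one_cases this with h | h <;> [left; right] <;>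
      simp only [vf] <;> omega
  refine ⟨hv, ?_, ?_⟩
  · intro h
    have h1 := congrFun h s1
    have h2 := congrFun h t1
    simp only [vf] at h1 h2
    have hc := hconst0 s1 t1
    omega
  · intro h
    have h1 := congrFun h s1
    have h2 := congrFun h t1
    simp only [vf] at h1 h2
    have hc := hconst0 s1 t1
    omega

lemma HI_azero (hn : 4 ≤ n) (hI : I ⊆ Finset.Icc 1 (n - 1))
    (hcons : ∀ i ∈ I, i + 1 ∉ I) (hmI : m ∈ I) (hmax : ∀ i ∈ I, i ≤ m)
    (hf : f ∈ HIset n k hk I) (hm : m = n - 1) :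
    ∀ s, f (((m - 1 : ℕ) : ZMod n), s) = 0 := by
  intro s
  have := (HI_key2 hn hI hcons hmI hmax hf s s).symm
  rw [show m + 1 = n by have := Finset.mem_Icc.mp (hI hmI); omega, ZMod.natCast_self] at this
  rw [this, HI_zero hf s]

end HIfacts
section Fprime

variable {n k m : ℕ} {hk : 0 < k} {I : Finset ℕ} {f : ZMod n × Fin k → ℤ}

lemma fprime_eval_lt (hn : 4 ≤ n) (f : ZMod n × Fin k → ℤ) {j : ℕ} (hj : j < n - 2)
    (hjm : j < m) (s : Fin k) :
    fprime n k m f ((j : ZMod (n - 2)), s) = f ((j : ZMod n), s) := by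
  simp only [fprime, ZMod.val_cast_of_lt hj, if_pos hjm]

lemma fprime_eval_ge (hn : 4 ≤ n) (f : ZMod n × Fin k → ℤ) {j : ℕ} (hj : j < n - 2)
    (hjm : m ≤ j) (s : Fin k) :
    fprime n k m f ((j : ZMod (n - 2)), s) = f (((j + 2 : ℕ) : ZMod n), s) := by
  simp only [fprime, ZMod.val_cast_of_lt hj, if_neg (Nat.not_lt.mpr hjm)]

lemma NC_eq_of_iff {n k : ℕ} [NeZero n] (f : ZMod n × Fin k → ℤ) (J : Finset ℕ)
    (h : ∀ j : ℕ, j < n → (¬ LayerConst f (j : ZMod n) ↔ j ∈ J))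
    (hJ : ∀ j ∈ J, j < n) :
    NCset f = (fun j : ℕ => (j : ZMod n)) '' J := by
  ext x
  constructor
  · intro hx
    have hv : ((x.val : ℕ) : ZMod n) = x := ZMod.natCast_rightInverse x
    refine ⟨x.val, ?_, hv⟩
    have : ¬ LayerConst f x := hx
    exact (h x.val (ZMod.val_lt x)).mp (by rwa [hv])
  · rintro ⟨j, hjJ, rfl⟩
    exact (h j (hJ j hjJ)).mpr hjJ

lemma erase_lt (hI : I ⊆ Finset.Icc 1 (n - 1)) (hcons : ∀ i ∈ I, i + 1 ∉ I)
    (hmI : m ∈ I) (hmax : ∀ i ∈ I, i ≤ m) :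
    ∀ j ∈ I.erase m, j + 1 < m := by
  intro j hj
  rw [Finset.mem_erase] at hj
  have h1 : j ≤ m := hmax _ hj.2
  have h2 : j + 1 ∉ I := hcons _ hj.2
  have h3 : j + 1 ≠ m := fun h => h2 (h ▸ hmI)
  omega

lemma fprime_mem (hn : 4 ≤ n) (hI : I ⊆ Finset.Icc 1 (n - 1))
    (hcons : ∀ i ∈ I, i + 1 ∉ I) (hmI : m ∈ I) (hmax : ∀ i ∈ I, i ≤ m)
    (hf : f ∈ HIset n k hk I) :
    fprime n k m f ∈ HIset (n - 2) k hk (I.erase m) := by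
  haveI : NeZero (n - 2) := ⟨by omega⟩
  have hm := Finset.mem_Icc.mp (hI hmI)
  have hstep := HI_step (by omega) hf
  have hz := HI_zero hf
  have hkey2 := HI_key2 hn hI hcons hmI hmax hf
  have hstep' : ∀ (i : ZMod (n - 2)) (s t : Fin k),
      |fprime n k m f (i + 1, t) - fprime n k m f (i, s)| = 1 := by
    intro i s t
    obtain ⟨j, hj, rfl⟩ : ∃ j, j < n - 2 ∧ (j : ZMod (n - 2)) = i :=
      ⟨i.val, ZMod.val_lt i, ZMod.natCast_rightInverse i⟩
    have hcast1 : (j : ZMod (n - 2)) + 1 = ((j + 1 : ℕ) : ZMod (n - 2)) := by push_cast; ring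
    rcases Nat.lt_or_ge (j + 1) (n - 2) with hj1 | hj1
    · rcases Nat.lt_or_ge (j + 1) m with hc | hc
      · rw [hcast1, fprime_eval_lt hn f hj1 hc, fprime_eval_lt hn f hj (by omega)]
        exact stepNat f hstep j s t
      rcases Nat.eq_or_lt_of_le hc with hc' | hc'
      · -- j + 1 = m
        rw [hcast1, fprime_eval_ge hn f hj1 hc, fprime_eval_lt hn f hj (by omega)]
        have e : f (((j + 2 : ℕ) : ZMod n), s) = f ((j : ZMod n), s) := by
          rw [show j + 2 = m + 1 by omega, show (j : ℕ) = m - 1 by omega]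
          exact hkey2 s s
        have h2 := stepNat f hstep (j + 2) s t
        rw [e, show j + 2 + 1 = j + 1 + 2 by omega] at h2
        exact h2
      · -- m ≤ j
        rw [hcast1, fprime_eval_ge hn f hj1 (by omega), fprime_eval_ge hn f hj (by omega)]
        have h2 := stepNat f hstep (j + 2) s t
        rw [show j + 2 + 1 = j + 1 + 2 by omega] at h2
        exact h2
    · -- wrap: j = n - 3
      have hwrap : (j : ZMod (n - 2)) + 1 = ((0 : ℕ) : ZMod (n - 2)) := by
        rw [hcast1, show j + 1 = n - 2 by omega, ZMod.natCast_self, Nat.cast_zero]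
      rw [hwrap, fprime_eval_lt hn f (show 0 < n - 2 by omega) (by omega)]
      rcases Nat.lt_or_ge j m with hc | hc
      · -- j = n-3 < m, so m = n-2 or m = n-1
        rw [fprime_eval_lt hn f hj hc]
        rcases Nat.eq_or_lt_of_le (show m ≤ n - 1 by omega) with hm' | hm'
        · -- m = n - 1
          have h2 := stepNat f hstep j s t
          have e : f (((j + 1 : ℕ) : ZMod n), t) = 0 := by
            rw [show j + 1 = m - 1 by omega]
            exact HI_azero hn hI hcons hmI hmax hf (by omega) t
          rw [e] at h2
          have e0 : f (((0 : ℕ) : ZMod n), t) = 0 := by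
            rw [Nat.cast_zero]; exact hz t
          rw [e0]
          have h3 := abs_one_cases h2
          rcases h3 with h3 | h3 <;> simp [h3, abs_sub_comm] <;> omega
        · -- m = n - 2, j = n - 3 = m - 1
          have h2 := stepNat f hstep (n - 1) s t
          rw [show n - 1 + 1 = n by omega, ZMod.natCast_self] at h2
          have e : f (((n - 1 : ℕ) : ZMod n), s) = f ((j : ZMod n), s) := by
            rw [show (n - 1 : ℕ) = m + 1 by omega, show (j : ℕ) = m - 1 by omega]
            exact hkey2 s s
          rw [e] at h2
          rw [Nat.cast_zero]
          exact h2
      · -- m ≤ j = n - 3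
        rw [fprime_eval_ge hn f hj hc]
        have h2 := stepNat f hstep (n - 1) s t
        rw [show n - 1 + 1 = n by omega, ZMod.natCast_self] at h2
        rw [show j + 2 = n - 1 by omega, Nat.cast_zero]
        exact h2
  refine ⟨⟨⟨(isHomZ_iff (by omega) _).mpr hstep', ?_⟩, ?_⟩, ?_⟩
  · have : ((0 : ℕ) : ZMod (n - 2)) = 0 := Nat.cast_zero
    rw [← this, fprime_eval_lt hn f (by omega) (by omega), Nat.cast_zero]
    exact hz _
  · intro s
    have : ((0 : ℕ) : ZMod (n - 2)) = 0 := Nat.cast_zero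
    rw [← this, fprime_eval_lt hn f (by omega) (by omega), Nat.cast_zero]
    exact hz s
  · refine NC_eq_of_iff _ _ ?_ ?_
    · intro j hj
      rcases Nat.lt_or_ge j m with hc | hc
      · have hLC : LayerConst (fprime n k m f) (j : ZMod (n - 2)) ↔
            LayerConst f ((j : ZMod n)) := by
          constructor <;> intro h s t
          · have := h s t
            rwa [fprime_eval_lt hn f hj hc, fprime_eval_lt hn f hj hc] at this
          · rw [fprime_eval_lt hn f hj hc, fprime_eval_lt hn f hj hc]
            exact h s t
        rw [hLC, HI_mem_iff (by omega) hI hf (by omega), Finset.mem_erase]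
        constructor
        · intro h; exact ⟨by omega, h⟩
        · exact fun h => h.2
      · have hconst : LayerConst (fprime n k m f) (j : ZMod (n - 2)) := by
          intro s t
          rw [fprime_eval_ge hn f hj hc, fprime_eval_ge hn f hj hc]
          have : LayerConst f (((j + 2 : ℕ) : ZMod n)) := by
            refine HI_const (by omega) hI hf (by omega) ?_
            intro hmem
            have := hmax _ hmem; omega
          exact this s t
        constructor
        · intro h; exact absurd hconst h
        · intro h
          exfalso
          have := erase_lt hI hcons hmI hmax j h
          omega
    · intro j hj
      have := erase_lt hI hcons hmI hmax j hj
      omega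

end Fprime
section Inj

variable {n k m : ℕ} {hk : 0 < k} {I : Finset ℕ} {f g : ZMod n × Fin k → ℤ}

lemma HI_inj (hn : 4 ≤ n) (hI : I ⊆ Finset.Icc 1 (n - 1))
    (hcons : ∀ i ∈ I, i + 1 ∉ I) (hmI : m ∈ I) (hmax : ∀ i ∈ I, i ≤ m)
    (hf : f ∈ HIset n k hk I) (hg : g ∈ HIset n k hk I)
    (hfp : fprime n k m f = fprime n k m g) (hv : vf n k m f = vf n k m g) : f = g := by
  haveI : NeZero n := ⟨by omega⟩
  have hm := Finset.mem_Icc.mp (hI hmI)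
  have P1 : ∀ j, j < m → ∀ s, f ((j : ZMod n), s) = g ((j : ZMod n), s) := by
    intro j hjm s
    rcases Nat.lt_or_ge j (n - 2) with hj | hj
    · have := congrFun hfp ((j : ZMod (n - 2)), s)
      rwa [fprime_eval_lt hn f hj hjm, fprime_eval_lt hn g hj hjm] at this
    · have hm' : m = n - 1 := by omega
      rw [show (j : ℕ) = m - 1 by omega, HI_azero hn hI hcons hmI hmax hf hm' s,
        HI_azero hn hI hcons hmI hmax hg hm' s]
  have P : ∀ j, j < n → ∀ s, f ((j : ZMod n), s) = g ((j : ZMod n), s) := by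
    intro j hj s
    rcases Nat.lt_or_ge j m with h1 | h1
    · exact P1 j h1 s
    rcases Nat.eq_or_lt_of_le h1 with h2 | h2
    · -- j = m
      have hvf := congrFun hv s
      simp only [vf] at hvf
      have hP := P1 (m - 1) (by omega) s
      subst h2
      omega
    rcases Nat.eq_or_lt_of_le h2 with h3 | h3
    · -- j = m + 1
      rw [show (j : ℕ) = m + 1 by omega, HI_key2 hn hI hcons hmI hmax hf s s,
        HI_key2 hn hI hcons hmI hmax hg s s]
      exact P1 (m - 1) (by omega) s
    · -- m + 2 ≤ j
      have := congrFun hfp ((((j - 2 : ℕ)) : ZMod (n - 2)), s)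
      rwa [fprime_eval_ge hn f (by omega) (by omega), fprime_eval_ge hn g (by omega) (by omega),
        show j - 2 + 2 = j by omega] at this
  funext p
  obtain ⟨x, s⟩ := p
  have := P x.val (ZMod.val_lt x) s
  rwa [ZMod.natCast_rightInverse x] at this

end Inj

/-- The inverse map: inserts back the deleted layers. -/
def finv (n k : ℕ) (m : ℕ) (g : ZMod (n - 2) × Fin k → ℤ) (v : Fin k → ℤ) :
    ZMod n × Fin k → ℤ :=
  fun p =>
    if p.1.val < m then g ((p.1.val : ZMod (n - 2)), p.2)
    else if p.1.val = m then g (((m - 1 : ℕ) : ZMod (n - 2)), p.2) + v p.2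
    else if p.1.val = m + 1 then g (((m - 1 : ℕ) : ZMod (n - 2)), p.2)
    else g (((p.1.val - 2 : ℕ) : ZMod (n - 2)), p.2)

section Finv

variable {n k m : ℕ} {hk : 0 < k} {I : Finset ℕ} {g : ZMod (n - 2) × Fin k → ℤ}
  {v : Fin k → ℤ}

lemma finv_lt {j : ℕ} (hj : j < n) (hjm : j < m) (s : Fin k) :
    finv n k m g v ((j : ZMod n), s) = g ((j : ZMod (n - 2)), s) := by
  simp only [finv, ZMod.val_cast_of_lt hj, if_pos hjm]

lemma finv_m (hm : m < n) (s : Fin k) :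
    finv n k m g v ((m : ZMod n), s) = g (((m - 1 : ℕ) : ZMod (n - 2)), s) + v s := by
  simp only [finv, ZMod.val_cast_of_lt hm]
  rw [if_neg (by omega)]
  simp

lemma finv_m1 (hm : m + 1 < n) (s : Fin k) :
    finv n k m g v (((m + 1 : ℕ) : ZMod n), s) = g (((m - 1 : ℕ) : ZMod (n - 2)), s) := by
  simp only [finv, ZMod.val_cast_of_lt hm]
  rw [if_neg (by omega), if_neg (by omega)]
  simp

lemma finv_ge {j : ℕ} (hj : j < n) (hjm : m + 2 ≤ j) (s : Fin k) :
    finv n k m g v ((j : ZMod n), s) = g (((j - 2 : ℕ) : ZMod (n - 2)), s) := by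
  simp only [finv, ZMod.val_cast_of_lt hj]
  rw [if_neg (by omega), if_neg (by omega), if_neg (by omega)]

end Finv
section FinvMem

variable {n k m : ℕ} {hk : 0 < k} {I : Finset ℕ} {g : ZMod (n - 2) × Fin k → ℤ}
  {v : Fin k → ℤ}

lemma vdiff (hk : 0 < k) (hv : v ∈ Vset k) : ∃ s t, v s ≠ v t := by
  by_contra h
  push_neg at h
  rcases hv.1 ⟨0, hk⟩ with h1 | h1
  · exact hv.2.1 (funext fun t => (h t ⟨0, hk⟩).trans h1)
  · exact hv.2.2 (funext fun t => (h t ⟨0, hk⟩).trans h1)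

lemma erase_sub (hn : 4 ≤ n) (hI : I ⊆ Finset.Icc 1 (n - 1))
    (hcons : ∀ i ∈ I, i + 1 ∉ I) (hmI : m ∈ I) (hmax : ∀ i ∈ I, i ≤ m) :
    I.erase m ⊆ Finset.Icc 1 (n - 2 - 1) := by
  intro j hj
  have h1 := erase_lt hI hcons hmI hmax j hj
  have h2 := Finset.mem_Icc.mp (hI (Finset.mem_of_mem_erase hj))
  have hm := Finset.mem_Icc.mp (hI hmI)
  rw [Finset.mem_Icc]
  omega

lemma gconst_m1 (hn : 4 ≤ n) (hI : I ⊆ Finset.Icc 1 (n - 1))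
    (hcons : ∀ i ∈ I, i + 1 ∉ I) (hmI : m ∈ I) (hmax : ∀ i ∈ I, i ≤ m)
    (hg : g ∈ HIset (n - 2) k hk (I.erase m)) :
    LayerConst g (((m - 1 : ℕ) : ZMod (n - 2))) := by
  have hm := Finset.mem_Icc.mp (hI hmI)
  rcases Nat.lt_or_ge (m - 1) (n - 2) with h | h
  · refine HI_const (by omega) (erase_sub hn hI hcons hmI hmax) hg h ?_
    intro hmem
    have h1 := Finset.mem_of_mem_erase hmem
    have h2 := hcons _ h1
    rw [show m - 1 + 1 = m by omega] at h2
    exact h2 hmI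
  · have e : ((m - 1 : ℕ) : ZMod (n - 2)) = 0 := by
      rw [show (m - 1 : ℕ) = n - 2 by omega, ZMod.natCast_self]
    rw [e]
    intro s t
    rw [HI_zero hg s, HI_zero hg t]

lemma finv_mem (hn : 4 ≤ n) (hI : I ⊆ Finset.Icc 1 (n - 1))
    (hcons : ∀ i ∈ I, i + 1 ∉ I) (hmI : m ∈ I) (hmax : ∀ i ∈ I, i ≤ m)
    (hg : g ∈ HIset (n - 2) k hk (I.erase m)) (hv : v ∈ Vset k) :
    finv n k m g v ∈ HIset n k hk I := by
  haveI : NeZero n := ⟨by omega⟩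
  have hm := Finset.mem_Icc.mp (hI hmI)
  have gstep := HI_step (show 2 ≤ n - 2 by omega) hg
  have gz := HI_zero hg
  have gc := gconst_m1 hn hI hcons hmI hmax hg
  have hE := erase_sub hn hI hcons hmI hmax
  have habs : ∀ s : Fin k, |v s| = 1 := by
    intro s; rcases hv.1 s with h | h <;> rw [h] <;> norm_num
  have hstep' : ∀ (i : ZMod n) (s t : Fin k),
      |finv n k m g v (i + 1, t) - finv n k m g v (i, s)| = 1 := by
    intro i s t
    obtain ⟨j, hj, rfl⟩ : ∃ j, j < n ∧ (j : ZMod n) = i :=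
      ⟨i.val, ZMod.val_lt i, ZMod.natCast_rightInverse i⟩
    have hcast1 : (j : ZMod n) + 1 = ((j + 1 : ℕ) : ZMod n) := by push_cast; ring
    rcases Nat.lt_or_ge (j + 1) n with hj1 | hj1
    · rcases Nat.lt_or_ge (j + 1) m with hc | hc
      · rw [hcast1, finv_lt hj1 hc, finv_lt hj (by omega)]
        exact stepNat g gstep j s t
      rcases Nat.eq_or_lt_of_le hc with hc' | hc'
      · -- j + 1 = m
        rw [hcast1, show j + 1 = m by omega, show (j : ℕ) = m - 1 by omega,
          finv_m (by omega) t, finv_lt (j := m - 1) (by omega) (by omega) s, gc s t,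
          show g (((m - 1 : ℕ) : ZMod (n - 2)), t) + v t
            - g (((m - 1 : ℕ) : ZMod (n - 2)), t) = v t by ring]
        exact habs t
      rcases Nat.eq_or_lt_of_le hc' with hc'' | hc''
      · -- j = m
        rw [hcast1, show j + 1 = m + 1 by omega, show (j : ℕ) = m by omega,
          finv_m1 (by omega) t, finv_m (by omega) s, gc s t,
          show g (((m - 1 : ℕ) : ZMod (n - 2)), t)
            - (g (((m - 1 : ℕ) : ZMod (n - 2)), t) + v s) = -(v s) by ring, abs_neg]
        exact habs s
      rcases Nat.eq_or_lt_of_le hc'' with hc3 | hc3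
      · -- j = m + 1
        rw [hcast1, show j + 1 = m + 2 by omega, show (j : ℕ) = m + 1 by omega,
          finv_ge (j := m + 2) (by omega) (by omega) t, finv_m1 (by omega) s,
          show m + 2 - 2 = m by omega]
        have := stepNat g gstep (m - 1) s t
        rwa [show m - 1 + 1 = m by omega] at this
      · -- m + 2 ≤ j
        rw [hcast1, finv_ge hj1 (by omega) t, finv_ge hj (by omega) s]
        have := stepNat g gstep (j - 2) s t
        rwa [show j - 2 + 1 = j + 1 - 2 by omega] at this
    · -- wrap: j = n - 1
      have hwrap : (j : ZMod n) + 1 = ((0 : ℕ) : ZMod n) := by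
        rw [hcast1, show j + 1 = n by omega, ZMod.natCast_self, Nat.cast_zero]
      rw [hwrap, finv_lt (j := 0) (by omega) (by omega) t]
      rcases Nat.eq_or_lt_of_le (show m ≤ n - 1 by omega) with hm' | hm'
      · -- m = n - 1, j = m
        rw [show (j : ℕ) = m by omega, finv_m (by omega) s]
        have e1 : g (((m - 1 : ℕ) : ZMod (n - 2)), s) = 0 := by
          rw [show (m - 1 : ℕ) = n - 2 by omega, ZMod.natCast_self]
          exact gz s
        have e2 : g (((0 : ℕ) : ZMod (n - 2)), t) = 0 := by
          rw [Nat.cast_zero]; exact gz t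
        rw [e1, e2, show (0 : ℤ) - (0 + v s) = -(v s) by ring, abs_neg]
        exact habs s
      rcases Nat.eq_or_lt_of_le (show m ≤ n - 2 by omega) with hm'' | hm''
      · -- m = n - 2, j = m + 1
        rw [show (j : ℕ) = m + 1 by omega, finv_m1 (by omega) s,
          show (m - 1 : ℕ) = n - 3 by omega]
        have := stepNat g gstep (n - 3) s t
        rw [show n - 3 + 1 = n - 2 by omega, ZMod.natCast_self] at this
        rwa [Nat.cast_zero]
      · -- m ≤ n - 3, j = n - 1 ≥ m + 2
        rw [finv_ge hj (by omega) s, show (j - 2 : ℕ) = n - 3 by omega]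
        have := stepNat g gstep (n - 3) s t
        rw [show n - 3 + 1 = n - 2 by omega, ZMod.natCast_self] at this
        rwa [Nat.cast_zero]
  refine ⟨⟨⟨(isHomZ_iff (by omega) _).mpr hstep', ?_⟩, ?_⟩, ?_⟩
  · rw [show (0 : ZMod n) = ((0 : ℕ) : ZMod n) by norm_num,
      finv_lt (j := 0) (by omega) (by omega), Nat.cast_zero]
    exact gz _
  · intro s
    rw [show (0 : ZMod n) = ((0 : ℕ) : ZMod n) by norm_num,
      finv_lt (j := 0) (by omega) (by omega), Nat.cast_zero]
    exact gz s
  · refine NC_eq_of_iff _ _ ?_ ?_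
    · intro j hj
      rcases Nat.lt_or_ge j m with hc | hc
      · rcases Nat.lt_or_ge j (n - 2) with hj2 | hj2
        · have hiff : LayerConst (finv n k m g v) (j : ZMod n) ↔
              LayerConst g ((j : ZMod (n - 2))) := by
            constructor <;> intro h s t
            · have := h s t
              rwa [finv_lt hj hc, finv_lt hj hc] at this
            · rw [finv_lt hj hc, finv_lt hj hc]
              exact h s t
          rw [hiff, HI_mem_iff (by omega) hE hg hj2, Finset.mem_erase]
          constructor
          · exact fun h => h.2
          · exact fun h => ⟨by omega, h⟩
        · -- j = n - 2, m = n - 1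
          have hcz : ((j : ℕ) : ZMod (n - 2)) = 0 := by
            rw [show (j : ℕ) = n - 2 by omega, ZMod.natCast_self]
          have hconst : LayerConst (finv n k m g v) (j : ZMod n) := by
            intro s t
            rw [finv_lt hj hc, finv_lt hj hc, hcz, gz s, gz t]
          have hnotI : j ∉ I := by
            intro hjI
            have h2 := hcons j hjI
            rw [show j + 1 = m by omega] at h2
            exact h2 hmI
          exact ⟨fun h => absurd hconst h, fun h => absurd h hnotI⟩
      rcases Nat.eq_or_lt_of_le hc with hc' | hc'
      · -- j = m
        obtain ⟨s, t, hst⟩ := vdiff hk hv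
        have hnc : ¬ LayerConst (finv n k m g v) ((m : ZMod n)) := by
          intro h
          have h1 := h s t
          rw [finv_m (by omega) s, finv_m (by omega) t, gc s t] at h1
          exact hst (by omega)
        rw [← hc']
        exact ⟨fun _ => hmI, fun _ => hnc⟩
      rcases Nat.eq_or_lt_of_le hc' with hc'' | hc''
      · -- j = m + 1
        have hconst : LayerConst (finv n k m g v) (j : ZMod n) := by
          intro s t
          rw [show (j : ℕ) = m + 1 by omega, finv_m1 (by omega) s, finv_m1 (by omega) t]
          exact gc s t
        have hnotI : j ∉ I := fun h => by have := hmax _ h; omega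
        exact ⟨fun h => absurd hconst h, fun h => absurd h hnotI⟩
      · -- m + 2 ≤ j
        have hconst : LayerConst (finv n k m g v) (j : ZMod n) := by
          intro s t
          rw [finv_ge hj (by omega) s, finv_ge hj (by omega) t]
          have hLC : LayerConst g (((j - 2 : ℕ) : ZMod (n - 2))) := by
            refine HI_const (by omega) hE hg (by omega) ?_
            intro hmem
            have := erase_lt hI hcons hmI hmax _ hmem
            omega
          exact hLC s t
        have hnotI : j ∉ I := fun h => by have := hmax _ h; omega
        exact ⟨fun h => absurd hconst h, fun h => absurd h hnotI⟩
    · intro j hjI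
      have := Finset.mem_Icc.mp (hI hjI)
      omega

lemma finv_fprime (hn : 4 ≤ n) (hm1 : 1 ≤ m) (hm2 : m ≤ n - 1) :
    fprime n k m (finv n k m g v) = g := by
  haveI : NeZero (n - 2) := ⟨by omega⟩
  funext p
  obtain ⟨x, s⟩ := p
  obtain ⟨j, hj, rfl⟩ : ∃ j, j < n - 2 ∧ (j : ZMod (n - 2)) = x :=
    ⟨x.val, ZMod.val_lt x, ZMod.natCast_rightInverse x⟩
  rcases Nat.lt_or_ge j m with hc | hc
  · rw [fprime_eval_lt hn _ hj hc]
    exact finv_lt (by omega) hc s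
  · rw [fprime_eval_ge hn _ hj hc, finv_ge (j := j + 2) (by omega) (by omega),
      show j + 2 - 2 = j by omega]

lemma finv_vf (hn : 4 ≤ n) (hm1 : 1 ≤ m) (hm2 : m ≤ n - 1) :
    vf n k m (finv n k m g v) = v := by
  funext s
  simp only [vf]
  rw [finv_m (by omega) s, finv_lt (j := m - 1) (by omega) (by omega) s]
  ring

end FinvMem
theorem stmt11 (n k : ℕ) (hn : 4 ≤ n) (hne : Even n) (hk : 0 < k)
    (I : Finset ℕ) (hIne : I.Nonempty) (ℓ : ℕ) (hℓ : I.card = ℓ) (hℓ1 : 1 ≤ ℓ)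
    (hI : I ⊆ Finset.Icc 1 (n - 1)) (hcons : ∀ i ∈ I, i + 1 ∉ I) :
    (∀ f ∈ HIset n k hk I,
        fprime n k (I.max' hIne) f ∈ HIset (n - 2) k hk (I.erase (I.max' hIne)) ∧
        vf n k (I.max' hIne) f ∈ Vset k) ∧
    Set.BijOn
      (fun f : ZMod n × Fin k → ℤ => (fprime n k (I.max' hIne) f, vf n k (I.max' hIne) f))
      (HIset n k hk I)
      ((HIset (n - 2) k hk (I.erase (I.max' hIne))) ×ˢ Vset k) := by
  have hmI : I.max' hIne ∈ I := I.max'_mem hIne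
  have hmax : ∀ i ∈ I, i ≤ I.max' hIne := fun i hi => I.le_max' i hi
  have hmm := Finset.mem_Icc.mp (hI hmI)
  have main : ∀ f ∈ HIset n k hk I,
      fprime n k (I.max' hIne) f ∈ HIset (n - 2) k hk (I.erase (I.max' hIne)) ∧
      vf n k (I.max' hIne) f ∈ Vset k := fun f hf =>
    ⟨fprime_mem hn hI hcons hmI hmax hf, HI_vmem hn hI hcons hmI hmax hf⟩
  refine ⟨main, ?_, ?_, ?_⟩
  · intro f hf
    exact Set.mem_prod.mpr ⟨(main f hf).1, (main f hf).2⟩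
  · intro f hf g hg h
    exact HI_inj hn hI hcons hmI hmax hf hg (congrArg Prod.fst h) (congrArg Prod.snd h)
  · intro p hp
    obtain ⟨g, v⟩ := p
    rw [Set.mem_prod] at hp
    refine ⟨finv n k (I.max' hIne) g v, finv_mem hn hI hcons hmI hmax hp.1 hp.2, ?_⟩
    simp only
    rw [finv_fprime hn hmm.1 hmm.2, finv_vf hn hmm.1 hmm.2]
end

section
/- Let n ≥ 4 be even, k ∈ ℕ, and let I = {i₁ < ⋯ < i_ℓ} ⊆ [n−1] be a set of size ℓ ≥ 1 containing no two consecutive integers. Let f ∈ H(I,n) and let f′ be defined by f′(i,s) = f(i,s) for i < i_ℓ and f′(i,s) = f(i+2,s) for i ≥ i_ℓ, so that f′ ∈ H(I \ {i_ℓ}, n−2). Then RC(f) = RC(f′), i.e. the set of values taken on constant layers is the same for f and f′. -/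
open Filter

theorem stmt12 (n k : ℕ) (hn : 4 ≤ n) (hne : Even n) (hk : 0 < k)
    (I : Finset ℕ) (hIne : I.Nonempty) (ℓ : ℕ) (hℓ : I.card = ℓ) (hℓ1 : 1 ≤ ℓ)
    (hI : I ⊆ Finset.Icc 1 (n - 1)) (hcons : ∀ i ∈ I, i + 1 ∉ I)
    (f : ZMod n × Fin k → ℤ) (hf : f ∈ HIset n k hk I) :
    RCset hk f = RCset hk (fprime n k (I.max' hIne) f) := by
  obtain ⟨⟨⟨hhom, _hz⟩, h0⟩, hNC⟩ := hf
  set m := I.max' hIne with hm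
  have hmI : m ∈ I := I.max'_mem hIne
  have hIb : ∀ j ∈ I, 1 ≤ j ∧ j ≤ n - 1 := fun j hj => by
    have := hI hj; simpa [Finset.mem_Icc] using this
  have hmle : m ≤ n - 1 := (hIb m hmI).2
  have hm1 : 1 ≤ m := (hIb m hmI).1
  haveI : NeZero n := ⟨by omega⟩
  haveI : NeZero (n - 2) := ⟨by omega⟩
  haveI : Fact (1 < n) := ⟨by omega⟩
  have ivalId : ∀ i : ZMod n, ((i.val : ℕ) : ZMod n) = i := by
    intro i; simp [ZMod.natCast_val, ZMod.cast_id]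
  -- Lemma A: a layer is constant iff its value (as a natural) is not in I
  have hconst : ∀ i : ZMod n, LayerConst f i ↔ i.val ∉ I := by
    intro i
    have h1 : (¬ LayerConst f i) ↔ i ∈ NCset f := Iff.rfl
    rw [hNC] at h1
    constructor
    · intro hc hvI
      exact (h1.mpr ⟨i.val, hvI, ivalId i⟩) hc
    · intro hv
      by_contra hc
      obtain ⟨j, hjI, hji⟩ := h1.mp hc
      have hjlt : j < n := by have := hIb j hjI; omega
      have : i.val = j := by rw [← hji, ZMod.val_cast_of_lt hjlt]
      exact hv (this ▸ hjI)
  -- adjacency gives distance 1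
  have hadj : ∀ (i : ZMod n) (s t : Fin k), |f (i + 1, t) - f (i, s)| = 1 := by
    intro i s t
    have hA : (Cnk n k).Adj (i, s) (i + 1, t) := by
      rw [Cnk, SimpleGraph.fromRel_adj]
      refine ⟨?_, Or.inl rfl⟩
      intro h
      have h2 : i = i + 1 := congrArg Prod.fst h
      simp at h2
    have := hhom _ _ hA
    rw [abs_sub_comm] at this
    exact this
  -- layer m-1 is constant
  have hcm1 : LayerConst f (((m - 1 : ℕ) : ZMod n)) := by
    rw [hconst, ZMod.val_cast_of_lt (by omega)]
    intro h
    rcases Nat.eq_or_lt_of_le hm1 with h1 | h1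
    · have := hIb _ h; omega
    · exact hcons _ h (by rwa [Nat.sub_add_cancel hm1]) 
  -- Lemma B: the layers before and after layer m have the same (constant) value
  have hB : ∀ s, f (((m + 1 : ℕ) : ZMod n), s) = f (((m - 1 : ℕ) : ZMod n), s) := by
    have hncm : ¬ LayerConst f ((m : ZMod n)) := by
      rw [hconst, not_not, ZMod.val_cast_of_lt (by omega)]
      exact hmI
    obtain ⟨s0, t0, hst⟩ : ∃ s t, f ((m : ZMod n), s) ≠ f ((m : ZMod n), t) := by
      by_contra h; push_neg at h; exact hncm fun s t => h s t
    intro s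
    have e1 : ((m - 1 : ℕ) : ZMod n) + 1 = (m : ZMod n) := by
      rw [show ((1 : ZMod n)) = ((1 : ℕ) : ZMod n) by norm_cast, ← Nat.cast_add]
      congr 1; omega
    have e2 : (m : ZMod n) + 1 = ((m + 1 : ℕ) : ZMod n) := by push_cast; ring
    have d1 := hadj (((m - 1 : ℕ) : ZMod n)) s s0
    rw [e1] at d1
    have d2 := hadj (((m - 1 : ℕ) : ZMod n)) s t0
    rw [e1] at d2
    have d3 := hadj ((m : ZMod n)) s0 s
    rw [e2] at d3
    have d4 := hadj ((m : ZMod n)) t0 s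
    rw [e2] at d4
    have habs : ∀ x y : ℤ, |x - y| = 1 → x - y = 1 ∨ x - y = -1 := fun x y h =>
      (abs_eq (by norm_num)).mp h
    rcases habs _ _ d1 with h1 | h1 <;> rcases habs _ _ d2 with h2 | h2 <;>
      rcases habs _ _ d3 with h3 | h3 <;> rcases habs _ _ d4 with h4 | h4 <;> omega
  ext z
  simp only [RCset, Set.mem_setOf_eq]
  have mk : ∀ (i : ZMod n) (j : ZMod (n - 2)),
      (∀ s, fprime n k m f (j, s) = f (i, s)) → LayerConst f i → f (i, ⟨0, hk⟩) = z →
      (∃ j', LayerConst (fprime n k m f) j' ∧ fprime n k m f (j', ⟨0, hk⟩) = z) :=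
    fun i j hpt hc hv =>
      ⟨j, fun s t => by rw [hpt s, hpt t]; exact hc s t, by rw [hpt]; exact hv⟩
  constructor
  · rintro ⟨i, hci, rfl⟩
    have hvnI : i.val ∉ I := (hconst i).mp hci
    have hivlt : i.val < n := ZMod.val_lt i
    rcases Nat.lt_or_ge i.val m with hlt | hge
    · rcases Nat.lt_or_ge i.val (n - 2) with hlt2 | hge2
      · -- j = i.val
        refine mk i ((i.val : ZMod (n - 2))) ?_ hci rfl
        intro s
        simp only [fprime]
        rw [ZMod.val_cast_of_lt hlt2, if_pos hlt, ivalId i]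
      · -- i.val = n - 2, m = n - 1
        have hiv : i.val = n - 2 := by omega
        have hmn : m = n - 1 := by omega
        have hz0 : f (i, ⟨0, hk⟩) = 0 := by
          have hi : i = ((m - 1 : ℕ) : ZMod n) := by
            have e : (m - 1 : ℕ) = n - 2 := by omega
            rw [← ivalId i, hiv, e]
          have hcast : ((m + 1 : ℕ) : ZMod n) = 0 := by
            rw [hmn, show n - 1 + 1 = n by omega, ZMod.natCast_self]
          have := hB ⟨0, hk⟩
          rw [hcast, h0] at this
          rw [hi, ← this]
        refine mk (0 : ZMod n) (0 : ZMod (n - 2)) ?_ (fun s t => by rw [h0, h0]) ?_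
        · intro s
          simp only [fprime]
          rw [ZMod.val_zero, if_pos (by omega : 0 < m), Nat.cast_zero]
        · rw [h0, hz0]
    · rcases Nat.eq_or_lt_of_le hge with heq | hgt
      · exact absurd (heq ▸ hmI) hvnI
      rcases Nat.eq_or_lt_of_le hgt with heq1 | hgt1
      · -- i.val = m + 1
        have hiv : i.val = m + 1 := heq1.symm
        have hmlt : m + 1 ≤ n - 1 := by omega
        have hi : i = ((m + 1 : ℕ) : ZMod n) := by rw [← ivalId i, hiv]
        have hval : f (((m - 1 : ℕ) : ZMod n), ⟨0, hk⟩) = f (i, ⟨0, hk⟩) := by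
          rw [hi, hB]
        refine mk (((m - 1 : ℕ) : ZMod n)) (((m - 1 : ℕ) : ZMod (n - 2))) ?_ hcm1 hval
        intro s
        simp only [fprime]
        rw [ZMod.val_cast_of_lt (by omega : m - 1 < n - 2), if_pos (by omega : m - 1 < m)]
      · -- i.val ≥ m + 2
        refine mk i (((i.val - 2 : ℕ) : ZMod (n - 2))) ?_ hci rfl
        intro s
        simp only [fprime]
        rw [ZMod.val_cast_of_lt (by omega : i.val - 2 < n - 2),
          if_neg (by omega : ¬ i.val - 2 < m), show i.val - 2 + 2 = i.val by omega, ivalId i]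
  · rintro ⟨j, hcj, rfl⟩
    by_cases h : j.val < m
    · have hpt : ∀ s, fprime n k m f (j, s) = f (((j.val : ℕ) : ZMod n), s) := by
        intro s; simp only [fprime]; rw [if_pos h]
      exact ⟨((j.val : ℕ) : ZMod n), fun s t => by rw [← hpt s, ← hpt t]; exact hcj s t,
        (hpt _).symm⟩
    · have hpt : ∀ s, fprime n k m f (j, s) = f (((j.val + 2 : ℕ) : ZMod n), s) := by
        intro s; simp only [fprime]; rw [if_neg h]
      exact ⟨((j.val + 2 : ℕ) : ZMod n), fun s t => by rw [← hpt s, ← hpt t]; exact hcj s t,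
        (hpt _).symm⟩
end

section
/- Let n ≥ 4 be even, k ∈ ℕ, and ℓ ∈ [0, n/2]. Then the number of homomorphisms in H⁰_{n,k} with exactly ℓ non-constant layers is |H⁰_{n,k}(ℓ)| = C(n−ℓ, ℓ) · C(n−2ℓ, n/2−ℓ) · (2^k − 2)^ℓ, where C(a,b) denotes the binomial coefficient. -/
open Filter

/-- `H⁰_{n,k}(ℓ)`: homomorphisms in `H⁰_{n,k}` with exactly `ℓ` non-constant
layers. -/
def H0nkL (n k : ℕ) (hk : 0 < k) (ℓ : ℕ) : Set (ZMod n × Fin k → ℤ) :=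
  {f | f ∈ H0nk n k hk ∧ (NCset f).ncard = ℓ}

section A
variable {n k : ℕ}

lemma adj_layer (hn : 4 ≤ n) (i : ZMod n) (s t : Fin k) :
    (Cnk n k).Adj (i, s) (i + 1, t) := by
  haveI : Fact (1 < n) := ⟨by omega⟩
  refine ⟨?_, Or.inl rfl⟩
  intro h
  have h1 : i = i + 1 := congrArg Prod.fst h
  exact one_ne_zero (left_eq_add.mp h1)

lemma step_abs (hn : 4 ≤ n) {f : ZMod n × Fin k → ℤ} (hf : IsHomZ (Cnk n k) f)
    (i : ZMod n) (s t : Fin k) : |f (i, s) - f (i + 1, t)| = 1 :=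
  hf _ _ (adj_layer hn i s t)

lemma mid_unique {x y u u' : ℤ} (hxy : x ≠ y) (h1 : |x - u| = 1) (h2 : |y - u| = 1)
    (h3 : |x - u'| = 1) (h4 : |y - u'| = 1) : u = u' := by
  rw [abs_eq (by norm_num : (0:ℤ) ≤ 1)] at h1 h2 h3 h4
  omega

/-- If layer `i` is non-constant, then all values on layers `i+1` and `i-1`
coincide (they all equal a single number `c`). -/
lemma nonconst_neighbors (hn : 4 ≤ n) {f : ZMod n × Fin k → ℤ}
    (hf : IsHomZ (Cnk n k) f) {i : ZMod n} (h : ¬ LayerConst f i) :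
    ∃ c : ℤ, (∀ t, f (i + 1, t) = c) ∧ (∀ t, f (i - 1, t) = c) ∧
      (∀ s, |f (i, s) - c| = 1) := by
  simp only [LayerConst, not_forall] at h
  obtain ⟨s1, s2, hs⟩ := h
  refine ⟨f (i + 1, s1), ?_, ?_, fun s => step_abs hn hf i s s1⟩
  · intro t
    exact mid_unique hs (step_abs hn hf i s1 t) (step_abs hn hf i s2 t)
      (step_abs hn hf i s1 s1) (step_abs hn hf i s2 s1)
  · intro t
    have ha : ∀ s u, |f (i, s) - f (i - 1, u)| = 1 := by
      intro s u
      rw [abs_sub_comm]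
      have := step_abs hn hf (i - 1) u s
      simpa using this
    exact mid_unique hs (ha s1 t) (ha s2 t) (step_abs hn hf i s1 s1)
      (step_abs hn hf i s2 s1)

lemma nonconst_succ_const (hn : 4 ≤ n) {f : ZMod n × Fin k → ℤ}
    (hf : IsHomZ (Cnk n k) f) {i : ZMod n} (h : ¬ LayerConst f i) :
    LayerConst f (i + 1) := by
  obtain ⟨c, h1, _, _⟩ := nonconst_neighbors hn hf h
  intro s t; rw [h1 s, h1 t]

lemma nonconst_pred_const (hn : 4 ≤ n) {f : ZMod n × Fin k → ℤ}
    (hf : IsHomZ (Cnk n k) f) {i : ZMod n} (h : ¬ LayerConst f i) :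
    LayerConst f (i - 1) := by
  obtain ⟨c, _, h2, _⟩ := nonconst_neighbors hn hf h
  intro s t; rw [h2 s, h2 t]

end A


def ncF (N ℓ : ℕ) : Finset (Finset ℕ) :=
  (Finset.range N).powerset.filter (fun A => A.card = ℓ ∧ ∀ a ∈ A, a + 1 ∉ A)

lemma mem_ncF {N ℓ : ℕ} {A : Finset ℕ} :
    A ∈ ncF N ℓ ↔ A ⊆ Finset.range N ∧ A.card = ℓ ∧ ∀ a ∈ A, a + 1 ∉ A := by
  simp [ncF, and_assoc]

lemma ncF_zero (N : ℕ) : ncF N 0 = {∅} := by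
  ext A
  simp only [mem_ncF, Finset.mem_singleton]
  constructor
  · rintro ⟨-, h, -⟩; exact Finset.card_eq_zero.mp h
  · rintro rfl; simp

lemma ncF_empty {N ℓ : ℕ} (h : N < ℓ) : ncF N ℓ = ∅ := by
  ext A
  simp only [mem_ncF, Finset.notMem_empty, iff_false]
  rintro ⟨hsub, hcard, -⟩
  have := Finset.card_le_card hsub
  simp [hcard] at this
  omega

lemma ncF_one_one : ncF 1 1 = {{0}} := by
  ext A
  simp only [mem_ncF, Finset.mem_singleton]
  constructor
  · rintro ⟨hsub, hcard, -⟩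
    obtain ⟨a, rfl⟩ := Finset.card_eq_one.mp hcard
    have := hsub (Finset.mem_singleton_self a)
    simp at this
    simp [this]
  · rintro rfl
    refine ⟨by simp, by simp, by simp⟩

lemma ncF_rec (N ℓ : ℕ) :
    (ncF (N + 2) (ℓ + 1)).card = (ncF (N + 1) (ℓ + 1)).card + (ncF N ℓ).card := by
  rw [← Finset.card_filter_add_card_filter_not
      (s := ncF (N + 2) (ℓ + 1)) (p := fun A => N + 1 ∉ A)]
  congr 1
  · -- N+1 ∉ A case = ncF (N+1) (ℓ+1)
    congr 1
    ext A
    rw [Finset.mem_filter, mem_ncF, mem_ncF]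
    constructor
    · rintro ⟨⟨hsub, hc, hnc⟩, hmem⟩
      refine ⟨?_, hc, hnc⟩
      intro a ha
      have h1 := Finset.mem_range.mp (hsub ha)
      have h2 : a ≠ N + 1 := fun hx => hmem (hx ▸ ha)
      rw [Finset.mem_range]; omega
    · rintro ⟨hsub, hc, hnc⟩
      have h1 : N + 1 ∉ A := fun hc2 => by simpa using Finset.mem_range.mp (hsub hc2)
      refine ⟨⟨fun a ha => ?_, hc, hnc⟩, h1⟩
      have := Finset.mem_range.mp (hsub ha)
      rw [Finset.mem_range]; omega
  · -- N+1 ∈ A case ↦ ncF N ℓ via erase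
    apply Finset.card_bij' (fun A _ => A.erase (N + 1)) (fun B _ => insert (N + 1) B)
    · intro A hA
      rw [Finset.mem_filter] at hA
      exact Finset.insert_erase (not_not.mp hA.2)
    · intro B hB
      rw [mem_ncF] at hB
      have hN1 : N + 1 ∉ B := fun hc => by simpa using Finset.mem_range.mp (hB.1 hc)
      exact Finset.erase_insert hN1
    · intro A hA
      rw [Finset.mem_filter, mem_ncF] at hA
      obtain ⟨⟨hsub, hcard, hnc⟩, hmem'⟩ := hA
      have hmem : N + 1 ∈ A := not_not.mp hmem'
      rw [mem_ncF]
      refine ⟨?_, ?_, ?_⟩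
      · intro a ha
        rw [Finset.mem_erase] at ha
        obtain ⟨hne, haA⟩ := ha
        have h1 := Finset.mem_range.mp (hsub haA)
        have h2 : a ≠ N := by
          rintro rfl
          exact hnc a haA hmem
        rw [Finset.mem_range]; omega
      · rw [Finset.card_erase_of_mem hmem, hcard]; omega
      · intro a ha
        rw [Finset.mem_erase] at ha ⊢
        intro hc
        exact hnc a ha.2 hc.2
    · intro B hB
      rw [mem_ncF] at hB
      obtain ⟨hsub, hcard, hnc⟩ := hB
      have hN1 : N + 1 ∉ B := fun hc => by simpa using Finset.mem_range.mp (hsub hc)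
      rw [Finset.mem_filter, mem_ncF]
      refine ⟨⟨?_, ?_, ?_⟩, not_not.mpr (Finset.mem_insert_self _ _)⟩
      · intro a ha
        rw [Finset.mem_insert] at ha
        rcases ha with rfl | ha
        · simp
        · have := Finset.mem_range.mp (hsub ha); rw [Finset.mem_range]; omega
      · rw [Finset.card_insert_of_notMem hN1, hcard]
      · intro a ha
        rw [Finset.mem_insert] at ha
        rintro hc
        rw [Finset.mem_insert] at hc
        rcases ha with rfl | ha
        · rcases hc with hc | hc
          · omega
          · have := Finset.mem_range.mp (hsub hc); omega
        · have haN := Finset.mem_range.mp (hsub ha)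
          rcases hc with hc | hc
          · omega
          · exact hnc a ha hc

lemma ncF_card (N ℓ : ℕ) : (ncF N ℓ).card = (N + 1 - ℓ).choose ℓ := by
  induction N using Nat.strong_induction_on generalizing ℓ with
  | _ N ih =>
    match N, ℓ with
    | N, 0 => simp [ncF_zero]
    | 0, (ℓ+1) =>
      rw [ncF_empty (by omega), Finset.card_empty,
        Nat.choose_eq_zero_of_lt (by omega : 0 + 1 - (ℓ+1) < ℓ+1)]
    | 1, 1 => rw [ncF_one_one]; simp
    | 1, (ℓ+2) =>
      rw [ncF_empty (by omega), Finset.card_empty,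
        Nat.choose_eq_zero_of_lt (by omega : 1 + 1 - (ℓ+2) < ℓ+2)]
    | (N+2), (ℓ+1) =>
      rw [ncF_rec, ih (N+1) (by omega), ih N (by omega)]
      rcases Nat.lt_or_ge (N + 1) ℓ with h | h
      · rw [Nat.choose_eq_zero_of_lt (by omega), Nat.choose_eq_zero_of_lt (by omega),
          Nat.choose_eq_zero_of_lt (by omega)]
      · have h1 : N + 2 + 1 - (ℓ + 1) = (N + 1 - ℓ) + 1 := by omega
        have h2 : N + 1 + 1 - (ℓ + 1) = N + 1 - ℓ := by omega
        rw [h1, h2, Nat.choose_succ_succ']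
        omega


section C
variable {n : ℕ} [NeZero n]

def deltaF (S E : Finset (ZMod n)) (j : ZMod n) : ℤ :=
  if j + 1 ∈ S then 1 else if j ∈ S then -1 else if j ∈ E then 1 else -1

def wfun (S E : Finset (ZMod n)) (j : ℕ) : ℤ :=
  ∑ j' ∈ Finset.range j, deltaF S E (j' : ZMod n)

def vfun (S E : Finset (ZMod n)) (i : ZMod n) : ℤ := wfun S E i.val

def freeE (S : Finset (ZMod n)) : Finset (ZMod n) :=
  Finset.univ.filter (fun j => j ∉ S ∧ j + 1 ∉ S)

omit [NeZero n] in
lemma wfun_succ (S E : Finset (ZMod n)) (j : ℕ) :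
    wfun S E (j + 1) = wfun S E j + deltaF S E (j : ZMod n) :=
  Finset.sum_range_succ _ _

lemma card_shift (S : Finset (ZMod n)) :
    (Finset.univ.filter (fun j : ZMod n => j + 1 ∈ S)).card = S.card := by
  apply Finset.card_bij (fun j _ => j + 1)
  · intro a ha; simpa using (Finset.mem_filter.mp ha).2
  · intro a _ b _ h; exact add_right_cancel h
  · intro b hb; exact ⟨b - 1, by simp [hb], by ring⟩

lemma sum_deltaF (S E : Finset (ZMod n))
    (hE : E ⊆ freeE S) :
    ∑ i : ZMod n, deltaF S E i
      = 2 * (S.card + E.card : ℤ) - Fintype.card (ZMod n) := by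
  have hpt : ∀ i : ZMod n, deltaF S E i
      = 2 * (if (i + 1 ∈ S ∨ i ∈ E) then (1:ℤ) else 0) - 1 := by
    intro i
    unfold deltaF
    by_cases h1 : i + 1 ∈ S
    · simp [h1]
    · by_cases h2 : i ∈ S
      · have : i ∉ E := fun hc => ((Finset.mem_filter.mp (hE hc)).2.1 h2)
        simp [h1, h2, this]
      · by_cases h3 : i ∈ E <;> simp [h1, h2, h3]
  rw [Finset.sum_congr rfl (fun i _ => hpt i)]
  rw [Finset.sum_sub_distrib, ← Finset.mul_sum, Finset.sum_boole, Finset.sum_const]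
  have hdisj : Finset.univ.filter (fun i : ZMod n => i + 1 ∈ S ∨ i ∈ E)
      = Finset.univ.filter (fun i : ZMod n => i + 1 ∈ S)
        ∪ Finset.univ.filter (fun i : ZMod n => i ∈ E) := by
    rw [Finset.filter_or]
  have hd : Disjoint (Finset.univ.filter (fun i : ZMod n => i + 1 ∈ S))
      (Finset.univ.filter (fun i : ZMod n => i ∈ E)) := by
    rw [Finset.disjoint_filter]
    intro i _ h1 h2
    exact (Finset.mem_filter.mp (hE h2)).2.2 h1
  rw [hdisj, Finset.card_union_of_disjoint hd, card_shift, Finset.filter_univ_mem]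
  simp [Finset.card_univ]

end C

section C2
variable {n : ℕ} [NeZero n]

lemma cast_val_eq (i : ZMod n) : ((i.val : ℕ) : ZMod n) = i := by
  simp [ZMod.natCast_val, ZMod.cast_id]

lemma wfun_n_eq (S E : Finset (ZMod n)) :
    wfun S E n = ∑ i : ZMod n, deltaF S E i := by
  unfold wfun
  apply Finset.sum_nbij' (fun j : ℕ => (j : ZMod n)) (fun i : ZMod n => i.val)
  · intros; exact Finset.mem_univ _
  · intro a _; exact Finset.mem_range.mpr a.val_lt
  · intro a ha; exact ZMod.val_cast_of_lt (Finset.mem_range.mp ha)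
  · intro a _; exact cast_val_eq a
  · intros; rfl

/-- The combinatorial sum-zero lemma. -/
lemma wfun_n_zero (S E : Finset (ZMod n)) (hn2 : n % 2 = 0)
    {ℓ : ℕ} (hS : S.card = ℓ) (hE : E ⊆ freeE S) (hEc : E.card = n / 2 - ℓ)
    (hℓ : ℓ ≤ n / 2) : wfun S E n = 0 := by
  rw [wfun_n_eq, sum_deltaF S E hE, hS, hEc, ZMod.card]
  have : (2:ℤ) * ((ℓ : ℤ) + ((n / 2 - ℓ : ℕ) : ℤ)) = n := by
    push_cast [Nat.cast_sub hℓ]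
    omega
  omega

/-- Recurrence for `vfun`, valid all the way around the cycle provided the
total sum vanishes. -/
lemma vfun_succ (S E : Finset (ZMod n)) (hz : wfun S E n = 0) (i : ZMod n) :
    vfun S E (i + 1) = vfun S E i + deltaF S E i := by
  unfold vfun
  rcases Nat.lt_or_ge (i.val + 1) n with h | h
  · have h1 : (i + 1 : ZMod n) = ((i.val + 1 : ℕ) : ZMod n) := by
      push_cast [cast_val_eq]; ring
    rw [h1, ZMod.val_cast_of_lt h, wfun_succ]
    rw [cast_val_eq]
  · have hv : i.val + 1 = n := by have := i.val_lt; omega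
    have h1 : (i + 1 : ZMod n) = 0 := by
      have : ((i.val + 1 : ℕ) : ZMod n) = ((n : ℕ) : ZMod n) := by rw [hv]
      rw [ZMod.natCast_self] at this
      rw [← this]; push_cast [cast_val_eq]; ring
    rw [h1]
    have h2 : wfun S E (i.val + 1) = wfun S E i.val + deltaF S E i := by
      rw [wfun_succ, cast_val_eq]
    rw [hv] at h2
    have h3 : ZMod.val (0 : ZMod n) = 0 := ZMod.val_zero
    rw [h3]
    have h0 : wfun S E 0 = 0 := Finset.sum_range_zero _
    omega

omit [NeZero n] in
lemma vfun_zero (S E : Finset (ZMod n)) : vfun S E 0 = 0 := by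
  unfold vfun
  rw [ZMod.val_zero]
  simp [wfun]

/-- Uniqueness: any function satisfying the recurrence with value 0 at 0
equals `vfun`; moreover the total sum vanishes. -/
lemma eq_vfun_of_rec (S E : Finset (ZMod n)) (r : ZMod n → ℤ) (hr0 : r 0 = 0)
    (hrec : ∀ i, r (i + 1) = r i + deltaF S E i) :
    (∀ j : ℕ, r (j : ZMod n) = wfun S E j) ∧ wfun S E n = 0 ∧
      ∀ i, r i = vfun S E i := by
  have key : ∀ j : ℕ, r (j : ZMod n) = wfun S E j := by
    intro j
    induction j with
    | zero => simpa [wfun] using hr0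
    | succ m ih =>
      have : ((m + 1 : ℕ) : ZMod n) = (m : ZMod n) + 1 := by push_cast; ring
      rw [this, hrec, ih, wfun_succ]
  refine ⟨key, ?_, ?_⟩
  · have := key n
    rw [ZMod.natCast_self, hr0] at this
    exact this.symm
  · intro i
    have := key i.val
    rw [cast_val_eq] at this
    exact this

end C2

section S
variable {n : ℕ} [NeZero n]

def Sset (n ℓ : ℕ) [NeZero n] : Finset (Finset (ZMod n)) :=
  Finset.univ.filter (fun S => 0 ∉ S ∧ (∀ i ∈ S, i + 1 ∉ S) ∧ S.card = ℓ)

lemma mem_Sset {ℓ : ℕ} {S : Finset (ZMod n)} :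
    S ∈ Sset n ℓ ↔ 0 ∉ S ∧ (∀ i ∈ S, i + 1 ∉ S) ∧ S.card = ℓ := by
  simp [Sset]

lemma val_pos_of_mem {S : Finset (ZMod n)} (h0 : 0 ∉ S) {x : ZMod n} (hx : x ∈ S) :
    1 ≤ x.val := by
  rcases Nat.eq_zero_or_pos x.val with h | h
  · exfalso
    have : x = 0 := by
      have := cast_val_eq x
      rw [h] at this
      simpa using this.symm
    exact h0 (this ▸ hx)
  · exact h

lemma Sset_card (hn : 4 ≤ n) (ℓ : ℕ) : (Sset n ℓ).card = (n - ℓ).choose ℓ := by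
  have h1 : (Sset n ℓ).card = (ncF (n - 1) ℓ).card := by
    apply Finset.card_nbij' (fun S => S.image (fun x : ZMod n => x.val - 1))
      (fun A => A.image (fun a : ℕ => ((a + 1 : ℕ) : ZMod n)))
    · intro S hS
      rw [Finset.mem_coe, mem_Sset] at hS
      obtain ⟨h0, hind, hcard⟩ := hS
      rw [Finset.mem_coe, mem_ncF]
      refine ⟨?_, ?_, ?_⟩
      · intro a ha
        rw [Finset.mem_image] at ha
        obtain ⟨x, hx, rfl⟩ := ha
        have hv := x.val_lt
        have h1 := val_pos_of_mem h0 hx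
        rw [Finset.mem_range]; omega
      · rw [Finset.card_image_of_injOn, hcard]
        intro x hx y hy hxy
        simp only at hxy
        have hx1 := val_pos_of_mem h0 hx
        have hy1 := val_pos_of_mem h0 hy
        have : x.val = y.val := by omega
        rw [← cast_val_eq x, ← cast_val_eq y, this]
      · intro a ha hb
        rw [Finset.mem_image] at ha hb
        obtain ⟨x, hx, hxe⟩ := ha
        obtain ⟨y, hy, hye⟩ := hb
        have hx1 := val_pos_of_mem h0 hx
        have hy1 := val_pos_of_mem h0 hy
        have hyx : y.val = x.val + 1 := by omega
        have : y = x + 1 := by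
          rw [← cast_val_eq y, hyx]
          push_cast [cast_val_eq]
          ring
        exact hind x hx (this ▸ hy)
    · intro A hA
      rw [Finset.mem_coe, mem_ncF] at hA
      obtain ⟨hsub, hcard, hnc⟩ := hA
      have hlt : ∀ a ∈ A, a + 1 < n := by
        intro a ha
        have := Finset.mem_range.mp (hsub ha)
        omega
      rw [Finset.mem_coe, mem_Sset]
      refine ⟨?_, ?_, ?_⟩
      · intro hc
        rw [Finset.mem_image] at hc
        obtain ⟨a, ha, hae⟩ := hc
        have : ((a + 1 : ℕ) : ZMod n).val = a + 1 := ZMod.val_cast_of_lt (hlt a ha)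
        rw [hae] at this
        simp at this
      · intro x hx hc
        rw [Finset.mem_image] at hx hc
        obtain ⟨a, ha, hae⟩ := hx
        obtain ⟨b, hb, hbe⟩ := hc
        rcases Nat.lt_or_ge (a + 2) n with h2 | h2
        · have hv : ((b + 1 : ℕ) : ZMod n).val = b + 1 := ZMod.val_cast_of_lt (hlt b hb)
          have : ((b + 1 : ℕ) : ZMod n) = ((a + 2 : ℕ) : ZMod n) := by
            rw [hbe, ← hae]; push_cast; ring
          rw [this, ZMod.val_cast_of_lt h2] at hv
          have : b = a + 1 := by omega
          exact hnc a ha (this ▸ hb)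
        · have ha2 : a + 2 = n := by have := hlt a ha; omega
          have : ((b + 1 : ℕ) : ZMod n) = ((a + 2 : ℕ) : ZMod n) := by
            rw [hbe, ← hae]; push_cast; ring
          rw [ha2, ZMod.natCast_self] at this
          have hv : ((b + 1 : ℕ) : ZMod n).val = b + 1 := ZMod.val_cast_of_lt (hlt b hb)
          rw [this] at hv
          simp at hv
      · rw [Finset.card_image_of_injOn, hcard]
        intro a ha b hb hab
        have h1 : ((a + 1 : ℕ) : ZMod n).val = a + 1 := ZMod.val_cast_of_lt (hlt a ha)
        have h2 : ((b + 1 : ℕ) : ZMod n).val = b + 1 := ZMod.val_cast_of_lt (hlt b hb)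
        simp only at hab
        rw [hab] at h1
        omega
    · intro S hS
      rw [Finset.mem_coe, mem_Sset] at hS
      obtain ⟨h0, hind, hcard⟩ := hS
      dsimp only
      rw [Finset.image_image]
      have : ∀ x ∈ S, ((x.val - 1 + 1 : ℕ) : ZMod n) = x := by
        intro x hx
        have := val_pos_of_mem h0 hx
        have h2 : x.val - 1 + 1 = x.val := by omega
        rw [h2, cast_val_eq]
      calc S.image _ = S.image id := Finset.image_congr (fun x hx => this x hx)
        _ = S := Finset.image_id
    · intro A hA
      rw [Finset.mem_coe, mem_ncF] at hA
      obtain ⟨hsub, hcard, hnc⟩ := hA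
      dsimp only
      rw [Finset.image_image]
      have : ∀ a ∈ A, (((a + 1 : ℕ) : ZMod n).val - 1 : ℕ) = a := by
        intro a ha
        have h1 : a + 1 < n := by have := Finset.mem_range.mp (hsub ha); omega
        rw [ZMod.val_cast_of_lt h1]
        omega
      calc A.image _ = A.image id := Finset.image_congr (fun a ha => this a ha)
        _ = A := Finset.image_id
  rw [h1, ncF_card]
  congr 1
  omega

lemma freeE_card {ℓ : ℕ} {S : Finset (ZMod n)} (hS : S ∈ Sset n ℓ) :
    (freeE S).card = n - 2 * ℓ := by
  rw [mem_Sset] at hS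
  obtain ⟨h0, hind, hcard⟩ := hS
  have hsplit := Finset.card_filter_add_card_filter_not
    (s := (Finset.univ : Finset (ZMod n))) (p := fun j => j ∈ S ∨ j + 1 ∈ S)
  have h2 : (Finset.univ.filter (fun j : ZMod n => ¬(j ∈ S ∨ j + 1 ∈ S))) = freeE S := by
    ext j; simp [freeE, not_or]
  have h3 : (Finset.univ.filter (fun j : ZMod n => j ∈ S ∨ j + 1 ∈ S)).card = 2 * ℓ := by
    rw [Finset.filter_or, Finset.card_union_of_disjoint, Finset.filter_univ_mem,
      card_shift, hcard]
    · ring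
    · rw [Finset.disjoint_filter]
      intro i _ h1 hc
      exact hind i h1 hc
  rw [h2, h3] at hsplit
  have h4 : (Finset.univ : Finset (ZMod n)).card = n := by
    rw [Finset.card_univ, ZMod.card]
  omega

end S

section D
variable {n : ℕ} [NeZero n] (k : ℕ)

def nonconstB (k : ℕ) : Finset (Fin k → Bool) :=
  Finset.univ.filter (fun g => ∃ s t, g s ≠ g t)

lemma card_nonconstB (hk : 0 < k) : (nonconstB k).card = 2 ^ k - 2 := by
  have hsplit := Finset.card_filter_add_card_filter_not
    (s := (Finset.univ : Finset (Fin k → Bool))) (p := fun g => ∃ s t, g s ≠ g t)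
  have h2 : (Finset.univ.filter (fun g : Fin k → Bool => ¬∃ s t, g s ≠ g t))
      = {fun _ => false, fun _ => true} := by
    ext g
    simp only [Finset.mem_filter, Finset.mem_univ, true_and, not_exists, not_not,
      Finset.mem_insert, Finset.mem_singleton]
    constructor
    · intro h
      rcases Bool.eq_false_or_eq_true (g ⟨0, hk⟩) with hb | hb
      · right; funext s; rw [h s ⟨0, hk⟩, hb]
      · left; funext s; rw [h s ⟨0, hk⟩, hb]
    · rintro (rfl | rfl) <;> simp
  have h3 : ({fun _ => false, fun _ => true} : Finset (Fin k → Bool)).card = 2 := by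
    rw [Finset.card_insert_of_notMem, Finset.card_singleton]
    simp only [Finset.mem_singleton]
    intro hc
    have := congrFun hc ⟨0, hk⟩
    simp at this
  have h4 : (Finset.univ : Finset (Fin k → Bool)).card = 2 ^ k := by
    simp [Finset.card_univ]
  rw [h2, h3, h4] at hsplit
  show (Finset.univ.filter (fun g : Fin k → Bool => ∃ s t, g s ≠ g t)).card = 2 ^ k - 2
  exact Nat.eq_sub_of_add_eq hsplit

def Phiset (k : ℕ) (S : Finset (ZMod n)) : Finset (ZMod n → Fin k → Bool) :=
  Fintype.piFinset (fun i => if i ∈ S then nonconstB k else {fun _ => false})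

lemma mem_Phiset {S : Finset (ZMod n)} {φ : ZMod n → Fin k → Bool} :
    φ ∈ Phiset k S ↔ ∀ i, (i ∈ S → (∃ s t, φ i s ≠ φ i t)) ∧
      (i ∉ S → φ i = fun _ => false) := by
  rw [Phiset, Fintype.mem_piFinset]
  constructor
  · intro h i
    constructor
    · intro hi
      have := h i
      rw [if_pos hi] at this
      simpa [nonconstB] using this
    · intro hi
      have := h i
      rw [if_neg hi] at this
      simpa using this
  · intro h i
    by_cases hi : i ∈ S
    · rw [if_pos hi]
      simpa [nonconstB] using (h i).1 hi
    · rw [if_neg hi]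
      simpa using (h i).2 hi

lemma card_Phiset (hk : 0 < k) {ℓ : ℕ} {S : Finset (ZMod n)} (hcard : S.card = ℓ) :
    (Phiset k S).card = (2 ^ k - 2) ^ ℓ := by
  rw [Phiset, Fintype.card_piFinset]
  have : ∀ i : ZMod n, (if i ∈ S then nonconstB k else {fun _ => false}).card
      = if i ∈ S then 2 ^ k - 2 else 1 := by
    intro i
    by_cases hi : i ∈ S <;> simp [hi, card_nonconstB k hk]
  rw [Finset.prod_congr rfl (fun i _ => this i)]
  rw [Finset.prod_ite, Finset.prod_const, Finset.prod_const_one, mul_one,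
    Finset.filter_univ_mem, hcard]

def Dset (n k ℓ : ℕ) [NeZero n] :
    Finset (Finset (ZMod n) × Finset (ZMod n) × (ZMod n → Fin k → Bool)) :=
  (Sset n ℓ).biUnion (fun S => {S} ×ˢ ((freeE S).powersetCard (n / 2 - ℓ) ×ˢ Phiset k S))

lemma mem_Dset {ℓ : ℕ} {p : Finset (ZMod n) × Finset (ZMod n) × (ZMod n → Fin k → Bool)} :
    p ∈ Dset n k ℓ ↔ p.1 ∈ Sset n ℓ ∧ p.2.1 ∈ (freeE p.1).powersetCard (n / 2 - ℓ)
      ∧ p.2.2 ∈ Phiset k p.1 := by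
  rw [Dset, Finset.mem_biUnion]
  constructor
  · rintro ⟨S, hS, hp⟩
    rw [Finset.mem_product] at hp
    obtain ⟨h1, h2⟩ := hp
    rw [Finset.mem_singleton] at h1
    subst h1
    rw [Finset.mem_product] at h2
    exact ⟨hS, h2.1, h2.2⟩
  · rintro ⟨h1, h2, h3⟩
    refine ⟨p.1, h1, ?_⟩
    rw [Finset.mem_product, Finset.mem_product]
    exact ⟨Finset.mem_singleton_self _, h2, h3⟩

lemma card_Dset (hn : 4 ≤ n) (hk : 0 < k) {ℓ : ℕ} :
    (Dset n k ℓ).card = (n - ℓ).choose ℓ * (n - 2 * ℓ).choose (n / 2 - ℓ) * (2 ^ k - 2) ^ ℓ := by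
  rw [Dset, Finset.card_biUnion]
  · have : ∀ S ∈ Sset n ℓ,
        ({S} ×ˢ ((freeE S).powersetCard (n / 2 - ℓ) ×ˢ Phiset k S)).card
        = (n - 2 * ℓ).choose (n / 2 - ℓ) * (2 ^ k - 2) ^ ℓ := by
      intro S hS
      rw [Finset.card_product, Finset.card_product, Finset.card_singleton, one_mul,
        Finset.card_powersetCard, freeE_card hS,
        card_Phiset k hk (by simpa [Sset] using (Finset.mem_filter.mp hS).2.2.2)]
    rw [Finset.sum_congr rfl this, Finset.sum_const, Sset_card hn, smul_eq_mul, mul_assoc]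
  · intro S hS T hT hST
    dsimp only [Function.onFun]
    rw [Finset.disjoint_left]
    rintro ⟨a, b, c⟩ h1 h2
    rw [Finset.mem_product] at h1 h2
    rw [Finset.mem_singleton] at h1 h2
    exact hST (h1.1 ▸ h2.1 ▸ rfl)
end D


section E
variable {n k : ℕ} [NeZero n]

def constructF (S E : Finset (ZMod n)) (φ : ZMod n → Fin k → Bool) :
    ZMod n × Fin k → ℤ :=
  fun p => if p.1 ∈ S then (if φ p.1 p.2 then vfun S E p.1 else vfun S E p.1 - 2)
    else vfun S E p.1

lemma constructF_notmem {S E : Finset (ZMod n)} {φ : ZMod n → Fin k → Bool}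
    {i : ZMod n} (hi : i ∉ S) (s : Fin k) :
    constructF S E φ (i, s) = vfun S E i := by
  simp [constructF, hi]

lemma constructF_mem {S E : Finset (ZMod n)} {φ : ZMod n → Fin k → Bool}
    {i : ZMod n} (hi : i ∈ S) (s : Fin k) :
    constructF S E φ (i, s)
      = if φ i s then vfun S E i else vfun S E i - 2 := by
  simp [constructF, hi]

section Efacts
variable (hn : 4 ≤ n) (hne : Even n) (hk : 0 < k) {ℓ : ℕ} (hℓ : ℓ ≤ n / 2)
variable {S E : Finset (ZMod n)} {φ : ZMod n → Fin k → Bool}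
  (hd : (S, E, φ) ∈ Dset n k ℓ)

include hne hℓ hd in
lemma hz_of_mem : wfun S E n = 0 := by
  rw [mem_Dset] at hd
  obtain ⟨hS, hE, hφ⟩ := hd
  rw [mem_Sset] at hS
  rw [Finset.mem_powersetCard] at hE
  exact wfun_n_zero S E (Nat.even_iff.mp hne) hS.2.2 hE.1 hE.2 hℓ

include hne hℓ hd in
lemma vrec_of_mem : ∀ i, vfun S E (i + 1) = vfun S E i + deltaF S E i :=
  vfun_succ S E (hz_of_mem hne hℓ hd)

include hn hne hℓ hd in
lemma key_step : ∀ (i : ZMod n) (s t : Fin k),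
    |constructF S E φ (i, s) - constructF S E φ (i + 1, t)| = 1 := by
  intro i s t
  have hrec := vrec_of_mem hne hℓ hd
  rw [mem_Dset] at hd
  obtain ⟨hS, hE, hφ⟩ := hd
  rw [mem_Sset] at hS
  rw [Finset.mem_powersetCard] at hE
  obtain ⟨hS0, hind, hScard⟩ := hS
  by_cases hi : i ∈ S
  · have hi1 : i + 1 ∉ S := hind i hi
    have hv : vfun S E (i + 1) = vfun S E i - 1 := by
      rw [hrec i]
      simp only [deltaF, if_neg hi1, if_pos hi]
      ring
    rw [constructF_mem hi, constructF_notmem hi1, hv]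
    rw [abs_eq (by norm_num : (0:ℤ) ≤ 1)]
    generalize vfun S E i = A
    rcases Bool.eq_false_or_eq_true (φ i s) with hb | hb <;> simp [hb] <;> omega
  · by_cases hi1 : i + 1 ∈ S
    · have hv : vfun S E (i + 1) = vfun S E i + 1 := by
        rw [hrec i]
        simp only [deltaF, if_pos hi1]
      rw [constructF_notmem hi, constructF_mem hi1, hv]
      rw [abs_eq (by norm_num : (0:ℤ) ≤ 1)]
      generalize vfun S E i = A
      rcases Bool.eq_false_or_eq_true (φ (i+1) t) with hb | hb <;> simp [hb] <;> omega
    · have hv : vfun S E (i + 1) = vfun S E i + (if i ∈ E then 1 else -1) := by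
        rw [hrec i]
        simp only [deltaF, if_neg hi1, if_neg hi]
      rw [constructF_notmem hi, constructF_notmem hi1, hv]
      rw [abs_eq (by norm_num : (0:ℤ) ≤ 1)]
      generalize vfun S E i = A
      rcases em (i ∈ E) with hb | hb <;> simp [hb] <;> omega

include hn hne hℓ hd in
lemma NCset_constructF : NCset (constructF S E φ) = (↑S : Set (ZMod n)) := by
  have hd' := hd
  rw [mem_Dset] at hd'
  obtain ⟨hS, hE, hφ⟩ := hd'
  rw [mem_Sset] at hS
  obtain ⟨hS0, hind, hScard⟩ := hS
  rw [mem_Phiset _] at hφ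
  ext i
  simp only [NCset, Set.mem_setOf_eq, Finset.coe_sort_coe, Finset.mem_coe]
  constructor
  · intro h
    by_contra hi
    exact h (fun s t => by rw [constructF_notmem hi, constructF_notmem hi])
  · intro hi hconst
    obtain ⟨s, t, hst⟩ := (hφ i).1 hi
    have := hconst s t
    rw [constructF_mem hi, constructF_mem hi] at this
    rcases Bool.eq_false_or_eq_true (φ i s) with hb | hb <;>
      rcases Bool.eq_false_or_eq_true (φ i t) with hb' | hb' <;>
      simp [hb, hb'] at this hst <;> omega

include hn hne hk hℓ hd in
lemma constructF_mem_H0nkL : constructF S E φ ∈ H0nkL n k hk ℓ := by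
  have hd' := hd
  rw [mem_Dset] at hd'
  obtain ⟨hS, hE, hφ⟩ := hd'
  rw [mem_Sset] at hS
  obtain ⟨hS0, hind, hScard⟩ := hS
  have hzero : ∀ s : Fin k, constructF S E φ (0, s) = 0 := by
    intro s
    rw [constructF_notmem hS0, vfun_zero]
  refine ⟨⟨⟨?_, hzero _⟩, hzero⟩, ?_⟩
  · intro a b hadj
    rw [Cnk, SimpleGraph.fromRel_adj] at hadj
    obtain ⟨-, h | h⟩ := hadj
    · obtain ⟨i, s⟩ := a
      obtain ⟨j, t⟩ := b
      simp only at h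
      subst h
      exact key_step hn hne hℓ hd i s t
    · obtain ⟨i, s⟩ := a
      obtain ⟨j, t⟩ := b
      simp only at h
      subst h
      rw [abs_sub_comm]
      exact key_step hn hne hℓ hd j t s
  · rw [NCset_constructF hn hne hℓ hd, Set.ncard_coe_finset, hScard]

include hn hne hk hℓ in
lemma construct_injOn :
    Set.InjOn (fun p : Finset (ZMod n) × Finset (ZMod n) × (ZMod n → Fin k → Bool) =>
      constructF p.1 p.2.1 p.2.2) ↑(Dset n k ℓ) := by
  rintro ⟨S, E, φ⟩ hp ⟨S', E', φ'⟩ hq heq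
  simp only [Finset.mem_coe] at hp hq
  simp only at heq
  -- S = S'
  have hSS : S = S' := by
    apply Finset.coe_injective
    rw [← NCset_constructF hn hne hℓ hp, ← NCset_constructF hn hne hℓ hq, heq]
  subst hSS
  have hp' := hp
  have hq' := hq
  rw [mem_Dset] at hp' hq'
  obtain ⟨hS1, hE1, hφ1⟩ := hp'
  obtain ⟨-, hE2, hφ2⟩ := hq'
  dsimp only at hS1 hE1 hE2 hφ1 hφ2
  rw [Finset.mem_powersetCard] at hE1 hE2
  have hrec1 := vrec_of_mem hne hℓ hp
  have hrec2 := vrec_of_mem hne hℓ hq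
  set s0 : Fin k := ⟨0, hk⟩
  have hdiff : ∀ (F : Finset (ZMod n)) (ψ : ZMod n → Fin k → Bool),
      (S, F, ψ) ∈ Dset n k ℓ → ∀ j ∈ freeE S,
      constructF S F ψ (j + 1, s0) - constructF S F ψ (j, s0)
        = if j ∈ F then 1 else -1 := by
    intro F ψ hmem j hj
    have hrec := vrec_of_mem hne hℓ hmem
    rw [freeE, Finset.mem_filter] at hj
    obtain ⟨-, hj1, hj2⟩ := hj
    rw [constructF_notmem hj1, constructF_notmem hj2, hrec j, deltaF,
      if_neg hj2, if_neg hj1]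
    ring
  have hEE : E = E' := by
    ext j
    constructor
    · intro hj
      have hjf : j ∈ freeE S := hE1.1 hj
      have d1 := hdiff E φ hp j hjf
      have d2 := hdiff E' φ' hq j hjf
      rw [heq] at d1
      rw [if_pos hj] at d1
      rw [d1] at d2
      by_contra hc
      rw [if_neg hc] at d2
      omega
    · intro hj
      have hjf : j ∈ freeE S := hE2.1 hj
      have d1 := hdiff E φ hp j hjf
      have d2 := hdiff E' φ' hq j hjf
      rw [heq] at d1
      rw [if_pos hj] at d2
      rw [d2] at d1
      by_contra hc
      rw [if_neg hc] at d1
      omega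
  subst hEE
  have hφφ : φ = φ' := by
    rw [mem_Phiset _] at hφ1 hφ2
    funext i s
    by_cases hi : i ∈ S
    · have e1 : constructF S E φ (i, s) = if φ i s then vfun S E i else vfun S E i - 2 :=
        constructF_mem hi s
      have e2 : constructF S E φ' (i, s) = if φ' i s then vfun S E i else vfun S E i - 2 :=
        constructF_mem hi s
      rw [heq, e2] at e1
      rcases Bool.eq_false_or_eq_true (φ i s) with hb | hb <;>
        rcases Bool.eq_false_or_eq_true (φ' i s) with hb' | hb' <;>
        rw [hb, hb'] <;> rw [hb, hb'] at e1 <;> simp at e1 ⊢ <;> omega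
    · simp only [(hφ1 i).2 hi, (hφ2 i).2 hi]
  subst hφφ
  rfl

instance layerConstDec {n' k' : ℕ} (f : ZMod n' × Fin k' → ℤ) (i : ZMod n') :
    Decidable (LayerConst f i) :=
  decidable_of_iff (∀ s t, f (i, s) = f (i, t)) Iff.rfl

include hn hne hk hℓ in
lemma construct_surj (f : ZMod n × Fin k → ℤ) (hf : f ∈ H0nkL n k hk ℓ) :
    ∃ p ∈ Dset n k ℓ, constructF p.1 p.2.1 p.2.2 = f := by
  obtain ⟨⟨⟨hhom, -⟩, hzero⟩, hncard⟩ := hf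
  set s0 : Fin k := ⟨0, hk⟩ with hs0
  set Sf : Finset (ZMod n) := Finset.univ.filter (fun i => ¬ LayerConst f i) with hSfdef
  have hSf : ∀ i, i ∈ Sf ↔ ¬ LayerConst f i := by
    intro i; rw [hSfdef]; simp
  have h0 : (0 : ZMod n) ∉ Sf := by
    rw [hSf, not_not]
    intro s t
    rw [hzero s, hzero t]
  have hind : ∀ i ∈ Sf, i + 1 ∉ Sf := by
    intro i hi hc
    exact (hSf _).1 hc (nonconst_succ_const hn hhom ((hSf i).1 hi))
  have hpred : ∀ i, i + 1 ∈ Sf → i ∉ Sf := by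
    intro i hi hc
    have := nonconst_pred_const hn hhom ((hSf _).1 hi)
    have he : i + 1 - 1 = i := by ring
    rw [he] at this
    exact (hSf i).1 hc this
  have hNC : NCset f = ↑Sf := by
    ext i
    simp only [NCset, Set.mem_setOf_eq, Finset.mem_coe, hSf]
  have hcard : Sf.card = ℓ := by
    rw [hNC, Set.ncard_coe_finset] at hncard
    exact hncard
  set Ef : Finset (ZMod n) := (freeE Sf).filter (fun j => f (j + 1, s0) = f (j, s0) + 1)
    with hEfdef
  have hEfsub : Ef ⊆ freeE Sf := Finset.filter_subset _ _
  have hEfmem : ∀ j, j ∈ Ef ↔ (j ∈ freeE Sf ∧ f (j + 1, s0) = f (j, s0) + 1) := by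
    intro j; rw [hEfdef]; simp
  set rv : ZMod n → ℤ := fun i => if i ∈ Sf then f (i + 1, s0) + 1 else f (i, s0)
    with hrvdef
  have hr0 : rv 0 = 0 := by
    rw [hrvdef]
    simp only [if_neg h0]
    exact hzero s0
  have hrec : ∀ i, rv (i + 1) = rv i + deltaF Sf Ef i := by
    intro i
    by_cases hi1 : i + 1 ∈ Sf
    · have hi : i ∉ Sf := hpred i hi1
      obtain ⟨c, hc1, hc2, -⟩ := nonconst_neighbors hn hhom ((hSf _).1 hi1)
      have he : i + 1 - 1 = i := by ring
      rw [he] at hc2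
      rw [hrvdef]
      simp only [if_pos hi1, if_neg hi]
      rw [hc1 s0, hc2 s0, deltaF, if_pos hi1]
    · by_cases hi : i ∈ Sf
      · rw [hrvdef]
        simp only [if_pos hi, if_neg hi1]
        rw [deltaF, if_neg hi1, if_pos hi]
        ring
      · have hfree : i ∈ freeE Sf := by
          rw [freeE, Finset.mem_filter]
          exact ⟨Finset.mem_univ _, hi, hi1⟩
        rw [hrvdef]
        simp only [if_neg hi, if_neg hi1]
        rw [deltaF, if_neg hi1, if_neg hi]
        by_cases hE : f (i + 1, s0) = f (i, s0) + 1
        · have : i ∈ Ef := (hEfmem i).2 ⟨hfree, hE⟩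
          rw [if_pos this, hE]
        · have hni : i ∉ Ef := fun hc => hE ((hEfmem i).1 hc).2
          rw [if_neg hni]
          have habs := step_abs hn hhom i s0 s0
          rw [abs_eq (by norm_num : (0:ℤ) ≤ 1)] at habs
          omega
  obtain ⟨hwkey, hwzero, hveq⟩ := eq_vfun_of_rec Sf Ef rv hr0 hrec
  have hEcard : Ef.card = n / 2 - ℓ := by
    have hsum := sum_deltaF Sf Ef hEfsub
    rw [wfun_n_eq] at hwzero
    rw [hwzero, ZMod.card, hcard] at hsum
    have hev : n % 2 = 0 := Nat.even_iff.mp hne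
    omega
  set φf : ZMod n → Fin k → Bool :=
    fun i s => if i ∈ Sf then decide (f (i, s) = f (i + 1, s0) + 1) else false
    with hφfdef
  have hvtop : ∀ i ∈ Sf, vfun Sf Ef i = f (i + 1, s0) + 1 := by
    intro i hi
    rw [← hveq i, hrvdef]
    simp only [if_pos hi]
  refine ⟨(Sf, Ef, φf), ?_, ?_⟩
  · rw [mem_Dset]
    refine ⟨mem_Sset.mpr ⟨h0, hind, hcard⟩,
      Finset.mem_powersetCard.mpr ⟨hEfsub, hEcard⟩, (mem_Phiset _).mpr ?_⟩
    intro i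
    constructor
    · intro hi
      have hnc := (hSf i).1 hi
      simp only [LayerConst, not_forall] at hnc
      obtain ⟨s, t, hst⟩ := hnc
      obtain ⟨c, hc1, -, habs⟩ := nonconst_neighbors hn hhom ((hSf i).1 hi)
      have hcs0 : f (i + 1, s0) = c := hc1 s0
      have h1 := habs s
      have h2 := habs t
      rw [abs_eq (by norm_num : (0:ℤ) ≤ 1)] at h1 h2
      refine ⟨s, t, ?_⟩
      rw [hφfdef]
      simp only [if_pos hi, hcs0, ne_eq, decide_eq_decide]
      omega
    · intro hi
      funext s
      rw [hφfdef]
      simp only [if_neg hi]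
  · funext p
    obtain ⟨i, s⟩ := p
    by_cases hi : i ∈ Sf
    · rw [constructF_mem hi, hvtop i hi]
      obtain ⟨c, hc1, -, habs⟩ := nonconst_neighbors hn hhom ((hSf i).1 hi)
      have hcs0 : f (i + 1, s0) = c := hc1 s0
      have h1 := habs s
      rw [abs_eq (by norm_num : (0:ℤ) ≤ 1)] at h1
      rw [hφfdef]
      simp only [if_pos hi, hcs0]
      by_cases hv : f (i, s) = c + 1
      · rw [if_pos (by simp [hv])]
        omega
      · rw [if_neg (by simp [hv])]
        omega
    · rw [constructF_notmem hi, ← hveq i, hrvdef]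
      simp only [if_neg hi]
      have hconst : LayerConst f i := not_not.mp (fun hc => hi ((hSf i).2 hc))
      exact hconst s0 s

end Efacts
end E

theorem stmt13 (n k : ℕ) (hn : 4 ≤ n) (hne : Even n) (hk : 0 < k)
    (ℓ : ℕ) (hℓ : ℓ ≤ n / 2) :
    (H0nkL n k hk ℓ).ncard
      = (n - ℓ).choose ℓ * (n - 2 * ℓ).choose (n / 2 - ℓ) * (2 ^ k - 2) ^ ℓ := by
  haveI : NeZero n := ⟨by omega⟩
  have himg : H0nkL n k hk ℓ =
      (fun p : Finset (ZMod n) × Finset (ZMod n) × (ZMod n → Fin k → Bool) =>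
        constructF p.1 p.2.1 p.2.2) '' ↑(Dset n k ℓ) := by
    ext f
    constructor
    · intro hf
      obtain ⟨p, hp, hpe⟩ := construct_surj hn hne hk hℓ f hf
      exact ⟨p, Finset.mem_coe.mpr hp, hpe⟩
    · rintro ⟨⟨S, E, φ⟩, hp, rfl⟩
      exact constructF_mem_H0nkL hn hne hk hℓ (Finset.mem_coe.mp hp)
  rw [himg, Set.ncard_image_of_injOn (construct_injOn hn hne hk hℓ),
    Set.ncard_coe_finset, card_Dset (k := k) hn hk]
end
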